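/- arXiv:1311.6996 — 12 statements merged into one kernel-verified Lean document; each statement's English description precedes it below -/
import Mathlib

section
/- Let k ≥ 5 and let C be a clique of size k in G. Set A = V \ C and B = W ∪ E(C), where E(C) denotes the set of edges of G with both endpoints in C. Then (A, B) is a biclique of G′, |A| = k, |B| = k(k−1), and the edge saving satisfies |A|·|B| − |A| = k³ − k² − k. -/
open Finset

/-- Number of elements of `W`, namely `k(k−1)/2`. -/
def Wcard (k : ℕ) : ℕ := k * (k - 1) / 2

/-- Adjacency in the bipartite graph `G′` whose parts are `V₁ = V` and
`V₂ = E ∪ W` (modelled inside `Sym2 V ⊕ Fin w`): a vertex `a ∈ V₁` is adjacent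
to an edge `e ∈ E` iff `a` is not an endpoint of `e`, and `a` is adjacent to
every element of `W`. -/
def GpAdj {V : Type*} (G : SimpleGraph V) (w : ℕ) (a : V) (b : Sym2 V ⊕ Fin w) : Prop :=
  match b with
  | Sum.inl e => a ∉ e
  | Sum.inr _ => True

/-- `(A, B)` is a biclique of `G′`: `A ⊆ V₁`, `B ⊆ V₂ = E ∪ W` (so the `Sym2`
elements of `B` must be genuine edges of `G`), and every element of `A` is
adjacent in `G′` to every element of `B`. -/
def IsBiclique {V : Type*} (G : SimpleGraph V) (w : ℕ)
    (A : Finset V) (B : Finset (Sym2 V ⊕ Fin w)) : Prop :=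
  (∀ e : Sym2 V, Sum.inl e ∈ B → e ∈ G.edgeSet) ∧
    ∀ a ∈ A, ∀ b ∈ B, GpAdj G w a b

/-- The set `A = V \ C`. -/
def Apart {V : Type*} [Fintype V] [DecidableEq V] (C : Finset V) : Finset V :=
  Finset.univ \ C

/-- The set `B = W ∪ E(C)`, where `E(C)` is the set of edges of `G` with both
endpoints in `C`. -/
def Bpart {V : Type*} [Fintype V] [DecidableEq V] (G : SimpleGraph V)
    [DecidableRel G.Adj] (k : ℕ) (C : Finset V) : Finset (Sym2 V ⊕ Fin (Wcard k)) :=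
  (G.edgeFinset ∩ C.sym2).image Sum.inl ∪ Finset.univ.image Sum.inr

lemma edge_inter_eq {V : Type*} [Fintype V] [DecidableEq V] (G : SimpleGraph V)
    [DecidableRel G.Adj] {k : ℕ} {C : Finset V} (hC : G.IsNClique k C) :
    G.edgeFinset ∩ C.sym2 = C.offDiag.image Sym2.mk.uncurry := by
  ext e
  induction e using Sym2.inductionOn with
  | hf x y =>
    simp only [mem_inter, SimpleGraph.mem_edgeFinset, Sym2.mem_iff, mem_image,
      mem_offDiag, Finset.mk_mem_sym2_iff, SimpleGraph.mem_edgeSet, Prod.exists]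
    constructor
    · rintro ⟨hadj, hx, hy⟩
      exact ⟨x, y, ⟨hx, hy, hadj.ne⟩, rfl⟩
    · rintro ⟨a, b, ⟨ha, hb, hab⟩, h⟩
      rw [Function.uncurry_apply_pair, Sym2.eq_iff] at h
      rcases h with ⟨rfl, rfl⟩ | ⟨rfl, rfl⟩
      · exact ⟨hC.1 ha hb hab, by simp [ha, hb]⟩
      · exact ⟨hC.1 hb ha (Ne.symm hab), by simp [ha, hb]⟩

theorem statement0 {V : Type*} [Fintype V] [DecidableEq V] (k : ℕ) (hk : 5 ≤ k)
    (hV : Fintype.card V = 2 * k) (G : SimpleGraph V) [DecidableRel G.Adj]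
    (C : Finset V) (hC : G.IsNClique k C) :
    IsBiclique G (Wcard k) (Apart C) (Bpart G k C) ∧
      (Apart C).card = k ∧
      (Bpart G k C).card = k * (k - 1) ∧
      (Apart C).card * (Bpart G k C).card - (Apart C).card = k ^ 3 - k ^ 2 - k := by
  have hA : (Apart C).card = k := by
    rw [Apart, card_sdiff_of_subset (subset_univ C), card_univ, hV, hC.2]
    omega
  have hB : (Bpart G k C).card = k * (k - 1) := by
    rw [Bpart, card_union_of_disjoint, card_image_of_injective _ Sum.inl_injective,
      card_image_of_injective _ Sum.inr_injective, edge_inter_eq G hC,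
      Sym2.card_image_offDiag, hC.2, card_univ, Fintype.card_fin, Wcard,
      Nat.choose_two_right]
    · have h2 : 2 ∣ k * (k - 1) := by
        rcases Nat.even_mul_pred_self k with ⟨c, hc⟩
        exact ⟨c, by omega⟩
      omega
    · simp [Finset.disjoint_left]
  refine ⟨⟨?_, ?_⟩, hA, hB, ?_⟩
  · intro e he
    simp only [Bpart, mem_union, mem_image] at he
    rcases he with ⟨x, hx, hx'⟩ | ⟨x, _, hx'⟩
    · cases hx'
      exact (SimpleGraph.mem_edgeFinset).1 (mem_inter.1 hx).1
    · cases hx'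
  · intro a ha b hb
    simp only [Apart, mem_sdiff] at ha
    simp only [Bpart, mem_union, mem_image] at hb
    rcases hb with ⟨x, hx, rfl⟩ | ⟨x, _, rfl⟩
    · simp only [GpAdj]
      intro hmem
      have := (mem_inter.1 hx).2
      rw [Finset.mem_sym2_iff] at this
      exact ha.2 (this a hmem)
    · trivial
  · rw [hA, hB]
    have h1 : k * (k - 1) = k ^ 2 - k := by
      rw [Nat.mul_sub, mul_one, sq]
    have h2 : k * (k ^ 2 - k) = k ^ 3 - k ^ 2 := by
      rw [Nat.mul_sub, ← pow_succ', sq]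
    rw [h1, h2]
end

section
/- Suppose G contains no clique of size k. Then for every biclique (A, B) of G′ with A nonempty, the edge saving satisfies |A|·|B| − |A| < k³ − k² − k. -/
set_option maxHeartbeats 1000000


open Finset

lemma two_mul_choose_two (n : ℕ) : 2 * n.choose 2 = n * (n - 1) := by
  rw [Nat.choose_two_right]
  rcases n with _ | m
  · rfl
  · have h : 2 ∣ (m + 1) * m := by
      rw [mul_comm]; exact (Nat.even_mul_succ_self m).two_dvd
    simp only [Nat.succ_sub_one]
    exact Nat.mul_div_cancel' h

lemma card_filter_not_isDiag_sym2 {α : Type*} [DecidableEq α] (s : Finset α) :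
    (s.sym2.filter (fun e => ¬ e.IsDiag)).card = s.card.choose 2 := by
  classical
  have hdiag : s.sym2.filter (fun e => e.IsDiag) = s.image Sym2.diag := by
    ext e
    induction e using Sym2.ind with
    | _ x y =>
      simp only [mem_filter, mk_mem_sym2_iff, Sym2.mk_isDiag_iff, mem_image]
      constructor
      · rintro ⟨⟨hx, _⟩, rfl⟩; exact ⟨x, hx, rfl⟩
      · rintro ⟨a, ha, h⟩
        have h' : s(a, a) = s(x, y) := h
        rw [Sym2.eq_iff] at h'
        rcases h' with ⟨rfl, rfl⟩ | ⟨rfl, rfl⟩ <;> exact ⟨⟨ha, ha⟩, rfl⟩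
  have hsum := Finset.card_filter_add_card_filter_not
    (s := s.sym2) (p := fun e => Sym2.IsDiag e)
  rw [hdiag, Finset.card_image_of_injective _ Sym2.diag_injective, Finset.card_sym2] at hsum
  have hch : (s.card + 1).choose 2 = s.card.choose 1 + s.card.choose 2 :=
    Nat.choose_succ_succ s.card 1
  rw [Nat.choose_one_right] at hch
  omega

lemma clique_of_few_nonedges {V : Type*} [DecidableEq V] (G : SimpleGraph V) (k : ℕ)
    (S : Finset V) (P : Finset (Sym2 V))
    (hP : ∀ x ∈ S, ∀ y ∈ S, x ≠ y → ¬ G.Adj x y → s(x, y) ∈ P)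
    (hcard : P.card + k ≤ S.card) : ∃ C : Finset V, G.IsNClique k C := by
  classical
  set T := S \ P.image (fun e => e.out.1) with hT
  have hTcard : k ≤ T.card := by
    rw [hT]
    have h1 := Finset.card_le_card_sdiff_add_card (s := S) (t := P.image (fun e => e.out.1))
    have h2 : (P.image (fun e => e.out.1)).card ≤ P.card := Finset.card_image_le
    omega
  obtain ⟨C, hCT, hCcard⟩ := Finset.exists_subset_card_eq hTcard
  refine ⟨C, ?_, hCcard⟩
  intro x hx y hy hxy
  by_contra hadj
  have hxT : x ∈ T := hCT hx
  have hyT : y ∈ T := hCT hy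
  have hxS : x ∈ S := (Finset.mem_sdiff.1 hxT).1
  have hyS : y ∈ S := (Finset.mem_sdiff.1 hyT).1
  have hmem : s(x, y) ∈ P := hP x hxS y hyS hxy hadj
  have hout : (s(x, y)).out.1 ∈ s(x, y) := Sym2.out_fst_mem _
  rw [Sym2.mem_iff] at hout
  rcases hout with h | h
  · exact (Finset.mem_sdiff.1 hxT).2 (Finset.mem_image.2 ⟨_, hmem, h⟩)
  · exact (Finset.mem_sdiff.1 hyT).2 (Finset.mem_image.2 ⟨_, hmem, h⟩)


lemma statement2_arith1 (A K Bc : ℤ) (hK : 5 ≤ K) (hA1 : 1 ≤ A) (hAK : A ≤ K)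
    (h : 2*Bc + 2*((2*K-A) - K + 1) ≤ (2*K-A)*((2*K-A)-1) + K*(K-1)) :
    A * Bc < K^3 - K^2 - K + A := by
  nlinarith [mul_nonneg (sub_nonneg.2 hAK) (sub_nonneg.2 hA1),
    mul_pos (lt_of_lt_of_le (by linarith) hAK) (lt_of_lt_of_le (by norm_num) hK),
    sq_nonneg (K-A), sq_nonneg (A-1),
    mul_nonneg (mul_nonneg (sub_nonneg.2 hAK) (sub_nonneg.2 hA1)) (by linarith : (0:ℤ) ≤ K)]

lemma statement2_arith2 (A K Bc : ℤ) (hK : 5 ≤ K) (hA1 : K+1 ≤ A) (hAK : A ≤ 2*K)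
    (h : 2*Bc ≤ (2*K-A)*((2*K-A)-1) + K*(K-1)) :
    A * Bc < K^3 - K^2 - K + A := by
  nlinarith [mul_nonneg (sub_nonneg.2 hAK) (by linarith : (0:ℤ) ≤ A - K - 1),
    sq_nonneg (2*K-A),
    mul_nonneg (mul_nonneg (sub_nonneg.2 hAK) (by linarith : (0:ℤ) ≤ A-K-1))
      (by linarith : (0:ℤ) ≤ K)]

/-- Suppose `G` (with `|V| = 2k`, `k ≥ 5`) contains no clique of
size `k`.  Then for every biclique `(A, B)` of `G′` with `A` nonempty, the edge
saving satisfies `|A|·|B| − |A| < k³ − k² − k`. -/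
theorem statement2 {V : Type*} [Fintype V] [DecidableEq V] (k : ℕ) (hk : 5 ≤ k)
    (hV : Fintype.card V = 2 * k) (G : SimpleGraph V)
    (hnoclique : ¬ ∃ C : Finset V, G.IsNClique k C) :
    ∀ (A : Finset V) (B : Finset (Sym2 V ⊕ Fin (Wcard k))), A.Nonempty →
      IsBiclique G (Wcard k) A B →
      A.card * B.card - A.card < k ^ 3 - k ^ 2 - k := by
  classical
  intro A B hA hBic
  obtain ⟨hBedge, hadj⟩ := hBic
  set S : Finset V := Aᶜ with hS
  have hScard : S.card = 2 * k - A.card := by rw [hS, Finset.card_compl, hV]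
  have haV : A.card ≤ 2 * k := by rw [← hV]; exact Finset.card_le_univ A
  have ha1 : 1 ≤ A.card := hA.card_pos
  set n := S.card with hn
  set ES : Finset (Sym2 V) :=
    S.sym2.filter (fun e => ¬ e.IsDiag ∧ e ∈ G.edgeSet) with hES
  have hBsub : B ⊆ ES.image Sum.inl ∪
      (Finset.univ : Finset (Fin (Wcard k))).image Sum.inr := by
    intro b hb
    match b with
    | Sum.inl e =>
      refine Finset.mem_union_left _ (Finset.mem_image.2 ⟨e, ?_, rfl⟩)
      have he : e ∈ G.edgeSet := hBedge e hb
      refine Finset.mem_filter.2 ⟨?_, G.not_isDiag_of_mem_edgeSet he, he⟩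
      rw [Finset.mem_sym2_iff]
      intro v hv
      rw [hS, Finset.mem_compl]
      intro hvA
      exact hadj v hvA (Sum.inl e) hb hv
    | Sum.inr w =>
      exact Finset.mem_union_right _ (Finset.mem_image.2 ⟨w, Finset.mem_univ w, rfl⟩)
  have hBcard : B.card ≤ ES.card + Wcard k := by
    calc B.card ≤ (ES.image Sum.inl ∪
        (Finset.univ : Finset (Fin (Wcard k))).image Sum.inr).card :=
          Finset.card_le_card hBsub
      _ ≤ (ES.image Sum.inl).card +
          ((Finset.univ : Finset (Fin (Wcard k))).image Sum.inr).card :=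
          Finset.card_union_le _ _
      _ ≤ ES.card + Wcard k := by
          refine add_le_add Finset.card_image_le (le_of_eq ?_)
          rw [Finset.card_image_of_injective _ Sum.inr_injective, Finset.card_univ,
            Fintype.card_fin]
  have hESsub : ES ⊆ S.sym2.filter (fun e => ¬ e.IsDiag) := by
    intro e he
    rw [hES, Finset.mem_filter] at he
    exact Finset.mem_filter.2 ⟨he.1, he.2.1⟩
  have hND : (S.sym2.filter (fun e => ¬ e.IsDiag)).card = n.choose 2 :=
    card_filter_not_isDiag_sym2 S
  have hES1 : ES.card ≤ n.choose 2 := by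
    rw [← hND]; exact Finset.card_le_card hESsub
  have h2c : 2 * n.choose 2 = n * (n - 1) := two_mul_choose_two n
  have h2W : 2 * Wcard k = k * (k - 1) := by
    have : Wcard k = k.choose 2 := (Nat.choose_two_right k).symm
    rw [this]; exact two_mul_choose_two k
  -- final goal reduction
  have hsubcast : ((k ^ 3 - k ^ 2 - k : ℕ) : ℤ) = (k : ℤ) ^ 3 - (k : ℤ) ^ 2 - (k : ℤ) := by
    have hle : k ^ 2 + k ≤ k ^ 3 := by nlinarith
    rw [Nat.sub_sub, Nat.cast_sub hle]
    push_cast; ring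
  have hTpos : 0 < k ^ 3 - k ^ 2 - k := by
    have hlt : k ^ 2 + k < k ^ 3 := by nlinarith
    rw [Nat.sub_sub]
    exact Nat.sub_pos_of_lt hlt
  have key : (A.card : ℤ) * B.card < (k : ℤ) ^ 3 - (k : ℤ) ^ 2 - (k : ℤ) + A.card := by
    have hNcast : (n : ℤ) = 2 * (k : ℤ) - A.card := by
      rw [hScard]; push_cast [Nat.cast_sub haV]; ring
    rcases le_or_gt A.card k with hak | hak
    · -- case A.card ≤ k : n ≥ k, use clique-based strengthening
      have hkn : k ≤ n := by omega
      have hES2 : ES.card + (n - k) + 1 ≤ n.choose 2 := by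
        by_contra hcon
        push_neg at hcon
        set P := (S.sym2.filter (fun e => ¬ e.IsDiag)) \ ES with hP
        have hPcard : P.card = n.choose 2 - ES.card := by
          rw [hP, Finset.card_sdiff_of_subset hESsub, hND]
        have hPk : P.card + k ≤ S.card := by omega
        refine absurd ?_ hnoclique
        refine clique_of_few_nonedges G k S P ?_ hPk
        intro x hxS y hyS hxy hnadj
        refine Finset.mem_sdiff.2 ⟨Finset.mem_filter.2
          ⟨Finset.mk_mem_sym2_iff.2 ⟨hxS, hyS⟩, by simp [Sym2.mk_isDiag_iff, hxy]⟩, ?_⟩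
        intro hmem
        rw [hES, Finset.mem_filter] at hmem
        exact hnadj (G.mem_edgeSet.1 hmem.2.2)
      have hB2 : B.card + (n - k) + 1 ≤ n.choose 2 + Wcard k := by
        have := hES1; linarith
      have h2 : 2 * B.card + 2 * (n - k) + 2 ≤ n * (n - 1) + k * (k - 1) := by
        linarith
      have h1n : 1 ≤ n := by omega
      have h1k : 1 ≤ k := by omega
      have hz : 2 * (B.card : ℤ) + 2 * ((n : ℤ) - k) + 2 ≤
          (n : ℤ) * ((n : ℤ) - 1) + (k : ℤ) * ((k : ℤ) - 1) := by
        zify [hkn, h1n, h1k] at h2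
        linarith
      have hAk : (A.card : ℤ) ≤ (k : ℤ) := by exact_mod_cast hak
      have hA1 : (1 : ℤ) ≤ (A.card : ℤ) := by exact_mod_cast ha1
      have hK5 : (5 : ℤ) ≤ (k : ℤ) := by exact_mod_cast hk
      have hBnn : (0 : ℤ) ≤ (B.card : ℤ) := by positivity
      rw [hNcast] at hz
      exact statement2_arith1 _ _ _ hK5 hA1 hAk (by linarith)
    · -- case k < A.card : only the crude bound
      have h2 : 2 * B.card ≤ n * (n - 1) + k * (k - 1) := by linarith
      have h1k : 1 ≤ k := by omega
      have hz : 2 * (B.card : ℤ) ≤ (n : ℤ) * ((n : ℤ) - 1) + (k : ℤ) * ((k : ℤ) - 1) := by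
        rcases Nat.eq_zero_or_pos n with h0 | h1n
        · rw [h0] at h2 ⊢
          zify [h1k] at h2
          simpa using h2
        · zify [h1n, h1k] at h2
          linarith
      have hAk : (k : ℤ) + 1 ≤ (A.card : ℤ) := by exact_mod_cast hak
      have hA2k : (A.card : ℤ) ≤ 2 * (k : ℤ) := by exact_mod_cast haV
      have hK5 : (5 : ℤ) ≤ (k : ℤ) := by exact_mod_cast hk
      have hBnn : (0 : ℤ) ≤ (B.card : ℤ) := by positivity
      rw [hNcast] at hz
      exact statement2_arith2 _ _ _ hK5 hAk hA2k (by linarith)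
  have keyn : A.card * B.card < k ^ 3 - k ^ 2 - k + A.card := by
    have hz : ((A.card * B.card : ℕ) : ℤ) < ((k ^ 3 - k ^ 2 - k + A.card : ℕ) : ℤ) := by
      push_cast [hsubcast]
      linarith
    exact_mod_cast hz
  rcases Nat.lt_or_ge (A.card * B.card) A.card with h | h
  · rw [Nat.sub_eq_zero_of_le h.le]
    exact hTpos
  · exact (tsub_lt_iff_right h).2 keyn
end

section
/- G contains a clique of size k if and only if G′ contains a biclique (A, B) with A nonempty, |A| ≤ |B|, and |A|·|B| − |A| ≥ k³ − k² − k. -/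
open Finset

lemma two_dvd_mul_pred (k : ℕ) : 2 ∣ k * (k - 1) := by
  rcases k with _ | n
  · simp
  · simpa [Nat.mul_comm] using (Nat.even_mul_succ_self n).two_dvd

lemma two_mul_Wcard (k : ℕ) : 2 * Wcard k = k * (k - 1) :=
  Nat.mul_div_cancel' (two_dvd_mul_pred k) 

/-- key counting: # nondiagonal elements of S.sym2 -/
lemma nondiag_card {V : Type*} [DecidableEq V] (S : Finset V) :
    2 * (S.sym2.filter fun e => ¬ e.IsDiag).card + 2 * S.card = S.card * (S.card + 1) := by
  have h1 : (S.sym2.filter fun e => e.IsDiag).card = S.card := by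
    have : (S.sym2.filter fun e => e.IsDiag) = S.image (fun a => s(a, a)) := by
      ext e
      induction e with
      | _ x y =>
        simp only [mem_filter, Finset.mk_mem_sym2_iff, Sym2.mk_isDiag_iff, mem_image]
        constructor
        · rintro ⟨⟨hx, -⟩, rfl⟩; exact ⟨x, hx, rfl⟩
        · rintro ⟨a, ha, he⟩
          obtain ⟨rfl, rfl⟩ | ⟨rfl, rfl⟩ := Sym2.eq_iff.mp he.symm <;> exact ⟨⟨ha, ha⟩, rfl⟩
    rw [this, Finset.card_image_of_injective _ (fun a b hab => by
      simpa using Sym2.eq_iff.mp hab)]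
  have h2 : (S.sym2.filter fun e => e.IsDiag).card
      + (S.sym2.filter fun e => ¬ e.IsDiag).card = S.sym2.card :=
    Finset.card_filter_add_card_filter_not (fun e : Sym2 V => e.IsDiag)
  have h3 : S.sym2.card = (S.card + 1).choose 2 := Finset.card_sym2 S
  have h4 : 2 * (S.card + 1).choose 2 = S.card * (S.card + 1) := by
    rw [Nat.choose_two_right, Nat.add_sub_cancel, Nat.mul_comm (S.card + 1) S.card]
    exact Nat.mul_div_cancel' (Nat.even_mul_succ_self S.card).two_dvd
  omega

lemma cliqueAux {V : Type*} [DecidableEq V] (G : SimpleGraph V) (k : ℕ) :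
    ∀ (n : ℕ) (S : Finset V) (M : Finset (Sym2 V)),
      S.card ≤ n →
      (∀ x ∈ S, ∀ y ∈ S, x ≠ y → ¬ G.Adj x y → s(x, y) ∈ M) →
      M.card + k ≤ S.card →
      ∃ C : Finset V, G.IsNClique k C := by
  intro n
  induction n with
  | zero =>
    intro S M hS _ hcard
    have hk0 : k = 0 := by omega
    exact ⟨∅, by simp [hk0, SimpleGraph.isNClique_iff, SimpleGraph.IsClique]⟩
  | succ n ih =>
    intro S M hS hM hcard
    by_cases hc : ∀ x ∈ S, ∀ y ∈ S, x ≠ y → G.Adj x y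
    · obtain ⟨C, hCS, hCcard⟩ := Finset.exists_subset_card_eq
        (show k ≤ S.card by omega)
      refine ⟨C, ⟨fun x hx y hy hxy => ?_, hCcard⟩⟩
      exact hc x (hCS hx) y (hCS hy) hxy
    · push_neg at hc
      obtain ⟨x, hx, y, hy, hxy, hnadj⟩ := hc
      have heM : s(x, y) ∈ M := hM x hx y hy hxy hnadj
      refine ih (S.erase x) (M.erase s(x, y)) ?_ ?_ ?_
      · have := Finset.card_erase_of_mem hx
        have := Finset.card_pos.mpr ⟨x, hx⟩
        omega
      · intro u hu v hv huv hnuv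
        have hu' := Finset.mem_of_mem_erase hu
        have hv' := Finset.mem_of_mem_erase hv
        refine Finset.mem_erase.mpr ⟨?_, hM u hu' v hv' huv hnuv⟩
        intro hcontra
        obtain ⟨rfl, rfl⟩ | ⟨rfl, rfl⟩ := Sym2.eq_iff.mp hcontra
        · exact (Finset.mem_erase.mp hu).1 rfl
        · exact (Finset.mem_erase.mp hv).1 rfl
      · have h1 := Finset.card_erase_of_mem hx
        have h2 := Finset.card_erase_of_mem heM
        have := Finset.card_pos.mpr ⟨s(x, y), heM⟩
        omega

lemma ineq1Z (k a nd w K : ℤ) (h5 : 5 ≤ k) (ha1 : 1 ≤ a) (hak : a ≤ k)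
    (hnd : 2 * nd + 2 * (2 * k - a) = (2 * k - a) * ((2 * k - a) + 1))
    (hw : 2 * w + k = k * k) (hK : K + k ^ 2 + k = k ^ 3) :
    a * (nd + w + k) ≤ K + a + a * (2 * k - a) := by
  have ht : (0:ℤ) ≤ k - a := by linarith
  have e1 : 2 * (a * nd) + 2 * (a * (2 * k - a)) = a * ((2 * k - a) * ((2 * k - a) + 1)) := by
    linear_combination a * hnd
  have e2 : 2 * (a * w) + a * k = a * (k * k) := by linear_combination a * hw
  nlinarith [mul_nonneg (mul_nonneg ht ht) (by linarith : (0:ℤ) ≤ k - 3),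
    mul_nonneg (mul_nonneg ht ht) ht,
    mul_nonneg ht (by linarith : (0:ℤ) ≤ k - 2), e1, e2, hK]

lemma ineq2Z (k a nd w K : ℤ) (h5 : 5 ≤ k) (hak : k + 1 ≤ a) (ha2k : a ≤ 2 * k)
    (hnd : 2 * nd + 2 * (2 * k - a) = (2 * k - a) * ((2 * k - a) + 1))
    (hw : 2 * w + k = k * k) (hK : K + k ^ 2 + k = k ^ 3) :
    a * (nd + w) + 1 ≤ K + a := by
  have hs : (1:ℤ) ≤ a - k := by linarith
  have hs0 : (0:ℤ) ≤ a - k := by linarith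
  have hm0 : (0:ℤ) ≤ 2 * k - a := by linarith
  have e1 : 2 * (a * nd) + 2 * (a * (2 * k - a)) = a * ((2 * k - a) * ((2 * k - a) + 1)) := by
    linear_combination a * hnd
  have e2 : 2 * (a * w) + a * k = a * (k * k) := by linear_combination a * hw
  nlinarith [mul_nonneg (mul_nonneg hs0 hs0) hm0, mul_nonneg hs0 hm0, hs, e1, e2, hK]


/-- With `|V| = 2k`, `k ≥ 5`, and `|W| = k(k−1)/2`: `G` contains a
clique of size `k` if and only if `G′` contains a biclique `(A, B)` with `A`
nonempty, `|A| ≤ |B|`, and `|A|·|B| − |A| ≥ k³ − k² − k`. -/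
theorem statement3 {V : Type*} [Fintype V] [DecidableEq V] (k : ℕ) (hk : 5 ≤ k)
    (hV : Fintype.card V = 2 * k) (G : SimpleGraph V) :
    (∃ C : Finset V, G.IsNClique k C) ↔
      ∃ (A : Finset V) (B : Finset (Sym2 V ⊕ Fin (Wcard k))),
        A.Nonempty ∧ A.card ≤ B.card ∧ IsBiclique G (Wcard k) A B ∧
          k ^ 3 - k ^ 2 - k ≤ A.card * B.card - A.card := by
  have hw2 : 2 * Wcard k = k * (k - 1) := two_mul_Wcard k
  have hwsq : 2 * Wcard k + k = k * k := by
    have h1 : (k - 1) + 1 = k := by omega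
    have : k * (k - 1) + k = k * ((k - 1) + 1) := by ring
    rw [h1] at this
    omega
  have hkcube : (k ^ 3 - k ^ 2 - k) + k ^ 2 + k = k ^ 3 := by
    have : k ^ 2 + k ≤ k ^ 3 := by nlinarith
    omega
  constructor
  · -- forward direction
    rintro ⟨C, hC⟩
    have hCcard : C.card = k := hC.2
    set BE : Finset (Sym2 V) := C.sym2.filter fun e => ¬ e.IsDiag with hBEdef
    have hndC := nondiag_card C
    rw [hCcard, ← hBEdef] at hndC
    have hkk : k * (k + 1) = k * (k - 1) + 2 * k := by
      have h1 : k - 1 + 2 = k + 1 := by omega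
      calc k * (k + 1) = k * ((k - 1) + 2) := by rw [h1]
        _ = k * (k - 1) + 2 * k := by ring
    have hBEcard : BE.card = Wcard k := by omega
    have hAcard : (univ \ C).card = k := by
      rw [card_sdiff_of_subset (subset_univ C), card_univ, hV, hCcard]; omega
    have hBEedge : ∀ e ∈ BE, e ∈ G.edgeSet := by
      intro e
      induction e with
      | _ x y =>
        intro he
        obtain ⟨heC, hnd⟩ := mem_filter.mp he
        have hx : x ∈ C ∧ y ∈ C := Finset.mk_mem_sym2_iff.mp heC
        have hxy : x ≠ y := by simpa using hnd
        exact (SimpleGraph.mem_edgeSet G).mpr (hC.1 hx.1 hx.2 hxy)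
    have hdisj : Disjoint (BE.image Sum.inl)
        (univ.image (Sum.inr : Fin (Wcard k) → Sym2 V ⊕ Fin (Wcard k))) := by
      rw [Finset.disjoint_left]
      rintro x hx hy
      obtain ⟨e, -, rfl⟩ := mem_image.mp hx
      obtain ⟨i, -, hi⟩ := mem_image.mp hy
      exact Sum.inr_ne_inl hi
    have hBcard : ((BE.image Sum.inl) ∪
        (univ.image (Sum.inr : Fin (Wcard k) → Sym2 V ⊕ Fin (Wcard k)))).card
        = Wcard k + Wcard k := by
      rw [card_union_of_disjoint hdisj, card_image_of_injective _ Sum.inl_injective,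
        card_image_of_injective _ Sum.inr_injective, card_univ, Fintype.card_fin, hBEcard]
    refine ⟨univ \ C,
      (BE.image Sum.inl) ∪
        (univ.image (Sum.inr : Fin (Wcard k) → Sym2 V ⊕ Fin (Wcard k))), ?_, ?_, ?_, ?_⟩
    · rw [← card_pos, hAcard]; omega
    · rw [hAcard, hBcard]
      have : k * 2 ≤ k * (k - 1) := Nat.mul_le_mul_left k (by omega)
      omega
    · constructor
      · intro e he
        rcases mem_union.mp he with h | h
        · obtain ⟨e', he', heq⟩ := mem_image.mp h
          obtain rfl := Sum.inl_injective heq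
          exact hBEedge _ he'
        · obtain ⟨i, -, hi⟩ := mem_image.mp h
          exact absurd hi Sum.inr_ne_inl
      · intro x hxA bb hbb
        rcases mem_union.mp hbb with h | h
        · obtain ⟨e, he, rfl⟩ := mem_image.mp h
          have heC := (mem_filter.mp he).1
          show x ∉ e
          intro hxe
          exact (mem_sdiff.mp hxA).2 (Finset.mem_sym2_iff.mp heC x hxe)
        · obtain ⟨i, -, rfl⟩ := mem_image.mp h
          trivial
    · rw [hAcard, hBcard]
      have hcube : k ^ 3 = k * (k * (k - 1)) + k ^ 2 := by
        obtain ⟨j, rfl⟩ := Nat.exists_eq_succ_of_ne_zero (show k ≠ 0 by omega)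
        simp only [Nat.succ_sub_one, Nat.succ_eq_add_one]
        ring
      have hsum : Wcard k + Wcard k = k * (k - 1) := by omega
      rw [hsum]
      omega
  · -- backward direction
    rintro ⟨A, B, hAne, hAB, ⟨hBE, hadj⟩, hineq⟩
    have ha1 : 1 ≤ A.card := hAne.card_pos
    have ha2k : A.card ≤ 2 * k := by
      have := Finset.card_le_card (subset_univ A)
      rwa [card_univ, hV] at this
    set S : Finset V := univ \ A with hSdef
    have hm : S.card + A.card = 2 * k := by
      rw [hSdef, card_sdiff_of_subset (subset_univ A), card_univ, hV]; omega
    set D : Finset (Sym2 V) := S.sym2.filter (fun e => Sum.inl e ∈ B) with hDdef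
    have hBD : ∀ e : Sym2 V, Sum.inl e ∈ B → e ∈ D := by
      intro e he
      refine mem_filter.mpr ⟨Finset.mem_sym2_iff.mpr fun x hxe => ?_, he⟩
      rw [hSdef, mem_sdiff]
      refine ⟨mem_univ x, fun hxA => ?_⟩
      exact (hadj x hxA (Sum.inl e) he) hxe
    have hbD : B.card ≤ D.card + Wcard k := by
      have hsub : B ⊆ D.image Sum.inl ∪
          univ.image (Sum.inr : Fin (Wcard k) → Sym2 V ⊕ Fin (Wcard k)) := by
        intro x hx
        match x with
        | Sum.inl e => exact mem_union_left _ (mem_image_of_mem _ (hBD e hx))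
        | Sum.inr i => exact mem_union_right _ (mem_image_of_mem _ (mem_univ i))
      calc B.card ≤ (D.image Sum.inl ∪
          univ.image (Sum.inr : Fin (Wcard k) → Sym2 V ⊕ Fin (Wcard k))).card :=
            card_le_card hsub
        _ ≤ (D.image Sum.inl).card + (univ.image
            (Sum.inr : Fin (Wcard k) → Sym2 V ⊕ Fin (Wcard k))).card := card_union_le _ _
        _ ≤ D.card + Wcard k := by
            rw [card_image_of_injective _ Sum.inl_injective,
              card_image_of_injective _ Sum.inr_injective, card_univ, Fintype.card_fin]
    set ND : Finset (Sym2 V) := S.sym2.filter (fun e => ¬ e.IsDiag) with hNDdef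
    have hDND : D ⊆ ND := by
      intro e he
      obtain ⟨h1, h2⟩ := mem_filter.mp he
      exact mem_filter.mpr ⟨h1, G.not_isDiag_of_mem_edgeSet (hBE e h2)⟩
    have hnd : 2 * ND.card + 2 * S.card = S.card * (S.card + 1) := by
      have := nondiag_card S
      rwa [← hNDdef] at this
    set M : Finset (Sym2 V) :=
      S.sym2.filter (fun e => ¬ e.IsDiag ∧ Sum.inl e ∉ B) with hMdef
    have hMDle : M.card + D.card ≤ ND.card := by
      rw [← card_union_of_disjoint (by
        rw [Finset.disjoint_left]
        intro e heM heD
        exact (mem_filter.mp heM).2.2 (mem_filter.mp heD).2)]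
      refine card_le_card (union_subset ?_ hDND)
      intro e he
      obtain ⟨h1, h2, -⟩ := mem_filter.mp he
      exact mem_filter.mpr ⟨h1, h2⟩
    have hab : (k ^ 3 - k ^ 2 - k) + A.card ≤ A.card * B.card := by
      have h1 : A.card * 1 ≤ A.card * B.card :=
        Nat.mul_le_mul_left A.card (by omega)
      rw [Nat.mul_one] at h1
      omega
    -- integer casts
    have hmz : (S.card : ℤ) = 2 * (k:ℤ) - (A.card : ℤ) := by push_cast; omega
    have hndz : 2 * (ND.card : ℤ) + 2 * (2 * (k:ℤ) - (A.card:ℤ)) =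
        (2 * (k:ℤ) - (A.card:ℤ)) * ((2 * (k:ℤ) - (A.card:ℤ)) + 1) := by
      have h := hnd
      have h' : 2 * (ND.card : ℤ) + 2 * (S.card : ℤ) = (S.card:ℤ) * ((S.card:ℤ) + 1) := by
        exact_mod_cast h
      rwa [hmz] at h'
    have hwz : 2 * (Wcard k : ℤ) + (k:ℤ) = (k:ℤ) * (k:ℤ) := by exact_mod_cast hwsq
    have hKz : ((k ^ 3 - k ^ 2 - k : ℕ) : ℤ) + (k:ℤ) ^ 2 + (k:ℤ) = (k:ℤ) ^ 3 := by
      exact_mod_cast hkcube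
    by_cases hak : A.card ≤ k
    · -- main case: find the clique inside S
      have keyZ := ineq1Z (k:ℤ) (A.card:ℤ) (ND.card:ℤ) (Wcard k:ℤ)
        ((k ^ 3 - k ^ 2 - k : ℕ) : ℤ) (by exact_mod_cast hk) (by exact_mod_cast ha1)
        (by exact_mod_cast hak) hndz hwz hKz
      rw [← hmz] at keyZ
      have key : A.card * (ND.card + Wcard k + k) ≤
          (k ^ 3 - k ^ 2 - k) + A.card + A.card * S.card := by exact_mod_cast keyZ
      have hbm : ND.card + Wcard k + k ≤ B.card + S.card := by
        by_contra hcon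
        push_neg at hcon
        have h2 : A.card * (B.card + S.card + 1) ≤ A.card * (ND.card + Wcard k + k) :=
          Nat.mul_le_mul_left _ (by omega)
        have h3 : A.card * (B.card + S.card + 1)
            = A.card * B.card + A.card * S.card + A.card := by ring
        omega
      have hfinal : M.card + k ≤ S.card := by omega
      refine cliqueAux G k S.card S M le_rfl ?_ hfinal
      intro x hx y hy hxy hnadj
      refine mem_filter.mpr ⟨Finset.mk_mem_sym2_iff.mpr ⟨hx, hy⟩, by simpa using hxy, ?_⟩
      intro hB
      exact hnadj ((SimpleGraph.mem_edgeSet G).mp (hBE _ hB))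
    · -- impossible case: A too large
      exfalso
      push_neg at hak
      have key2Z := ineq2Z (k:ℤ) (A.card:ℤ) (ND.card:ℤ) (Wcard k:ℤ)
        ((k ^ 3 - k ^ 2 - k : ℕ) : ℤ) (by exact_mod_cast hk) (by exact_mod_cast hak)
        (by exact_mod_cast ha2k) hndz hwz hKz
      have key2 : A.card * (ND.card + Wcard k) + 1 ≤ (k ^ 3 - k ^ 2 - k) + A.card := by
        exact_mod_cast key2Z
      have hDle : D.card ≤ ND.card := card_le_card hDND
      have h2 : A.card * B.card ≤ A.card * (ND.card + Wcard k) :=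
        Nat.mul_le_mul_left _ (by omega)
      omega
end

section
/- For all real numbers k and c with k ≥ 5 and 0 ≤ c ≤ k, one has (k − c)·(k(k−1)/2 + (k−2)(k+c)²/(2(k−1))) − (k − c) ≤ k³ − k² − k − (1/(2(k−1)))·((c² + 1)k² − 2c²k + c(c² − 1)(k − 2)), and this quantity is strictly less than k³ − k² − k. -/
/-- For all real numbers `k` and `c` with `k ≥ 5` and `0 ≤ c ≤ k`, one has
`(k − c)·(k(k−1)/2 + (k−2)(k+c)²/(2(k−1))) − (k − c)
   ≤ k³ − k² − k − (1/(2(k−1)))·((c² + 1)k² − 2c²k + c(c² − 1)(k − 2))`,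
and this quantity is strictly less than `k³ − k² − k`. -/
theorem statement5 (k c : ℝ) (hk : 5 ≤ k) (hc0 : 0 ≤ c) (hck : c ≤ k) :
    (k - c) * (k * (k - 1) / 2 + (k - 2) * (k + c) ^ 2 / (2 * (k - 1))) - (k - c)
        ≤ k ^ 3 - k ^ 2 - k
          - (1 / (2 * (k - 1))) * ((c ^ 2 + 1) * k ^ 2 - 2 * c ^ 2 * k
              + c * (c ^ 2 - 1) * (k - 2)) ∧
      (k - c) * (k * (k - 1) / 2 + (k - 2) * (k + c) ^ 2 / (2 * (k - 1))) - (k - c)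
        < k ^ 3 - k ^ 2 - k := by
  have hk1 : (0:ℝ) < k - 1 := by linarith
  have h1 : (k - c) * (k * (k - 1) / 2 + (k - 2) * (k + c) ^ 2 / (2 * (k - 1))) - (k - c)
      = k ^ 3 - k ^ 2 - k
        - (1 / (2 * (k - 1))) * ((c ^ 2 + 1) * k ^ 2 - 2 * c ^ 2 * k
            + c * (c ^ 2 - 1) * (k - 2)) := by
    field_simp
    ring
  refine ⟨le_of_eq h1, ?_⟩
  rw [h1, sub_lt_self_iff, mul_pos_iff]
  left
  refine ⟨by positivity, ?_⟩
  nlinarith [mul_nonneg hc0 (sub_nonneg.2 hck), sq_nonneg c, mul_nonneg (mul_nonneg hc0 hc0) (by linarith : (0:ℝ) ≤ k - 2), mul_nonneg (mul_nonneg (mul_nonneg hc0 hc0) hc0) (by linarith : (0:ℝ) ≤ k - 2), mul_pos hk1 hk1, mul_nonneg (mul_nonneg hc0 hc0) (mul_nonneg (by linarith : (0:ℝ) ≤ k) (by linarith : (0:ℝ) ≤ k - 2))]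
end

section
/- Let V be a finite set with |V| = n ≥ 1 and let F be a family of subsets of V, each of size at least 2, such that for any two members m, n of F either m ⊆ n, or n ⊆ m, or m ∩ n = ∅. Then |F| ≤ n − 1. -/
private lemma laminar_aux {V : Type*} [DecidableEq V] (N : ℕ) :
    ∀ (U : Finset V), U.card ≤ N → ∀ (F : Finset (Finset V)),
    (∀ m ∈ F, m ⊆ U) → (∀ m ∈ F, 2 ≤ m.card) →
    (∀ m ∈ F, ∀ p ∈ F, m ⊆ p ∨ p ⊆ m ∨ m ∩ p = ∅) →
    F.card ≤ U.card - 1 := by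
  induction N with
  | zero =>
    intro U hU F hsub hsize _
    rcases F.eq_empty_or_nonempty with rfl | ⟨A, hA⟩
    · simp
    · exfalso
      have h2 := hsize A hA
      have := Finset.card_le_card (hsub A hA)
      omega
  | succ N ih =>
    intro U hU F hsub hsize hlam
    rcases F.eq_empty_or_nonempty with rfl | hne
    · simp
    obtain ⟨A, hA, hmin⟩ : ∃ A ∈ F, ∀ S ∈ F, ¬ S < A := (Finset.exists_minimal hne).imp fun A hA' => ⟨hA'.1, fun S hS hlt => lt_irrefl _ (lt_of_lt_of_le hlt (hA'.2 hS hlt.le))⟩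
    -- pick two distinct elements of A
    obtain ⟨x, hx, y, hy, hxy⟩ := Finset.one_lt_card.mp (show 1 < A.card by have := hsize A hA; omega)
    -- key: every other set either contains A or is disjoint from A
    have key : ∀ S ∈ F.erase A, A ⊆ S ∨ S ∩ A = ∅ := by
      intro S hS
      have hSF := Finset.mem_of_mem_erase hS
      have hSA := Finset.ne_of_mem_erase hS
      rcases hlam S hSF A hA with h | h | h
      · exfalso
        exact hmin S hSF (lt_of_le_of_ne h hSA)
      · exact Or.inl h
      · exact Or.inr h
    have keyx : ∀ S ∈ F.erase A, (x ∈ S ∧ y ∈ S) ∨ (x ∉ S ∧ y ∉ S) := by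
      intro S hS
      rcases key S hS with h | h
      · exact Or.inl ⟨h hx, h hy⟩
      · refine Or.inr ⟨fun hxS => ?_, fun hyS => ?_⟩
        · exact absurd h (by simp [Finset.eq_empty_iff_forall_notMem]; exact ⟨x, hxS, hx⟩)
        · exact absurd h (by simp [Finset.eq_empty_iff_forall_notMem]; exact ⟨y, hyS, hy⟩)
    set U' := U.erase x with hU'
    set F' := (F.erase A).image (fun S => S.erase x) with hF'
    have hAU := hsub A hA
    have hUcard : 2 ≤ U.card := le_trans (hsize A hA) (Finset.card_le_card hAU)
    have hU'card : U'.card = U.card - 1 := Finset.card_erase_of_mem (hAU hx)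
    -- injectivity
    have hinj : Set.InjOn (fun S => S.erase x) (F.erase A : Set (Finset V)) := by
      intro S₁ h₁ S₂ h₂ heq
      simp only at heq
      rcases keyx S₁ h₁ with ⟨hx1, hy1⟩ | ⟨hx1, hy1⟩ <;>
        rcases keyx S₂ h₂ with ⟨hx2, hy2⟩ | ⟨hx2, hy2⟩
      · ext a
        constructor <;> intro ha
        · rcases eq_or_ne a x with rfl | hax
          · exact hx2
          · have : a ∈ S₁.erase x := Finset.mem_erase.mpr ⟨hax, ha⟩
            rw [heq] at this; exact Finset.mem_of_mem_erase this
        · rcases eq_or_ne a x with rfl | hax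
          · exact hx1
          · have : a ∈ S₂.erase x := Finset.mem_erase.mpr ⟨hax, ha⟩
            rw [← heq] at this; exact Finset.mem_of_mem_erase this
      · exfalso
        have : y ∈ S₁.erase x := Finset.mem_erase.mpr ⟨fun h => hxy h.symm, hy1⟩
        rw [heq] at this; exact hy2 (Finset.mem_of_mem_erase this)
      · exfalso
        have : y ∈ S₂.erase x := Finset.mem_erase.mpr ⟨fun h => hxy h.symm, hy2⟩
        rw [← heq] at this; exact hy1 (Finset.mem_of_mem_erase this)
      · rw [Finset.erase_eq_of_notMem hx1, Finset.erase_eq_of_notMem hx2] at heq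
        exact heq
    have hF'card : F'.card = (F.erase A).card := Finset.card_image_of_injOn hinj
    -- apply IH to F' on U'
    have hstep : F'.card ≤ U'.card - 1 := by
      apply ih U' (by omega)
      · intro m hm
        obtain ⟨S, hS, rfl⟩ := Finset.mem_image.mp hm
        exact Finset.erase_subset_erase x (hsub S (Finset.mem_of_mem_erase hS))
      · intro m hm
        obtain ⟨S, hS, rfl⟩ := Finset.mem_image.mp hm
        rcases keyx S hS with ⟨hxS, _⟩ | ⟨hxS, _⟩
        · -- A ⊊ S, so S.card ≥ 3
          have hAS : A ⊂ S := lt_of_le_of_ne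
            ((key S hS).resolve_right (by
              simp [Finset.eq_empty_iff_forall_notMem]
              exact ⟨x, hxS, hx⟩)) (Ne.symm (Finset.ne_of_mem_erase hS))
          have h3 : 3 ≤ S.card := by
            have := Finset.card_lt_card hAS
            have := hsize A hA
            omega
          rw [Finset.card_erase_of_mem hxS]; omega
        · rw [Finset.erase_eq_of_notMem hxS]
          exact hsize S (Finset.mem_of_mem_erase hS)
      · intro m hm p hp
        obtain ⟨S₁, hS₁, rfl⟩ := Finset.mem_image.mp hm
        obtain ⟨S₂, hS₂, rfl⟩ := Finset.mem_image.mp hp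
        rcases hlam S₁ (Finset.mem_of_mem_erase hS₁) S₂ (Finset.mem_of_mem_erase hS₂)
          with h | h | h
        · exact Or.inl (Finset.erase_subset_erase x h)
        · exact Or.inr (Or.inl (Finset.erase_subset_erase x h))
        · refine Or.inr (Or.inr ?_)
          rw [Finset.eq_empty_iff_forall_notMem] at h ⊢
          intro a ha
          rw [Finset.mem_inter, Finset.mem_erase, Finset.mem_erase] at ha
          exact h a (Finset.mem_inter.mpr ⟨ha.1.2, ha.2.2⟩)
    have hFsplit : F.card = (F.erase A).card + 1 := by
      rw [Finset.card_erase_of_mem hA]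
      have : 1 ≤ F.card := Finset.card_pos.mpr ⟨A, hA⟩
      omega
    omega

/-- Let `V` be a finite set with `|V| = n ≥ 1` and let `F` be a family of
subsets of `V`, each of size at least 2, such that for any two members `m, p` of `F`
either `m ⊆ p`, or `p ⊆ m`, or `m ∩ p = ∅` (a laminar family). Then `|F| ≤ n − 1`. -/
theorem statement7 {V : Type*} [Fintype V] [DecidableEq V] (n : ℕ) (hn : 1 ≤ n)
    (hcard : Fintype.card V = n) (F : Finset (Finset V))
    (hsize : ∀ m ∈ F, 2 ≤ m.card)
    (hlaminar : ∀ m ∈ F, ∀ p ∈ F, m ⊆ p ∨ p ⊆ m ∨ m ∩ p = ∅) :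
    F.card ≤ n - 1 := by
  have := laminar_aux (Finset.univ : Finset V).card Finset.univ le_rfl F
    (fun m _ => Finset.subset_univ m) hsize hlaminar
  rwa [Finset.card_univ, hcard] at this
end

section
/- For every configuration M over (V, E), the union of the sets m × n over all representative edges (m, n) ∈ R(M) equals E; that is, the representative edges losslessly encode the original edge set. -/
/-- A configuration over `(V, E)`: a family of nonempty subsets of `V` that
contains every singleton and is laminar (any two members are nested or
disjoint). -/
def IsConfig {V : Type*} [Fintype V] [DecidableEq V] (M : Finset (Finset V)) : Prop :=
  (∀ m ∈ M, m.Nonempty) ∧ (∀ v : V, {v} ∈ M) ∧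
    ∀ m ∈ M, ∀ n ∈ M, m ⊆ n ∨ n ⊆ m ∨ m ∩ n = ∅

/-- `p = (m, n)` is a possible edge of the configuration `M`:
`m, n ∈ M`, `m × n ⊆ E`, and `m = n` or `m ∩ n = ∅`. -/
def PossEdge {V : Type*} [DecidableEq V] (E : Set (V × V)) (M : Finset (Finset V))
    (p : Finset V × Finset V) : Prop :=
  p.1 ∈ M ∧ p.2 ∈ M ∧ (∀ u ∈ p.1, ∀ v ∈ p.2, (u, v) ∈ E) ∧ (p.1 = p.2 ∨ p.1 ∩ p.2 = ∅)

/-- The possible edge `p` is dominated by some other possible edge `q`,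
i.e. `q ≠ p`, `p.1 ⊆ q.1` and `p.2 ⊆ q.2`. -/
def Dominated {V : Type*} [DecidableEq V] (E : Set (V × V)) (M : Finset (Finset V))
    (p : Finset V × Finset V) : Prop :=
  ∃ q : Finset V × Finset V, PossEdge E M q ∧ q ≠ p ∧ p.1 ⊆ q.1 ∧ p.2 ⊆ q.2

/-- The set `R(M)` of representative edges of the configuration `M`: the
possible edges not dominated by any other possible edge. -/
def RepEdges {V : Type*} [DecidableEq V] (E : Set (V × V)) (M : Finset (Finset V)) :
    Set (Finset V × Finset V) :=
  {p | PossEdge E M p ∧ ¬ Dominated E M p}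

/-- A configuration `C` is optimal if it minimises the number of representative
edges among all configurations, and no proper subfamily of `C` that is itself a
configuration has the same number of representative edges. -/
def IsOptimal {V : Type*} [Fintype V] [DecidableEq V] (E : Set (V × V))
    (C : Finset (Finset V)) : Prop :=
  IsConfig C ∧ (∀ C' : Finset (Finset V), IsConfig C' → (RepEdges E C).ncard ≤ (RepEdges E C').ncard) ∧
    ∀ D ⊆ C, D ≠ C → IsConfig D → (RepEdges E D).ncard ≠ (RepEdges E C).ncard

/-- For every configuration `M` over `(V, E)`, the union of the
sets `m × n` over all representative edges `(m, n) ∈ R(M)` equals `E`; the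
representative edges losslessly encode the original edge set. -/
theorem statement8 {V : Type*} [Fintype V] [DecidableEq V] (E : Set (V × V))
    (M : Finset (Finset V)) (hM : IsConfig M) :
    (⋃ p ∈ RepEdges E M, ((p.1 : Set V) ×ˢ (p.2 : Set V))) = E := by
  ext ⟨u, v⟩
  simp only [Set.mem_iUnion, Set.mem_prod, Finset.mem_coe]
  constructor
  · rintro ⟨p, ⟨hposs, -⟩, hu, hv⟩
    exact hposs.2.2.1 u hu v hv
  · intro huv
    -- singleton possible edge
    have hsing : PossEdge E M ({u}, {v}) := by
      refine ⟨hM.2.1 u, hM.2.1 v, ?_, ?_⟩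
      · intro a ha b hb
        simp only [Finset.mem_singleton] at ha hb
        subst ha; subst hb; exact huv
      · by_cases h : u = v
        · left; simp [h]
        · right; ext x; simp; rintro rfl rfl; exact h rfl
    -- take a maximal dominating possible edge
    set S : Set (Finset V × Finset V) :=
      {q | PossEdge E M q ∧ {u} ⊆ q.1 ∧ {v} ⊆ q.2} with hS
    have hfin : S.Finite := by
      apply Set.Finite.subset (Set.finite_Icc (⊥ : Finset V × Finset V) (⊤, ⊤))
      intro q _; simp [Prod.le_def]
    have hne : S.Nonempty := ⟨({u}, {v}), hsing, le_refl _, le_refl _⟩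
    obtain ⟨a, haS, hmax⟩ := hfin.exists_maximalFor (fun q => q.1.card + q.2.card) S hne
    refine ⟨a, ⟨haS.1, ?_⟩, haS.2.1 (Finset.mem_singleton_self u),
      haS.2.2 (Finset.mem_singleton_self v)⟩
    rintro ⟨q, hq, hqa, h1, h2⟩
    have hqS : q ∈ S := ⟨hq, haS.2.1.trans h1, haS.2.2.trans h2⟩
    have hle : a.1.card + a.2.card ≤ q.1.card + q.2.card :=
      Nat.add_le_add (Finset.card_le_card h1) (Finset.card_le_card h2)
    have heq : q.1.card + q.2.card ≤ a.1.card + a.2.card := hmax hqS hle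
    have h1c : a.1.card = q.1.card := by
      have := Finset.card_le_card h1
      have := Finset.card_le_card h2
      omega
    have h2c : a.2.card = q.2.card := by
      have := Finset.card_le_card h1
      have := Finset.card_le_card h2
      omega
    have e1 : a.1 = q.1 := Finset.eq_of_subset_of_card_le h1 h1c.ge
    have e2 : a.2 = q.2 := Finset.eq_of_subset_of_card_le h2 h2c.ge
    exact hqa (Prod.ext e1.symm e2.symm)
end

section
/- Adding a module cannot increase the number of representative edges: if M is a configuration over (V, E) and m ⊆ V is a nonempty set such that M ∪ {m} is again a configuration, then |R(M ∪ {m})| ≤ |R(M)|. -/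
lemma aux_off1 {V : Type*} [Fintype V] [DecidableEq V] (E : Set (V × V))
    (M : Finset (Finset V)) (hM : IsConfig M) (m : Finset V) (hm : m.Nonempty)
    (hM' : IsConfig (insert m M)) (hmM : m ∉ M) (b : Finset V) (hb : b ∈ M)
    (hrep : (m, b) ∈ RepEdges E (insert m M)) :
    ∃ c, c ∈ M ∧ c ⊆ m ∧ (c, b) ∈ RepEdges E M := by
  classical
  obtain ⟨hne, hsing, hlam⟩ := hM
  obtain ⟨hne', hsing', hlam'⟩ := hM'
  obtain ⟨⟨-, -, hEmb, hdm⟩, hundom⟩ := hrep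
  simp only at hEmb hdm hundom
  have hmb : m ∩ b = ∅ := by
    rcases hdm with h | h
    · exact absurd (h ▸ hb) hmM
    · exact h
  have hbm_disj : ∀ x, x ∈ b → x ∈ m → False := by
    intro x hxb hxm
    have : x ∈ m ∩ b := Finset.mem_inter.mpr ⟨hxm, hxb⟩
    simp [hmb] at this
  by_contra hcon
  push_neg at hcon
  -- For each v ∈ m, find a maximal child c ∋ v and a strict extension B of b.
  have hstep : ∀ v ∈ m, ∃ c B, c ∈ M ∧ v ∈ c ∧ c ⊆ m ∧ B ∈ M ∧ b ⊆ B ∧ B ≠ b ∧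
      (∀ u ∈ c, ∀ w ∈ B, (u, w) ∈ E) ∧ (c = B ∨ c ∩ B = ∅) := by
    intro v hv
    -- maximal child containing v
    have hSne : ((M.filter (fun c => v ∈ c ∧ c ⊆ m))).Nonempty :=
      ⟨{v}, by simp [hsing v, Finset.singleton_subset_iff.mpr hv]⟩
    obtain ⟨c, hcmem, hcmax⟩ := Finset.exists_max_image _ Finset.card hSne
    simp only [Finset.mem_filter] at hcmem
    obtain ⟨hcM, hvc, hcm⟩ := hcmem
    -- (c, b) is a possible edge of M
    have hposs : PossEdge E M (c, b) := by
      refine ⟨hcM, hb, fun u hu w hw => hEmb u (hcm hu) w hw, Or.inr ?_⟩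
      apply Finset.eq_empty_of_forall_notMem
      intro x hx
      simp only [Finset.mem_inter] at hx
      exact hbm_disj x hx.2 (hcm hx.1)
    have hdom : Dominated E M (c, b) := by
      by_contra hnd
      exact hcon c hcM hcm ⟨hposs, hnd⟩
    obtain ⟨⟨A, B⟩, hqposs, hqne, hq1, hq2⟩ := hdom
    simp only at hq1 hq2
    obtain ⟨hAM, hBM, hABE, hABd⟩ := hqposs
    simp only at hAM hBM hABE hABd
    -- A vs m
    have hAm : A ⊆ m := by
      rcases hlam' A (Finset.mem_insert_of_mem hAM) m (Finset.mem_insert_self m M)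
        with h | h | h
      · exact h
      · -- m ⊆ A : then (A,B) dominates (m,b) in M', contradiction
        exfalso
        apply hundom
        refine ⟨(A, B), ⟨Finset.mem_insert_of_mem hAM, Finset.mem_insert_of_mem hBM,
          hABE, hABd⟩, ?_, h, hq2⟩
        intro hc
        have : A = m := congrArg Prod.fst hc
        exact hmM (this ▸ hAM)
      · exfalso
        have : v ∈ A ∩ m := Finset.mem_inter.mpr ⟨hq1 hvc, hv⟩
        simp [h] at this
    have hAc : A = c := by
      have := hcmax A (Finset.mem_filter.mpr ⟨hAM, hq1 hvc, hAm⟩)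
      exact (Finset.eq_of_subset_of_card_le hq1 this).symm
    have hBb : B ≠ b := by
      intro hBb
      exact hqne (by rw [hAc, hBb])
    exact ⟨c, B, hcM, hvc, hcm, hBM, hq2, hBb, by rw [← hAc]; exact hABE,
      by rw [← hAc]; exact hABd⟩
  choose cf Bf hcM hvc hcm hBM hbB hBneb hEprod hdisj using hstep
  -- minimal B
  have hTne : (m.attach.image (fun x => Bf x.1 x.2)).Nonempty :=
    (Finset.Nonempty.image (by simpa using hm) _)
  obtain ⟨Bs, hBsT, hBsmin⟩ := Finset.exists_min_image _ Finset.card hTne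
  obtain ⟨⟨v0, hv0⟩, -, hBseq⟩ := Finset.mem_image.mp hBsT
  have hBsM : Bs ∈ M := hBseq ▸ hBM v0 hv0
  have hbBs : b ⊆ Bs := hBseq ▸ hbB v0 hv0
  have hBssub : ∀ v (hv : v ∈ m), Bs ⊆ Bf v hv := by
    intro v hv
    rcases hlam Bs hBsM (Bf v hv) (hBM v hv) with h | h | h
    · exact h
    · have hcard : Bs.card ≤ (Bf v hv).card :=
        hBsmin _ (Finset.mem_image.mpr ⟨⟨v, hv⟩, Finset.mem_attach _ _, rfl⟩)
      rw [Finset.eq_of_subset_of_card_le h hcard]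
    · exfalso
      obtain ⟨x, hx⟩ := hne b hb
      have : x ∈ Bs ∩ Bf v hv := Finset.mem_inter.mpr ⟨hbBs hx, hbB v hv hx⟩
      simp [h] at this
  -- m × Bs ⊆ E
  have hmBsE : ∀ u ∈ m, ∀ w ∈ Bs, (u, w) ∈ E := by
    intro u hu w hw
    exact hEprod u hu u (hvc u hu) w (hBssub u hu hw)
  -- m ∩ Bs = ∅
  have hmBs : m ∩ Bs = ∅ := by
    rcases hlam' m (Finset.mem_insert_self m M) Bs (Finset.mem_insert_of_mem hBsM)
      with h | h | h
    · -- m ⊆ Bs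
      exfalso
      have hc0Bs : cf v0 hv0 ⊆ Bs := fun x hx => h (hcm v0 hv0 hx)
      rcases (hBseq ▸ hdisj v0 hv0 : cf v0 hv0 = Bs ∨ cf v0 hv0 ∩ Bs = ∅) with h2 | h2
      · have : m = cf v0 hv0 := Finset.Subset.antisymm (h2 ▸ h) (hcm v0 hv0)
        exact hmM (this ▸ hcM v0 hv0)
      · have : v0 ∈ cf v0 hv0 ∩ Bs :=
          Finset.mem_inter.mpr ⟨hvc v0 hv0, hc0Bs (hvc v0 hv0)⟩
        simp [h2] at this
    · -- Bs ⊆ m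
      exfalso
      obtain ⟨x, hx⟩ := hne b hb
      exact hbm_disj x hx (h (hbBs hx))
    · exact h
  -- (m, Bs) dominates (m, b) in insert m M : contradiction
  apply hundom
  refine ⟨(m, Bs), ⟨Finset.mem_insert_self m M, Finset.mem_insert_of_mem hBsM,
    hmBsE, Or.inr hmBs⟩, ?_, Finset.Subset.refl m, hbBs⟩
  intro hc
  exact (hBseq ▸ hBneb v0 hv0) (congrArg Prod.snd hc)

lemma aux_off2 {V : Type*} [Fintype V] [DecidableEq V] (E : Set (V × V))
    (M : Finset (Finset V)) (hM : IsConfig M) (m : Finset V) (hm : m.Nonempty)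
    (hM' : IsConfig (insert m M)) (hmM : m ∉ M) (a : Finset V) (ha : a ∈ M)
    (hrep : (a, m) ∈ RepEdges E (insert m M)) :
    ∃ c, c ∈ M ∧ c ⊆ m ∧ (a, c) ∈ RepEdges E M := by
  classical
  obtain ⟨hne, hsing, hlam⟩ := hM
  obtain ⟨hne', hsing', hlam'⟩ := hM'
  obtain ⟨⟨-, -, hEam, hdm⟩, hundom⟩ := hrep
  simp only at hEam hdm hundom
  have ham : a ∩ m = ∅ := by
    rcases hdm with h | h
    · exact absurd (h ▸ ha) hmM
    · exact h
  have ham_disj : ∀ x, x ∈ a → x ∈ m → False := by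
    intro x hxa hxm
    have : x ∈ a ∩ m := Finset.mem_inter.mpr ⟨hxa, hxm⟩
    simp [ham] at this
  by_contra hcon
  push_neg at hcon
  have hstep : ∀ v ∈ m, ∃ c A, c ∈ M ∧ v ∈ c ∧ c ⊆ m ∧ A ∈ M ∧ a ⊆ A ∧ A ≠ a ∧
      (∀ u ∈ A, ∀ w ∈ c, (u, w) ∈ E) ∧ (A = c ∨ A ∩ c = ∅) := by
    intro v hv
    have hSne : ((M.filter (fun c => v ∈ c ∧ c ⊆ m))).Nonempty :=
      ⟨{v}, by simp [hsing v, Finset.singleton_subset_iff.mpr hv]⟩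
    obtain ⟨c, hcmem, hcmax⟩ := Finset.exists_max_image _ Finset.card hSne
    simp only [Finset.mem_filter] at hcmem
    obtain ⟨hcM, hvc, hcm⟩ := hcmem
    have hposs : PossEdge E M (a, c) := by
      refine ⟨ha, hcM, fun u hu w hw => hEam u hu w (hcm hw), Or.inr ?_⟩
      apply Finset.eq_empty_of_forall_notMem
      intro x hx
      simp only [Finset.mem_inter] at hx
      exact ham_disj x hx.1 (hcm hx.2)
    have hdom : Dominated E M (a, c) := by
      by_contra hnd
      exact hcon c hcM hcm ⟨hposs, hnd⟩
    obtain ⟨⟨A, B⟩, hqposs, hqne, hq1, hq2⟩ := hdom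
    simp only at hq1 hq2
    obtain ⟨hAM, hBM, hABE, hABd⟩ := hqposs
    simp only at hAM hBM hABE hABd
    have hBm : B ⊆ m := by
      rcases hlam' B (Finset.mem_insert_of_mem hBM) m (Finset.mem_insert_self m M)
        with h | h | h
      · exact h
      · exfalso
        apply hundom
        refine ⟨(A, B), ⟨Finset.mem_insert_of_mem hAM, Finset.mem_insert_of_mem hBM,
          hABE, hABd⟩, ?_, hq1, h⟩
        intro hc
        have : B = m := congrArg Prod.snd hc
        exact hmM (this ▸ hBM)
      · exfalso
        have : v ∈ B ∩ m := Finset.mem_inter.mpr ⟨hq2 hvc, hv⟩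
        simp [h] at this
    have hBc : B = c := by
      have := hcmax B (Finset.mem_filter.mpr ⟨hBM, hq2 hvc, hBm⟩)
      exact (Finset.eq_of_subset_of_card_le hq2 this).symm
    have hAa : A ≠ a := by
      intro hAa
      exact hqne (by rw [hAa, hBc])
    exact ⟨c, A, hcM, hvc, hcm, hAM, hq1, hAa, by rw [← hBc]; exact hABE,
      by rw [← hBc]; exact hABd⟩
  choose cf Af hcM hvc hcm hAM haA hAnea hEprod hdisj using hstep
  have hTne : (m.attach.image (fun x => Af x.1 x.2)).Nonempty :=
    (Finset.Nonempty.image (by simpa using hm) _)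
  obtain ⟨As, hAsT, hAsmin⟩ := Finset.exists_min_image _ Finset.card hTne
  obtain ⟨⟨v0, hv0⟩, -, hAseq⟩ := Finset.mem_image.mp hAsT
  have hAsM : As ∈ M := hAseq ▸ hAM v0 hv0
  have haAs : a ⊆ As := hAseq ▸ haA v0 hv0
  have hAssub : ∀ v (hv : v ∈ m), As ⊆ Af v hv := by
    intro v hv
    rcases hlam As hAsM (Af v hv) (hAM v hv) with h | h | h
    · exact h
    · have hcard : As.card ≤ (Af v hv).card :=
        hAsmin _ (Finset.mem_image.mpr ⟨⟨v, hv⟩, Finset.mem_attach _ _, rfl⟩)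
      rw [Finset.eq_of_subset_of_card_le h hcard]
    · exfalso
      obtain ⟨x, hx⟩ := hne a ha
      have : x ∈ As ∩ Af v hv := Finset.mem_inter.mpr ⟨haAs hx, haA v hv hx⟩
      simp [h] at this
  have hAsmE : ∀ u ∈ As, ∀ w ∈ m, (u, w) ∈ E := by
    intro u hu w hw
    exact hEprod w hw u (hAssub w hw hu) w (hvc w hw)
  have hAsm : As ∩ m = ∅ := by
    rcases hlam' As (Finset.mem_insert_of_mem hAsM) m (Finset.mem_insert_self m M)
      with h | h | h
    · exfalso
      obtain ⟨x, hx⟩ := hne a ha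
      exact ham_disj x hx (h (haAs hx))
    · exfalso
      have hc0As : cf v0 hv0 ⊆ As := fun x hx => h (hcm v0 hv0 hx)
      rcases (hAseq ▸ hdisj v0 hv0 : As = cf v0 hv0 ∨ As ∩ cf v0 hv0 = ∅) with h2 | h2
      · have : m = cf v0 hv0 := Finset.Subset.antisymm (h2 ▸ h) (hcm v0 hv0)
        exact hmM (this ▸ hcM v0 hv0)
      · have : v0 ∈ As ∩ cf v0 hv0 :=
          Finset.mem_inter.mpr ⟨hc0As (hvc v0 hv0), hvc v0 hv0⟩
        simp [h2] at this
    · exact h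
  apply hundom
  refine ⟨(As, m), ⟨Finset.mem_insert_of_mem hAsM, Finset.mem_insert_self m M,
    hAsmE, Or.inr hAsm⟩, ?_, haAs, Finset.Subset.refl m⟩
  intro hc
  exact (hAseq ▸ hAnea v0 hv0) (congrArg Prod.fst hc)

lemma aux_diag {V : Type*} [Fintype V] [DecidableEq V] (E : Set (V × V))
    (M : Finset (Finset V)) (hM : IsConfig M) (m : Finset V) (hm : m.Nonempty)
    (hM' : IsConfig (insert m M)) (hmM : m ∉ M)
    (hrep : (m, m) ∈ RepEdges E (insert m M)) :
    ∃ q : Finset V × Finset V, q.1 ∈ M ∧ q.2 ∈ M ∧ q.1 ⊆ m ∧ q.2 ⊆ m ∧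
      q ∈ RepEdges E M := by
  classical
  obtain ⟨hne, hsing, hlam⟩ := hM
  obtain ⟨hne', hsing', hlam'⟩ := hM'
  obtain ⟨⟨-, -, hEmm, -⟩, hundom⟩ := hrep
  simp only at hEmm hundom
  set T := (M ×ˢ M).filter (fun q => (∀ u ∈ q.1, ∀ w ∈ q.2, (u, w) ∈ E) ∧
      (q.1 = q.2 ∨ q.1 ∩ q.2 = ∅) ∧ q.1 ⊆ m ∧ q.2 ⊆ m) with hT
  obtain ⟨v, hv⟩ := hm
  have hTne : T.Nonempty := by
    refine ⟨({v}, {v}), Finset.mem_filter.mpr ⟨Finset.mem_product.mpr ⟨hsing v, hsing v⟩,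
      ?_, Or.inl rfl, Finset.singleton_subset_iff.mpr hv, Finset.singleton_subset_iff.mpr hv⟩⟩
    intro u hu w hw
    simp only [Finset.mem_singleton] at hu hw
    exact hu ▸ hw ▸ hEmm v hv v hv
  obtain ⟨q, hqT, hqmax⟩ := Finset.exists_max_image T (fun q => q.1.card + q.2.card) hTne
  obtain ⟨hqprod, hqE, hqd, hq1m, hq2m⟩ := Finset.mem_filter.mp hqT
  obtain ⟨hq1M, hq2M⟩ := Finset.mem_product.mp hqprod
  refine ⟨q, hq1M, hq2M, hq1m, hq2m, ⟨hq1M, hq2M, hqE, hqd⟩, ?_⟩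
  rintro ⟨⟨A, B⟩, ⟨hAM, hBM, hABE, hABd⟩, hqne, h1, h2⟩
  simp only at hAM hBM hABE hABd h1 h2
  obtain ⟨x1, hx1⟩ := hne q.1 hq1M
  obtain ⟨x2, hx2⟩ := hne q.2 hq2M
  have hA : A ⊆ m ∨ m ⊆ A := by
    rcases hlam' A (Finset.mem_insert_of_mem hAM) m (Finset.mem_insert_self m M)
      with h | h | h
    · exact Or.inl h
    · exact Or.inr h
    · exfalso
      have : x1 ∈ A ∩ m := Finset.mem_inter.mpr ⟨h1 hx1, hq1m hx1⟩
      simp [h] at this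
  have hB : B ⊆ m ∨ m ⊆ B := by
    rcases hlam' B (Finset.mem_insert_of_mem hBM) m (Finset.mem_insert_self m M)
      with h | h | h
    · exact Or.inl h
    · exact Or.inr h
    · exfalso
      have : x2 ∈ B ∩ m := Finset.mem_inter.mpr ⟨h2 hx2, hq2m hx2⟩
      simp [h] at this
  have hAneB : ∀ C D : Finset V, C ∈ M → D ∈ M → C ⊆ m → m ⊆ D →
      (C = D ∨ C ∩ D = ∅) → C.Nonempty → False := by
    intro C D hCM hDM hCm hmD hCD hCne
    rcases hCD with h | h
    · have : C = m := Finset.Subset.antisymm hCm (h ▸ hmD)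
      exact hmM (this ▸ hCM)
    · obtain ⟨z, hz⟩ := hCne
      have : z ∈ C ∩ D := Finset.mem_inter.mpr ⟨hz, hmD (hCm hz)⟩
      simp [h] at this
  rcases hA with hA | hA <;> rcases hB with hB | hB
  · -- both inside m : contradicts maximality
    have hmem : (A, B) ∈ T :=
      Finset.mem_filter.mpr ⟨Finset.mem_product.mpr ⟨hAM, hBM⟩, hABE, hABd, hA, hB⟩
    have hcard := hqmax (A, B) hmem
    simp only at hcard
    have h1c : q.1.card ≤ A.card := Finset.card_le_card h1
    have h2c : q.2.card ≤ B.card := Finset.card_le_card h2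
    have : q.1 = A ∧ q.2 = B := by
      constructor
      · by_contra hne1
        have := Finset.card_lt_card (Finset.ssubset_iff_subset_ne.mpr ⟨h1, hne1⟩)
        omega
      · by_contra hne2
        have := Finset.card_lt_card (Finset.ssubset_iff_subset_ne.mpr ⟨h2, hne2⟩)
        omega
    exact hqne (Prod.ext this.1.symm this.2.symm)
  · -- A ⊆ m ⊆ B
    exact hAneB A B hAM hBM hA hB hABd (hne A hAM)
  · -- B ⊆ m ⊆ A
    have : B = A ∨ B ∩ A = ∅ := by
      rcases hABd with h | h
      · exact Or.inl h.symm
      · exact Or.inr (by rwa [Finset.inter_comm])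
    exact hAneB B A hBM hAM hB hA this (hne B hBM)
  · -- m ⊆ A, m ⊆ B : (A,B) dominates (m,m) in insert m M
    apply hundom
    refine ⟨(A, B), ⟨Finset.mem_insert_of_mem hAM, Finset.mem_insert_of_mem hBM,
      hABE, hABd⟩, ?_, hA, hB⟩
    intro hc
    have : A = m := congrArg Prod.fst hc
    exact hmM (this ▸ hAM)

/-- Adding a module cannot increase the number of representative
edges: if `M` is a configuration over `(V, E)` and `m ⊆ V` is a nonempty set
such that `M ∪ {m}` is again a configuration, then `|R(M ∪ {m})| ≤ |R(M)|`. -/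
theorem statement9 {V : Type*} [Fintype V] [DecidableEq V] (E : Set (V × V))
    (M : Finset (Finset V)) (hM : IsConfig M) (m : Finset V) (hm : m.Nonempty)
    (hM' : IsConfig (insert m M)) :
    (RepEdges E (insert m M)).ncard ≤ (RepEdges E M).ncard := by
  classical
  by_cases hmM : m ∈ M
  · rw [Finset.insert_eq_self.mpr hmM]
  have hneM := hM.1
  have hne' := hM'.1
  -- plain edges (no coordinate equal to m) stay representative
  have hplain : ∀ p : Finset V × Finset V, p ∈ RepEdges E (insert m M) →
      p.1 ≠ m → p.2 ≠ m → p ∈ RepEdges E M := by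
    rintro p ⟨⟨h1, h2, hE, hd⟩, hund⟩ hp1 hp2
    refine ⟨⟨?_, ?_, hE, hd⟩, ?_⟩
    · rcases Finset.mem_insert.mp h1 with h | h
      · exact absurd h hp1
      · exact h
    · rcases Finset.mem_insert.mp h2 with h | h
      · exact absurd h hp2
      · exact h
    · rintro ⟨q, ⟨hq1, hq2, hqE, hqd⟩, hqne, ha, hb⟩
      exact hund ⟨q, ⟨Finset.mem_insert_of_mem hq1, Finset.mem_insert_of_mem hq2,
        hqE, hqd⟩, hqne, ha, hb⟩
  -- replacement data
  obtain ⟨dval, hdval⟩ : ∃ q : Finset V × Finset V,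
      (m, m) ∈ RepEdges E (insert m M) →
      (q.1 ∈ M ∧ q.2 ∈ M ∧ q.1 ⊆ m ∧ q.2 ⊆ m ∧ q ∈ RepEdges E M) := by
    by_cases hdiag : (m, m) ∈ RepEdges E (insert m M)
    · obtain ⟨q, hq⟩ := aux_diag E M hM m hm hM' hmM hdiag
      exact ⟨q, fun _ => hq⟩
    · exact ⟨(∅, ∅), fun h => absurd h hdiag⟩
  obtain ⟨gB, hgB⟩ : ∃ g : Finset V → Finset V, ∀ b,
      (m, b) ∈ RepEdges E (insert m M) → b ≠ m →
      (g b ∈ M ∧ g b ⊆ m ∧ (g b, b) ∈ RepEdges E M) := by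
    refine ⟨fun b => if h : ∃ c, c ∈ M ∧ c ⊆ m ∧ (c, b) ∈ RepEdges E M
      then h.choose else ∅, fun b hb hbm => ?_⟩
    have hbM : b ∈ M := by
      rcases Finset.mem_insert.mp hb.1.2.1 with h | h
      · exact absurd h hbm
      · exact h
    have hex : ∃ c, c ∈ M ∧ c ⊆ m ∧ (c, b) ∈ RepEdges E M :=
      aux_off1 E M hM m hm hM' hmM b hbM hb
    simp only [dif_pos hex]
    exact hex.choose_spec
  obtain ⟨gC, hgC⟩ : ∃ g : Finset V → Finset V, ∀ a,
      (a, m) ∈ RepEdges E (insert m M) → a ≠ m →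
      (g a ∈ M ∧ g a ⊆ m ∧ (a, g a) ∈ RepEdges E M) := by
    refine ⟨fun a => if h : ∃ c, c ∈ M ∧ c ⊆ m ∧ (a, c) ∈ RepEdges E M
      then h.choose else ∅, fun a hb ham => ?_⟩
    have haM : a ∈ M := by
      rcases Finset.mem_insert.mp hb.1.1 with h | h
      · exact absurd h ham
      · exact h
    have hex : ∃ c, c ∈ M ∧ c ⊆ m ∧ (a, c) ∈ RepEdges E M :=
      aux_off2 E M hM m hm hM' hmM a haM hb
    simp only [dif_pos hex]
    exact hex.choose_spec
  set f : Finset V × Finset V → Finset V × Finset V := fun p =>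
    if p.1 = m then (if p.2 = m then dval else (gB p.2, p.2))
    else if p.2 = m then (p.1, gC p.1) else p with hf
  -- computed values of f
  have hfD : ∀ p : Finset V × Finset V, p.1 = m → p.2 = m → f p = dval := by
    intro p h1 h2; simp only [hf]; rw [if_pos h1, if_pos h2]
  have hfF : ∀ p : Finset V × Finset V, p.1 = m → p.2 ≠ m → f p = (gB p.2, p.2) := by
    intro p h1 h2; simp only [hf]; rw [if_pos h1, if_neg h2]
  have hfS : ∀ p : Finset V × Finset V, p.1 ≠ m → p.2 = m → f p = (p.1, gC p.1) := by
    intro p h1 h2; simp only [hf]; rw [if_neg h1, if_pos h2]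
  have hfP : ∀ p : Finset V × Finset V, p.1 ≠ m → p.2 ≠ m → f p = p := by
    intro p h1 h2; simp only [hf]; rw [if_neg h1, if_neg h2]
  -- disjointness facts
  have hFdisj : ∀ p ∈ RepEdges E (insert m M), p.1 = m → p.2 ≠ m →
      p.2 ∩ m = ∅ ∧ p.2.Nonempty := by
    intro p hp h1 h2
    constructor
    · rcases hp.1.2.2.2 with h | h
      · exact absurd (h1 ▸ h.symm) h2
      · rw [Finset.inter_comm]; rwa [h1] at h
    · exact hne' p.2 hp.1.2.1
  have hSdisj : ∀ p ∈ RepEdges E (insert m M), p.1 ≠ m → p.2 = m →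
      p.1 ∩ m = ∅ ∧ p.1.Nonempty := by
    intro p hp h1 h2
    constructor
    · rcases hp.1.2.2.2 with h | h
      · exact absurd (h2 ▸ h) h1
      · rwa [h2] at h
    · exact hne' p.1 hp.1.1
  -- rewriting p as a pair when coordinates are known
  have hpairD : ∀ p : Finset V × Finset V, p.1 = m → p.2 = m →
      (m, m) = p := by
    intro p h1 h2; exact Prod.ext_iff.mpr ⟨h1.symm, h2.symm⟩
  have hpairF : ∀ p : Finset V × Finset V, p.1 = m → (m, p.2) = p := by
    intro p h1; exact Prod.ext_iff.mpr ⟨h1.symm, rfl⟩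
  have hpairS : ∀ p : Finset V × Finset V, p.2 = m → (p.1, m) = p := by
    intro p h2; exact Prod.ext_iff.mpr ⟨rfl, h2.symm⟩
  -- f maps into RepEdges E M
  have hmaps : Set.MapsTo f (RepEdges E (insert m M)) (RepEdges E M) := by
    intro p hp
    by_cases h1 : p.1 = m <;> by_cases h2 : p.2 = m
    · rw [hfD p h1 h2]
      exact (hdval ((hpairD p h1 h2) ▸ hp)).2.2.2.2
    · rw [hfF p h1 h2]
      exact (hgB p.2 ((hpairF p h1) ▸ hp) h2).2.2
    · rw [hfS p h1 h2]
      exact (hgC p.1 ((hpairS p h2) ▸ hp) h1).2.2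
    · rw [hfP p h1 h2]
      exact hplain p hp h1 h2
  -- images of non-plain edges are not representative in insert m M
  have hnotrep : ∀ p ∈ RepEdges E (insert m M), (p.1 = m ∨ p.2 = m) →
      f p ∉ RepEdges E (insert m M) := by
    intro p hp hm12 hrep
    have hdom : Dominated E (insert m M) (f p) := by
      by_cases h1 : p.1 = m <;> by_cases h2 : p.2 = m
      · have hd := hdval ((hpairD p h1 h2) ▸ hp)
        refine ⟨p, hp.1, ?_, ?_, ?_⟩
        · intro hc
          have hcc := congrArg Prod.fst hc
          rw [hfD p h1 h2] at hcc
          exact hmM ((hcc.symm.trans h1) ▸ hd.1)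
        · rw [hfD p h1 h2, h1]; exact hd.2.2.1
        · rw [hfD p h1 h2, h2]; exact hd.2.2.2.1
      · have hd := hgB p.2 ((hpairF p h1) ▸ hp) h2
        refine ⟨p, hp.1, ?_, ?_, ?_⟩
        · intro hc
          have hcc := congrArg Prod.fst hc
          rw [hfF p h1 h2] at hcc
          exact hmM ((hcc.symm.trans h1) ▸ hd.1)
        · rw [hfF p h1 h2, h1]; exact hd.2.1
        · rw [hfF p h1 h2]
      · have hd := hgC p.1 ((hpairS p h2) ▸ hp) h1
        refine ⟨p, hp.1, ?_, ?_, ?_⟩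
        · intro hc
          have hcc := congrArg Prod.snd hc
          rw [hfS p h1 h2] at hcc
          exact hmM ((hcc.symm.trans h2) ▸ hd.1)
        · rw [hfS p h1 h2]
        · rw [hfS p h1 h2, h2]; exact hd.2.1
      · rcases hm12 with h | h
        · exact absurd h h1
        · exact absurd h h2
    exact hrep.2 hdom
  -- injectivity
  have hinj : Set.InjOn f (RepEdges E (insert m M)) := by
    intro p1 hp1 p2 hp2 heq
    by_cases h11 : p1.1 = m <;> by_cases h12 : p1.2 = m <;>
      by_cases h21 : p2.1 = m <;> by_cases h22 : p2.2 = m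
    -- (D,D)
    · exact ((hpairD p1 h11 h12).symm).trans (hpairD p2 h21 h22)
    -- (D,F)
    · exfalso
      have hd := hdval ((hpairD p1 h11 h12) ▸ hp1)
      have hs := hFdisj p2 hp2 h21 h22
      have h2eq : dval.2 = p2.2 := by
        have := congrArg Prod.snd heq
        rwa [hfD p1 h11 h12, hfF p2 h21 h22] at this
      obtain ⟨x, hx⟩ := hs.2
      have : x ∈ p2.2 ∩ m := Finset.mem_inter.mpr ⟨hx, hd.2.2.2.1 (h2eq ▸ hx)⟩
      simp [hs.1] at this
    -- (D,S)
    · exfalso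
      have hd := hdval ((hpairD p1 h11 h12) ▸ hp1)
      have hs := hSdisj p2 hp2 h21 h22
      have h1eq : dval.1 = p2.1 := by
        have := congrArg Prod.fst heq
        rwa [hfD p1 h11 h12, hfS p2 h21 h22] at this
      obtain ⟨x, hx⟩ := hs.2
      have : x ∈ p2.1 ∩ m := Finset.mem_inter.mpr ⟨hx, hd.2.2.1 (h1eq ▸ hx)⟩
      simp [hs.1] at this
    -- (D,P)
    · exfalso
      rw [hfP p2 h21 h22] at heq
      exact hnotrep p1 hp1 (Or.inl h11) (heq ▸ hp2)
    -- (F,D)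
    · exfalso
      have hd := hdval ((hpairD p2 h21 h22) ▸ hp2)
      have hs := hFdisj p1 hp1 h11 h12
      have h2eq : dval.2 = p1.2 := by
        have := congrArg Prod.snd heq
        rw [hfD p2 h21 h22, hfF p1 h11 h12] at this
        exact this.symm
      obtain ⟨x, hx⟩ := hs.2
      have : x ∈ p1.2 ∩ m := Finset.mem_inter.mpr ⟨hx, hd.2.2.2.1 (h2eq ▸ hx)⟩
      simp [hs.1] at this
    -- (F,F)
    · have h2eq : p1.2 = p2.2 := by
        have := congrArg Prod.snd heq
        rwa [hfF p1 h11 h12, hfF p2 h21 h22] at this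
      calc p1 = (m, p1.2) := (hpairF p1 h11).symm
        _ = (m, p2.2) := by rw [h2eq]
        _ = p2 := hpairF p2 h21
    -- (F,S)
    · exfalso
      have hdB := hgB p1.2 ((hpairF p1 h11) ▸ hp1) h12
      have hs := hSdisj p2 hp2 h21 h22
      have h1eq : gB p1.2 = p2.1 := by
        have := congrArg Prod.fst heq
        rwa [hfF p1 h11 h12, hfS p2 h21 h22] at this
      obtain ⟨x, hx⟩ := hneM _ hdB.1
      have : x ∈ p2.1 ∩ m := Finset.mem_inter.mpr ⟨h1eq ▸ hx, hdB.2.1 hx⟩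
      simp [hs.1] at this
    -- (F,P)
    · exfalso
      rw [hfP p2 h21 h22] at heq
      exact hnotrep p1 hp1 (Or.inl h11) (heq ▸ hp2)
    -- (S,D)
    · exfalso
      have hd := hdval ((hpairD p2 h21 h22) ▸ hp2)
      have hs := hSdisj p1 hp1 h11 h12
      have h1eq : dval.1 = p1.1 := by
        have := congrArg Prod.fst heq
        rw [hfD p2 h21 h22, hfS p1 h11 h12] at this
        exact this.symm
      obtain ⟨x, hx⟩ := hs.2
      have : x ∈ p1.1 ∩ m := Finset.mem_inter.mpr ⟨hx, hd.2.2.1 (h1eq ▸ hx)⟩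
      simp [hs.1] at this
    -- (S,F)
    · exfalso
      have hdB := hgB p2.2 ((hpairF p2 h21) ▸ hp2) h22
      have hs := hSdisj p1 hp1 h11 h12
      have h1eq : gB p2.2 = p1.1 := by
        have := congrArg Prod.fst heq
        rw [hfF p2 h21 h22, hfS p1 h11 h12] at this
        exact this.symm
      obtain ⟨x, hx⟩ := hneM _ hdB.1
      have : x ∈ p1.1 ∩ m := Finset.mem_inter.mpr ⟨h1eq ▸ hx, hdB.2.1 hx⟩
      simp [hs.1] at this
    -- (S,S)
    · have h1eq : p1.1 = p2.1 := by
        have := congrArg Prod.fst heq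
        rwa [hfS p1 h11 h12, hfS p2 h21 h22] at this
      calc p1 = (p1.1, m) := (hpairS p1 h12).symm
        _ = (p2.1, m) := by rw [h1eq]
        _ = p2 := hpairS p2 h22
    -- (S,P)
    · exfalso
      rw [hfP p2 h21 h22] at heq
      exact hnotrep p1 hp1 (Or.inr h12) (heq ▸ hp2)
    -- (P,D)
    · exfalso
      rw [hfP p1 h11 h12] at heq
      exact hnotrep p2 hp2 (Or.inl h21) (heq ▸ hp1)
    -- (P,F)
    · exfalso
      rw [hfP p1 h11 h12] at heq
      exact hnotrep p2 hp2 (Or.inl h21) (heq ▸ hp1)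
    -- (P,S)
    · exfalso
      rw [hfP p1 h11 h12] at heq
      exact hnotrep p2 hp2 (Or.inr h22) (heq ▸ hp1)
    -- (P,P)
    · rw [hfP p1 h11 h12, hfP p2 h21 h22] at heq
      exact heq
  calc (RepEdges E (insert m M)).ncard
      = (f '' RepEdges E (insert m M)).ncard := (Set.ncard_image_of_injOn hinj).symm
    _ ≤ (RepEdges E M).ncard := Set.ncard_le_ncard hmaps.image_subset (Set.toFinite _)
end

section
/- Diminishing returns for module addition: let C ⊆ C′ be configurations over (V, E) and let m ⊆ V be a nonempty set such that both C ∪ {m} and C′ ∪ {m} are configurations. Then |R(C)| − |R(C ∪ {m})| ≥ |R(C′)| − |R(C′ ∪ {m})|; that is, if adding m to C removes e representative edges, adding m to the larger configuration C′ removes at most e representative edges. -/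
namespace S10
set_option linter.unusedSectionVars false
set_option linter.unusedVariables false

variable {V : Type*} [Fintype V] [DecidableEq V]

/-! ### basic lemmas -/

lemma possEdge_mono {E : Set (V × V)} {M M' : Finset (Finset V)} (h : M ⊆ M')
    {p} (hp : PossEdge E M p) : PossEdge E M' p :=
  ⟨h hp.1, h hp.2.1, hp.2.2⟩

lemma mem_rep {E : Set (V × V)} {M : Finset (Finset V)} {p} :
    p ∈ RepEdges E M ↔ PossEdge E M p ∧ ¬ Dominated E M p := Iff.rfl

lemma rep_max {E : Set (V × V)} {M : Finset (Finset V)} {p} (hp : p ∈ RepEdges E M)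
    {q} (hq : PossEdge E M q) (h1 : p.1 ⊆ q.1) (h2 : p.2 ⊆ q.2) : q = p := by
  by_contra hne
  exact hp.2 ⟨q, hq, hne, h1, h2⟩

lemma not_rep_of_dom {E : Set (V × V)} {M : Finset (Finset V)} {p q}
    (hq : PossEdge E M q) (hne : q ≠ p) (h1 : p.1 ⊆ q.1) (h2 : p.2 ⊆ q.2) :
    p ∉ RepEdges E M := fun hp => hp.2 ⟨q, hq, hne, h1, h2⟩

lemma rep_of_rep_insert {E : Set (V × V)} {M : Finset (Finset V)} {w : Finset V} {p}
    (hp : p ∈ RepEdges E (insert w M)) (h1 : PossEdge E M p) : p ∈ RepEdges E M :=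
  ⟨h1, fun ⟨q, hq, hne, hs1, hs2⟩ =>
    hp.2 ⟨q, possEdge_mono (Finset.subset_insert _ _) hq, hne, hs1, hs2⟩⟩

lemma cfgNonempty {M : Finset (Finset V)} (h : IsConfig M) {x} (hx : x ∈ M) :
    x.Nonempty := h.1 x hx

lemma cfgNest {M : Finset (Finset V)} (h : IsConfig M) {x y} (hx : x ∈ M) (hy : y ∈ M)
    (hxy : (x ∩ y).Nonempty) : x ⊆ y ∨ y ⊆ x := by
  rcases h.2.2 x hx y hy with h1 | h1 | h1
  · exact Or.inl h1
  · exact Or.inr h1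
  · rw [h1] at hxy; exact absurd hxy (by simp)

lemma config_subset {M Q : Finset (Finset V)} (hM : IsConfig M) (hQM : Q ⊆ M)
    (hs : ∀ v : V, {v} ∈ Q) : IsConfig Q :=
  ⟨fun x hx => hM.1 x (hQM hx), hs, fun x hx y hy => hM.2.2 x (hQM hx) y (hQM hy)⟩

/-! ### N and D -/

variable (E : Set (V × V))

def Nset (X : Finset (Finset V)) (w : Finset V) : Set (Finset V × Finset V) :=
  RepEdges E (insert w X) \ RepEdges E X

def Dset (X : Finset (Finset V)) (w : Finset V) : Set (Finset V × Finset V) :=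
  RepEdges E X \ RepEdges E (insert w X)

variable {E}

lemma Nset_touch {X : Finset (Finset V)} {w : Finset V} (hw : w ∉ X) {e}
    (he : e ∈ Nset E X w) : e.1 = w ∨ e.2 = w := by
  by_contra hcon
  push_neg at hcon
  have h1 : e.1 ∈ X := (Finset.mem_insert.1 he.1.1.1).resolve_left hcon.1
  have h2 : e.2 ∈ X := (Finset.mem_insert.1 he.1.1.2.1).resolve_left hcon.2
  exact he.2 (rep_of_rep_insert he.1 ⟨h1, h2, he.1.1.2.2⟩)

/-- forms of elements of `Nset`. -/
lemma Nset_form {X : Finset (Finset V)} {w : Finset V} (hw : w ∉ X) {e}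
    (he : e ∈ Nset E X w) :
    (e.1 = w ∧ e.2 ≠ w ∧ e.2 ∈ X ∧ e.2 ∩ w = ∅) ∨
    (e.2 = w ∧ e.1 ≠ w ∧ e.1 ∈ X ∧ e.1 ∩ w = ∅) ∨ e = (w, w) := by
  rcases Nset_touch hw he with h1 | h2
  · by_cases h2 : e.2 = w
    · exact Or.inr (Or.inr (Prod.ext h1 h2))
    · refine Or.inl ⟨h1, h2, (Finset.mem_insert.1 he.1.1.2.1).resolve_left h2, ?_⟩
      rcases he.1.1.2.2.2 with h | h
      · exact absurd (h.symm.trans h1) h2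
      · rw [← h1, Finset.inter_comm]; exact h
  · by_cases h1 : e.1 = w
    · exact Or.inr (Or.inr (Prod.ext h1 h2))
    · refine Or.inr (Or.inl ⟨h2, h1, (Finset.mem_insert.1 he.1.1.1).resolve_left h1, ?_⟩)
      rcases he.1.1.2.2.2 with h | h
      · exact absurd (h.trans h2) h1
      · rw [← h2]; exact h

lemma Dset_killer {X : Finset (Finset V)} {w : Finset V} {p}
    (hp : p ∈ Dset E X w) :
    ∃ g, PossEdge E (insert w X) g ∧ g ≠ p ∧ p.1 ⊆ g.1 ∧ p.2 ⊆ g.2 ∧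
      (g.1 = w ∨ g.2 = w) := by
  have h1 : PossEdge E (insert w X) p := possEdge_mono (Finset.subset_insert _ _) hp.1.1
  have h2 : Dominated E (insert w X) p := by
    by_contra h
    exact hp.2 ⟨h1, h⟩
  obtain ⟨g, hg, hne, hs1, hs2⟩ := h2
  refine ⟨g, hg, hne, hs1, hs2, ?_⟩
  by_contra hcon
  push_neg at hcon
  have hg1 : g.1 ∈ X := (Finset.mem_insert.1 hg.1).resolve_left hcon.1
  have hg2 : g.2 ∈ X := (Finset.mem_insert.1 hg.2.1).resolve_left hcon.2
  exact hp.1.2 ⟨g, ⟨hg1, hg2, hg.2.2⟩, hne, hs1, hs2⟩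

end S10

/-! ### canonical minimum via a fixed well-ordering -/
namespace S10
variable {V : Type*} [Fintype V] [DecidableEq V]

open Classical in
noncomputable def wminS (S : Set (Finset V)) : Finset V :=
  if h : S.Nonempty then
    (IsWellFounded.wf (r := (WellOrderingRel : Finset V → Finset V → Prop))).min S h
  else ∅

lemma wminS_mem {S : Set (Finset V)} (h : S.Nonempty) : wminS S ∈ S := by
  rw [wminS, dif_pos h]
  exact WellFounded.min_mem _ S h

lemma wminS_not_lt {S : Set (Finset V)} (h : S.Nonempty) {x} (hx : x ∈ S) :
    ¬ WellOrderingRel x (wminS S) := by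
  rw [wminS, dif_pos h]
  exact WellFounded.not_lt_min _ S hx

/-! ### pieces -/

def IsPiece (X : Finset (Finset V)) (w A : Finset V) : Prop :=
  A ∈ X ∧ A ⊆ w ∧ ∀ B ∈ X, A ⊆ B → B ⊆ w → B = A

lemma exists_piece {X : Finset (Finset V)} (hsing : ∀ v : V, {v} ∈ X)
    {w : Finset V} {u : V} (hu : u ∈ w) : ∃ A, IsPiece X w A ∧ u ∈ A := by
  classical
  have hne : (X.filter (fun B => u ∈ B ∧ B ⊆ w)).Nonempty :=
    ⟨{u}, by simp [hsing u, Finset.singleton_subset_iff, hu]⟩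
  obtain ⟨A, hA, hmax⟩ := Finset.exists_max_image _ (fun B => B.card) hne
  simp only [Finset.mem_filter] at hA
  refine ⟨A, ⟨hA.1, hA.2.2, fun B hB hAB hBw => ?_⟩, hA.2.1⟩
  have hBmem : B ∈ X.filter (fun B => u ∈ B ∧ B ⊆ w) :=
    Finset.mem_filter.2 ⟨hB, hAB hA.2.1, hBw⟩
  exact (Finset.eq_of_subset_of_card_le hAB (hmax B hBmem)).symm

/-! ### good pieces -/

def GoodL (E : Set (V × V)) (X : Finset (Finset V)) (w n : Finset V) : Set (Finset V) :=
  {A | IsPiece X w A ∧ ∀ b ∈ X, n ⊆ b → b ≠ n → ¬ PossEdge E X (A, b)}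

lemma goodL_nonempty {E : Set (V × V)} {X : Finset (Finset V)} {w : Finset V}
    (hX : IsConfig X) (hins : IsConfig (insert w X)) (hw : w ∉ X)
    {n : Finset V} (hn : n ∈ X) (he : (w, n) ∈ RepEdges E (insert w X)) :
    (GoodL E X w n).Nonempty := by
  classical
  have hwmem : w ∈ insert w X := Finset.mem_insert_self w X
  have hwne : w.Nonempty := cfgNonempty hins hwmem
  have hnne : n.Nonempty := cfgNonempty hX hn
  have hwn : w ∩ n = ∅ := by
    rcases he.1.2.2.2 with h | h
    · refine absurd ?_ hw
      rw [show w = n from h]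
      exact hn
    · exact h
  by_contra hcon
  rw [Set.not_nonempty_iff_eq_empty] at hcon
  have hwit : ∀ A, IsPiece X w A → ∃ b ∈ X, n ⊆ b ∧ b ≠ n ∧ PossEdge E X (A, b) := by
    intro A hA
    by_contra hc
    push_neg at hc
    have hAg : A ∈ GoodL E X w n := ⟨hA, fun b hb hnb hbn hpe => (hc b hb hnb hbn) hpe⟩
    rw [hcon] at hAg
    exact hAg
  set W := X.filter (fun b => n ⊆ b ∧ b ≠ n ∧ ∃ A, IsPiece X w A ∧ PossEdge E X (A, b))
    with hW
  have hWne : W.Nonempty := by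
    obtain ⟨u, hu⟩ := hwne
    obtain ⟨A, hA, _⟩ := exists_piece hX.2.1 hu
    obtain ⟨b, hb, h1, h2, h3⟩ := hwit A hA
    exact ⟨b, by rw [hW]; exact Finset.mem_filter.2 ⟨hb, h1, h2, A, hA, h3⟩⟩
  obtain ⟨bs, hbsW, hbsmin⟩ := Finset.exists_min_image W (fun b => b.card) hWne
  have hbs := Finset.mem_filter.1 (hW ▸ hbsW)
  obtain ⟨hbsX, hbsn, hbsne, -⟩ := hbs
  have hsub : ∀ b ∈ W, bs ⊆ b := by
    intro b hb
    have hb' := Finset.mem_filter.1 (hW ▸ hb)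
    obtain ⟨y, hy⟩ := hnne
    have hnest := cfgNest hX hbsX hb'.1
      ⟨y, Finset.mem_inter.2 ⟨hbsn hy, hb'.2.1 hy⟩⟩
    rcases hnest with h | h
    · exact h
    · have heq : b = bs := Finset.eq_of_subset_of_card_le h (hbsmin b hb)
      rw [heq]
  have hEdge : ∀ u ∈ w, ∀ v ∈ bs, (u, v) ∈ E := by
    intro u hu v hv
    obtain ⟨A, hA, huA⟩ := exists_piece hX.2.1 hu
    obtain ⟨b, hb, h1, h2, h3⟩ := hwit A hA
    have hbW : b ∈ W := by rw [hW]; exact Finset.mem_filter.2 ⟨hb, h1, h2, A, hA, h3⟩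
    exact h3.2.2.1 u huA v (hsub b hbW hv)
  have hdisj : w ∩ bs = ∅ := by
    rw [Finset.eq_empty_iff_forall_notMem]
    intro x hx
    rw [Finset.mem_inter] at hx
    obtain ⟨A, hA, hxA⟩ := exists_piece hX.2.1 hx.1
    obtain ⟨b, hb, h1, h2, h3⟩ := hwit A hA
    have hbW : b ∈ W := by rw [hW]; exact Finset.mem_filter.2 ⟨hb, h1, h2, A, hA, h3⟩
    have hAb : A ∩ b = ∅ := by
      rcases h3.2.2.2 with h | h
      · exfalso
        obtain ⟨y, hy⟩ := hnne
        have hyA : y ∈ A := by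
          have : y ∈ b := h1 hy
          rw [show A = b from h]
          exact this
        have hyw : y ∈ w ∩ n := Finset.mem_inter.2 ⟨hA.2.1 hyA, hy⟩
        rw [hwn] at hyw
        exact absurd hyw (Finset.notMem_empty y)
      · exact h
    have hxAb : x ∈ A ∩ b := Finset.mem_inter.2 ⟨hxA, hsub b hbW hx.2⟩
    rw [hAb] at hxAb
    exact absurd hxAb (Finset.notMem_empty x)
  have hq : PossEdge E (insert w X) (w, bs) :=
    ⟨hwmem, Finset.mem_insert_of_mem hbsX, hEdge, Or.inr hdisj⟩
  have hqp := rep_max he hq (Finset.Subset.refl w) hbsn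
  exact hbsne (congrArg Prod.snd hqp)

/-! ### deltaL -/

noncomputable def deltaL (E : Set (V × V)) (X : Finset (Finset V)) (w n : Finset V) :
    Finset V × Finset V := (wminS (GoodL E X w n), n)

lemma deltaL_spec {E : Set (V × V)} {X : Finset (Finset V)} {w : Finset V}
    (hX : IsConfig X) (hins : IsConfig (insert w X)) (hw : w ∉ X)
    {n : Finset V} (hn : n ∈ X) (he : (w, n) ∈ RepEdges E (insert w X)) :
    deltaL E X w n ∈ RepEdges E X ∧ deltaL E X w n ∉ RepEdges E (insert w X) ∧
      (deltaL E X w n).1 ∈ GoodL E X w n := by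
  have hGne := goodL_nonempty hX hins hw hn he
  have hA : wminS (GoodL E X w n) ∈ GoodL E X w n := wminS_mem hGne
  set A := wminS (GoodL E X w n) with hAdef
  have hAX : A ∈ X := hA.1.1
  have hAw : A ⊆ w := hA.1.2.1
  have hwn : w ∩ n = ∅ := by
    rcases he.1.2.2.2 with h | h
    · refine absurd ?_ hw
      rw [show w = n from h]
      exact hn
    · exact h
  have hAne : A.Nonempty := cfgNonempty hX hAX
  have hposs : PossEdge E X (A, n) := by
    refine ⟨hAX, hn, fun u hu v hv => he.1.2.2.1 u (hAw hu) v hv, Or.inr ?_⟩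
    rw [← Finset.subset_empty, ← hwn]
    exact Finset.inter_subset_inter hAw (Finset.Subset.refl n)
  have hrep : (A, n) ∈ RepEdges E X := by
    refine ⟨hposs, ?_⟩
    rintro ⟨⟨q1, q2⟩, hq, hne, hs1, hs2⟩
    simp only at hs1 hs2
    obtain ⟨x, hx⟩ := hAne
    have hnest := cfgNest hins (Finset.mem_insert_of_mem hq.1) (Finset.mem_insert_self w X)
      ⟨x, Finset.mem_inter.2 ⟨hs1 hx, hAw hx⟩⟩
    rcases hnest with hq1w | hwq1
    · have hq1A : q1 = A := hA.1.2.2 q1 hq.1 hs1 hq1w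
      have hq2n : q2 ≠ n := by
        intro h
        exact hne (by rw [hq1A, h])
      exact hA.2 q2 hq.2.1 hs2 hq2n (by rw [← hq1A]; exact hq)
    · have hq' : PossEdge E (insert w X) (q1, q2) :=
        possEdge_mono (Finset.subset_insert _ _) hq
      have := rep_max he hq' hwq1 hs2
      have hq1w : q1 = w := congrArg Prod.fst this
      exact hw (hq1w ▸ hq.1)
  have hdl : deltaL E X w n = (A, n) := by rw [deltaL, ← hAdef]
  rw [hdl]
  refine ⟨hrep, ?_, hA⟩
  apply not_rep_of_dom he.1 ?_ hAw (Finset.Subset.refl n)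
  intro h
  apply hw
  have hwA : w = A := congrArg Prod.fst h
  rw [hwA]
  exact hAX

/-! ### diagonal image -/

lemma diag_exists {E : Set (V × V)} {X : Finset (Finset V)} {w : Finset V}
    (hX : IsConfig X) (hins : IsConfig (insert w X)) (hw : w ∉ X)
    (he : (w, w) ∈ RepEdges E (insert w X)) :
    ∃ p, p ∈ RepEdges E X ∧ p ∉ RepEdges E (insert w X) ∧ p.1 ⊆ w ∧ p.2 ⊆ w := by
  classical
  have hwne : w.Nonempty := cfgNonempty hins (Finset.mem_insert_self w X)
  obtain ⟨u, hu⟩ := hwne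
  set F := (X ×ˢ X).filter (fun p : Finset V × Finset V =>
    PossEdge E X p ∧ p.1 ⊆ w ∧ p.2 ⊆ w) with hF
  have hFne : F.Nonempty := by
    refine ⟨({u}, {u}), ?_⟩
    rw [hF, Finset.mem_filter]
    refine ⟨Finset.mem_product.2 ⟨hX.2.1 u, hX.2.1 u⟩,
      ⟨hX.2.1 u, hX.2.1 u, ?_, Or.inl rfl⟩, by simpa using hu, by simpa using hu⟩
    intro x hx y hy
    rw [Finset.mem_singleton] at hx hy
    rw [hx, hy]
    exact he.1.2.2.1 u hu u hu
  obtain ⟨p, hpF, hmax⟩ := Finset.exists_max_image F (fun p => p.1.card + p.2.card) hFne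
  rw [hF, Finset.mem_filter] at hpF
  obtain ⟨-, hposs, hp1, hp2⟩ := hpF
  have hp1ne : p.1.Nonempty := cfgNonempty hX hposs.1
  have hp2ne : p.2.Nonempty := cfgNonempty hX hposs.2.1
  have hrep : p ∈ RepEdges E X := by
    refine ⟨hposs, ?_⟩
    rintro ⟨⟨q1, q2⟩, hq, hne, hs1, hs2⟩
    simp only at hs1 hs2
    obtain ⟨x1, hx1⟩ := hp1ne
    obtain ⟨x2, hx2⟩ := hp2ne
    have hn1 := cfgNest hins (Finset.mem_insert_of_mem hq.1) (Finset.mem_insert_self w X)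
      ⟨x1, Finset.mem_inter.2 ⟨hs1 hx1, hp1 hx1⟩⟩
    have hn2 := cfgNest hins (Finset.mem_insert_of_mem hq.2.1) (Finset.mem_insert_self w X)
      ⟨x2, Finset.mem_inter.2 ⟨hs2 hx2, hp2 hx2⟩⟩
    rcases hn1 with h1 | h1 <;> rcases hn2 with h2 | h2
    · -- both inside w : contradict maximality
      have hqF : (q1, q2) ∈ F := by
        rw [hF, Finset.mem_filter]
        exact ⟨Finset.mem_product.2 ⟨hq.1, hq.2.1⟩, hq, h1, h2⟩
      have hcard := hmax _ hqF
      simp only at hcard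
      have hb1 := Finset.card_le_card hs1
      have hb2 := Finset.card_le_card hs2
      have heq1 : p.1 = q1 := Finset.eq_of_subset_of_card_le hs1 (by omega)
      have heq2 : p.2 = q2 := Finset.eq_of_subset_of_card_le hs2 (by omega)
      exact hne (by rw [← heq1, ← heq2])
    · -- q1 ⊆ w ⊆ q2
      have hx : x1 ∈ q1 ∩ q2 := Finset.mem_inter.2 ⟨hs1 hx1, h2 (hp1 hx1)⟩
      rcases hq.2.2.2 with h | h
      · have hq12 : q1 = q2 := h
        have hqw : q1 = w := Finset.Subset.antisymm h1 (by rw [hq12]; exact h2)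
        exact hw (hqw ▸ hq.1)
      · rw [h] at hx
        exact absurd hx (Finset.notMem_empty x1)
    · -- w ⊆ q1, q2 ⊆ w
      have hx : x2 ∈ q1 ∩ q2 := Finset.mem_inter.2 ⟨h1 (hp2 hx2), hs2 hx2⟩
      rcases hq.2.2.2 with h | h
      · have hq12 : q1 = q2 := h
        have hqw : q2 = w := Finset.Subset.antisymm h2 (by rw [← hq12]; exact h1)
        exact hw (hqw ▸ hq.2.1)
      · rw [h] at hx
        exact absurd hx (Finset.notMem_empty x2)
    · -- w ⊆ both
      have hx : u ∈ q1 ∩ q2 := Finset.mem_inter.2 ⟨h1 hu, h2 hu⟩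
      rcases hq.2.2.2 with h | h
      · have hq12 : q1 = q2 := h
        have hq' : PossEdge E (insert w X) (q1, q2) :=
          possEdge_mono (Finset.subset_insert _ _) hq
        have hqe := rep_max he hq' h1 h2
        have hqw : q1 = w := congrArg Prod.fst hqe
        exact hw (hqw ▸ hq.1)
      · rw [h] at hx
        exact absurd hx (Finset.notMem_empty u)
  refine ⟨p, hrep, ?_, hp1, hp2⟩
  apply not_rep_of_dom he.1 ?_ hp1 hp2
  intro h
  apply hw
  have hwp : w = p.1 := congrArg Prod.fst h
  rw [hwp]
  exact hposs.1

open Classical in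
noncomputable def diagI (E : Set (V × V)) (X : Finset (Finset V)) (w : Finset V) :
    Finset V × Finset V :=
  if h : ∃ p, p ∈ RepEdges E X ∧ p ∉ RepEdges E (insert w X) ∧ p.1 ⊆ w ∧ p.2 ⊆ w
  then h.choose else (∅, ∅)

lemma diagI_spec {E : Set (V × V)} {X : Finset (Finset V)} {w : Finset V}
    (hX : IsConfig X) (hins : IsConfig (insert w X)) (hw : w ∉ X)
    (he : (w, w) ∈ RepEdges E (insert w X)) :
    diagI E X w ∈ RepEdges E X ∧ diagI E X w ∉ RepEdges E (insert w X) ∧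
      (diagI E X w).1 ⊆ w ∧ (diagI E X w).2 ⊆ w := by
  have h := diag_exists hX hins hw he
  rw [diagI, dif_pos h]
  exact h.choose_spec

end S10

namespace S10
variable {V : Type*} [Fintype V] [DecidableEq V]

/-! ### flip machinery -/

def flipE (E : Set (V × V)) : Set (V × V) := {x | (x.2, x.1) ∈ E}

lemma flipE_flipE (E : Set (V × V)) : flipE (flipE E) = E := rfl

lemma possEdge_flip_mp {E : Set (V × V)} {M : Finset (Finset V)} {p}
    (hp : PossEdge E M p) : PossEdge (flipE E) M p.swap := by
  obtain ⟨h1, h2, h3, h4⟩ := hp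
  refine ⟨h2, h1, fun u hu v hv => h3 v hv u hu, ?_⟩
  rcases h4 with h | h
  · exact Or.inl h.symm
  · exact Or.inr (by rw [Finset.inter_comm]; exact h)

lemma possEdge_flip {E : Set (V × V)} {M : Finset (Finset V)} {p} :
    PossEdge (flipE E) M p.swap ↔ PossEdge E M p :=
  ⟨fun h => by
    have h2 := possEdge_flip_mp h
    rwa [flipE_flipE, Prod.swap_swap] at h2, possEdge_flip_mp⟩

lemma dominated_flip_mp {E : Set (V × V)} {M : Finset (Finset V)} {p}
    (h : Dominated E M p) : Dominated (flipE E) M p.swap := by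
  obtain ⟨q, hq, hne, h1, h2⟩ := h
  refine ⟨q.swap, possEdge_flip_mp hq, ?_, h2, h1⟩
  intro hc
  apply hne
  have h3 := congrArg Prod.swap hc
  rwa [Prod.swap_swap, Prod.swap_swap] at h3

lemma dominated_flip {E : Set (V × V)} {M : Finset (Finset V)} {p} :
    Dominated (flipE E) M p.swap ↔ Dominated E M p :=
  ⟨fun h => by
    have h2 := dominated_flip_mp h
    rwa [flipE_flipE, Prod.swap_swap] at h2, dominated_flip_mp⟩

lemma rep_flip {E : Set (V × V)} {M : Finset (Finset V)} {p} :
    p.swap ∈ RepEdges (flipE E) M ↔ p ∈ RepEdges E M := by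
  constructor
  · intro h
    exact ⟨possEdge_flip.1 h.1, fun hd => h.2 (dominated_flip.2 hd)⟩
  · intro h
    exact ⟨possEdge_flip.2 h.1, fun hd => h.2 (dominated_flip.1 hd)⟩

lemma Nset_flip {E : Set (V × V)} {X : Finset (Finset V)} {w : Finset V} {e} :
    e.swap ∈ Nset (flipE E) X w ↔ e ∈ Nset E X w := by
  unfold Nset
  rw [Set.mem_diff, Set.mem_diff, rep_flip, rep_flip]

lemma Dset_flip {E : Set (V × V)} {X : Finset (Finset V)} {w : Finset V} {p} :
    p.swap ∈ Dset (flipE E) X w ↔ p ∈ Dset E X w := by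
  unfold Dset
  rw [Set.mem_diff, Set.mem_diff, rep_flip, rep_flip]

/-! ### the master projection -/

open Classical in
noncomputable def dlt (E : Set (V × V)) (X : Finset (Finset V)) (w : Finset V)
    (e : Finset V × Finset V) : Finset V × Finset V :=
  if e.1 = w then (if e.2 = w then diagI E X w else deltaL E X w e.2)
  else (deltaL (flipE E) X w e.1).swap

lemma dlt_L {E : Set (V × V)} {X : Finset (Finset V)} {w : Finset V} {e}
    (h1 : e.1 = w) (h2 : e.2 ≠ w) : dlt E X w e = deltaL E X w e.2 := by
  rw [dlt, if_pos h1, if_neg h2]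

lemma dlt_R {E : Set (V × V)} {X : Finset (Finset V)} {w : Finset V} {e}
    (h1 : e.1 ≠ w) : dlt E X w e = (deltaL (flipE E) X w e.1).swap := by
  rw [dlt, if_neg h1]

lemma dlt_D {E : Set (V × V)} {X : Finset (Finset V)} {w : Finset V} {e}
    (h1 : e.1 = w) (h2 : e.2 = w) : dlt E X w e = diagI E X w := by
  rw [dlt, if_pos h1, if_pos h2]

lemma deltaL_snd {E : Set (V × V)} {X : Finset (Finset V)} {w n : Finset V} :
    (deltaL E X w n).2 = n := rfl

/-- shape and membership facts about `dlt` on `Nset`. -/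
lemma dlt_shape {E : Set (V × V)} {X : Finset (Finset V)} {w : Finset V}
    (hX : IsConfig X) (hins : IsConfig (insert w X)) (hw : w ∉ X)
    {e} (he : e ∈ Nset E X w) :
    dlt E X w e ∈ Dset E X w ∧
    ((e.1 = w ∧ e.2 ≠ w ∧ (dlt E X w e).1 ⊆ w ∧ (dlt E X w e).2 = e.2 ∧
        e.2 ∩ w = ∅ ∧ e.2.Nonempty ∧ (dlt E X w e).1 ∈ GoodL E X w e.2) ∨
     (e.2 = w ∧ e.1 ≠ w ∧ (dlt E X w e).2 ⊆ w ∧ (dlt E X w e).1 = e.1 ∧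
        e.1 ∩ w = ∅ ∧ e.1.Nonempty ∧ (dlt E X w e).2 ∈ GoodL (flipE E) X w e.1) ∨
     (e = (w, w) ∧ (dlt E X w e).1 ⊆ w ∧ (dlt E X w e).2 ⊆ w)) := by
  rcases Nset_form hw he with ⟨h1, h2, h3, h4⟩ | ⟨h1, h2, h3, h4⟩ | h1
  · -- type L
    have he' : (w, e.2) ∈ RepEdges E (insert w X) := by
      rw [show ((w : Finset V), e.2) = e from Prod.ext h1.symm rfl]
      exact he.1
    have hs := deltaL_spec hX hins hw h3 he'
    rw [dlt_L h1 h2]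
    refine ⟨⟨hs.1, hs.2.1⟩, Or.inl ⟨h1, h2, hs.2.2.1.2.1, deltaL_snd, h4, cfgNonempty hX h3, hs.2.2⟩⟩
  · -- type R
    have hsw : e.swap ∈ Nset (flipE E) X w := Nset_flip.2 he
    have he' : (w, e.1) ∈ RepEdges (flipE E) (insert w X) := by
      have h5 := hsw.1
      rw [show e.swap = (w, e.1) from Prod.ext h1 rfl] at h5
      exact h5
    have hs := deltaL_spec (E := flipE E) hX hins hw h3 he'
    rw [dlt_R h2]
    have hrep : (deltaL (flipE E) X w e.1).swap ∈ RepEdges E X := by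
      rw [← rep_flip, Prod.swap_swap]
      exact hs.1
    have hnrep : (deltaL (flipE E) X w e.1).swap ∉ RepEdges E (insert w X) := by
      intro hc
      apply hs.2.1
      rw [← Prod.swap_swap (deltaL (flipE E) X w e.1)]
      exact rep_flip.2 hc
    exact ⟨⟨hrep, hnrep⟩, Or.inr (Or.inl ⟨h1, h2, hs.2.2.1.2.1, rfl, h4, cfgNonempty hX h3, hs.2.2⟩)⟩
  · -- diag
    have he' : (w, w) ∈ RepEdges E (insert w X) := by
      rw [show ((w : Finset V), w) = e from h1.symm]
      exact he.1
    have hs := diagI_spec hX hins hw he'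
    rw [dlt_D (congrArg Prod.fst h1) (congrArg Prod.snd h1)]
    exact ⟨⟨hs.1, hs.2.1⟩, Or.inr (Or.inr ⟨h1, hs.2.2.1, hs.2.2.2⟩)⟩

lemma dlt_inj {E : Set (V × V)} {X : Finset (Finset V)} {w : Finset V}
    (hX : IsConfig X) (hins : IsConfig (insert w X)) (hw : w ∉ X)
    {e e'} (he : e ∈ Nset E X w) (he' : e' ∈ Nset E X w)
    (heq : dlt E X w e = dlt E X w e') : e = e' := by
  have hs := (dlt_shape hX hins hw he).2
  have hs' := (dlt_shape hX hins hw he').2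
  have contra : ∀ s : Finset V, s ∩ w = ∅ → s.Nonempty → s ⊆ w → False := by
    intro s hsw hne hsub
    have : s = ∅ := by
      rw [← hsw]
      exact (Finset.inter_eq_left.2 hsub).symm
    exact hne.ne_empty this
  rcases hs with ⟨a1, a2, a3, a4, a5, a6, -⟩ | ⟨a1, a2, a3, a4, a5, a6, -⟩ | ⟨a1, a3, a4⟩ <;>
    rcases hs' with ⟨b1, b2, b3, b4, b5, b6, -⟩ | ⟨b1, b2, b3, b4, b5, b6, -⟩ | ⟨b1, b3, b4⟩
  · -- L L
    have : e.2 = e'.2 := by rw [← a4, ← b4, heq]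
    exact Prod.ext (a1.trans b1.symm) this
  · -- L R
    exact absurd (by rw [← a4, heq]; exact b3) fun h => contra e.2 a5 a6 h
  · -- L D
    exact absurd (by rw [← a4, heq]; exact b4) fun h => contra e.2 a5 a6 h
  · -- R L
    exact absurd (by rw [← b4, ← heq]; exact a3) fun h => contra e'.2 b5 b6 h
  · -- R R
    have : e.1 = e'.1 := by rw [← a4, ← b4, heq]
    exact Prod.ext this (a1.trans b1.symm)
  · -- R D
    exact absurd (by rw [← a4, heq]; exact b3) fun h => contra e.1 a5 a6 h
  · -- D L
    exact absurd (by rw [← b4, ← heq]; exact a4) fun h => contra e'.2 b5 b6 h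
  · -- D R
    exact absurd (by rw [← b4, ← heq]; exact a3) fun h => contra e'.1 b5 b6 h
  · -- D D
    rw [a1, b1]

/-! ### cardinality helpers -/

lemma ncard_sub_eq (A B : Set (Finset V × Finset V)) :
    (A.ncard : ℤ) - B.ncard = ((A \ B).ncard : ℤ) - (B \ A).ncard := by
  have hA := Set.ncard_inter_add_ncard_diff_eq_ncard A B (Set.toFinite A)
  have hB := Set.ncard_inter_add_ncard_diff_eq_ncard B A (Set.toFinite B)
  rw [Set.inter_comm] at hB
  omega

lemma mono_ncard {E : Set (V × V)} {X : Finset (Finset V)} {w : Finset V}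
    (hX : IsConfig X) (hins : IsConfig (insert w X)) (hw : w ∉ X) :
    (RepEdges E (insert w X)).ncard ≤ (RepEdges E X).ncard := by
  have hND : (Nset E X w).ncard ≤ (Dset E X w).ncard := by
    apply Set.ncard_le_ncard_of_injOn (dlt E X w)
    · intro e hee
      exact (dlt_shape hX hins hw hee).1
    · intro e hee e' hee' h
      exact dlt_inj hX hins hw hee hee' h
  have h1 := ncard_sub_eq (RepEdges E X) (RepEdges E (insert w X))
  unfold Nset Dset at hND
  omega

end S10

namespace S10
variable {V : Type*} [Fintype V] [DecidableEq V]

/-! ### growth within a configuration -/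

def FeasL (E : Set (V × V)) (Y : Finset (Finset V)) (m n : Finset V) : Set (Finset V) :=
  {b | b ∈ Y ∧ n ⊆ b ∧ b ∩ m = ∅ ∧ ∀ u ∈ m, ∀ v ∈ b, (u, v) ∈ E}

open Classical in
noncomputable def upL (E : Set (V × V)) (Y : Finset (Finset V)) (m n : Finset V) : Finset V :=
  if h : ∃ b ∈ FeasL E Y m n, ∀ b' ∈ FeasL E Y m n, b' ⊆ b then h.choose else n

lemma upL_spec {E : Set (V × V)} {Y : Finset (Finset V)} {m n : Finset V}
    (hY : IsConfig Y) (hn : n ∈ FeasL E Y m n) (hnne : n.Nonempty) :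
    upL E Y m n ∈ FeasL E Y m n ∧ ∀ b ∈ FeasL E Y m n, b ⊆ upL E Y m n := by
  classical
  have hex : ∃ b ∈ FeasL E Y m n, ∀ b' ∈ FeasL E Y m n, b' ⊆ b := by
    obtain ⟨b, hb, hmax⟩ := Set.Finite.exists_maximalFor (fun s : Finset V => s.card)
      (FeasL E Y m n) (Set.toFinite _) ⟨n, hn⟩
    refine ⟨b, hb, fun b' hb' => ?_⟩
    obtain ⟨x, hx⟩ := hnne
    have hnest := cfgNest hY hb'.1 hb.1
      ⟨x, Finset.mem_inter.2 ⟨hb'.2.1 hx, hb.2.1 hx⟩⟩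
    rcases hnest with h | h
    · exact h
    · have hcard : b'.card ≤ b.card := by
        have := hmax hb' (Finset.card_le_card h)
        omega
      have heq : b = b' := Finset.eq_of_subset_of_card_le h hcard
      rw [← heq]
  rw [upL, dif_pos hex]
  obtain ⟨h1, h2⟩ := hex.choose_spec
  exact ⟨h1, h2⟩

open Classical in
noncomputable def upE (E : Set (V × V)) (Y : Finset (Finset V)) (m : Finset V)
    (e : Finset V × Finset V) : Finset V × Finset V :=
  if e.1 = m then (if e.2 = m then e else (m, upL E Y m e.2))
  else (upL (flipE E) Y m e.1, m)

lemma upE_L {E : Set (V × V)} {Y : Finset (Finset V)} {m : Finset V} {e}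
    (h1 : e.1 = m) (h2 : e.2 ≠ m) : upE E Y m e = (m, upL E Y m e.2) := by
  rw [upE, if_pos h1, if_neg h2]

lemma upE_R {E : Set (V × V)} {Y : Finset (Finset V)} {m : Finset V} {e}
    (h1 : e.1 ≠ m) : upE E Y m e = (upL (flipE E) Y m e.1, m) := by
  rw [upE, if_neg h1]

lemma upE_D {E : Set (V × V)} {Y : Finset (Finset V)} {m : Finset V} {e}
    (h1 : e.1 = m) (h2 : e.2 = m) : upE E Y m e = e := by
  rw [upE, if_pos h1, if_pos h2]

lemma upE_swap {E : Set (V × V)} {Y : Finset (Finset V)} {m : Finset V} {e}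
    (h : e.1 = m ∨ e.2 = m) :
    upE (flipE E) Y m e.swap = (upE E Y m e).swap := by
  by_cases h1 : e.1 = m <;> by_cases h2 : e.2 = m
  · rw [upE_D h1 h2, upE_D (show e.swap.1 = m from h2) (show e.swap.2 = m from h1)]
  · rw [upE_L h1 h2, upE_R (show e.swap.1 ≠ m from h2)]
    rw [flipE_flipE]
    rfl
  · rw [upE_R h1, upE_L (show e.swap.1 = m from h2) (show e.swap.2 ≠ m from h1)]
    rfl
  · rcases h with h | h
    · exact absurd h h1
    · exact absurd h h2

end S10

namespace S10
variable {V : Type*} [Fintype V] [DecidableEq V]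

lemma NformL {E : Set (V × V)} {C : Finset (Finset V)} {m : Finset V}
    (hm : m ∉ C) {e} (he : e ∈ Nset E C m) (h2 : e.2 ≠ m) :
    e.1 = m ∧ e.2 ∈ C ∧ e.2 ∩ m = ∅ := by
  rcases Nset_form hm he with ⟨x1, x2, x3, x4⟩ | ⟨x1, x2, x3, x4⟩ | x1
  · exact ⟨x1, x3, x4⟩
  · exact absurd x1 h2
  · exact absurd (congrArg Prod.snd x1) h2

section StepCtx

variable {E : Set (V × V)} {C : Finset (Finset V)} {a m : Finset V}

/-- packaged context for the one-step lemma. -/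
structure Ctx (C : Finset (Finset V)) (a m : Finset V) : Prop where
  hC : IsConfig C
  hCam : IsConfig (insert m (insert a C))
  ha : a ∉ C
  hm : m ∉ C
  hnea : a ≠ m
  hrel : a ∩ m = ∅ ∨ a ⊆ m

namespace Ctx

lemma hCa (ctx : Ctx C a m) : IsConfig (insert a C) :=
  config_subset ctx.hCam (Finset.subset_insert _ _)
    (fun v => Finset.mem_insert_of_mem (ctx.hC.2.1 v))

lemma hCm (ctx : Ctx C a m) : IsConfig (insert m C) :=
  config_subset ctx.hCam (Finset.insert_subset_insert m (Finset.subset_insert a C))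
    (fun v => Finset.mem_insert_of_mem (ctx.hC.2.1 v))

lemma hmY (ctx : Ctx C a m) : m ∉ insert a C := by
  rw [Finset.mem_insert]
  rintro (h | h)
  · exact ctx.hnea h.symm
  · exact ctx.hm h

lemma hmne (ctx : Ctx C a m) : m.Nonempty := cfgNonempty ctx.hCam (Finset.mem_insert_self m _)

lemma hane (ctx : Ctx C a m) : a.Nonempty :=
  cfgNonempty ctx.hCam (Finset.mem_insert_of_mem (Finset.mem_insert_self a C))

/-- the context is symmetric in `E`. -/
lemma base_subset (ctx : Ctx C a m) : insert m C ⊆ insert m (insert a C) :=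
  Finset.insert_subset_insert m (Finset.subset_insert a C)

end Ctx

/-- basic facts about a type-L element of `Nset E C m`, in the step context. -/
lemma feasL_of_N (ctx : Ctx C a m) {e} (he : e ∈ Nset E C m) (h2 : e.2 ≠ m) :
    e.2 ∈ FeasL E (insert a C) m e.2 := by
  obtain ⟨h1, hn, hnm⟩ := NformL ctx.hm he h2
  exact ⟨Finset.mem_insert_of_mem hn, Finset.Subset.refl _, hnm,
    fun u hu v hv => he.1.1.2.2.1 u (by rw [h1]; exact hu) v hv⟩

lemma upN_spec (ctx : Ctx C a m) {e} (he : e ∈ Nset E C m) (h2 : e.2 ≠ m) :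
    upL E (insert a C) m e.2 ∈ FeasL E (insert a C) m e.2 ∧
      ∀ b ∈ FeasL E (insert a C) m e.2, b ⊆ upL E (insert a C) m e.2 :=
  upL_spec ctx.hCa (feasL_of_N ctx he h2)
    (cfgNonempty ctx.hC (NformL ctx.hm he h2).2.1)

lemma up_possL (ctx : Ctx C a m) {e} (he : e ∈ Nset E C m) (h2 : e.2 ≠ m) :
    PossEdge E (insert m (insert a C)) (upE E (insert a C) m e) := by
  obtain ⟨h1, hn, hnm⟩ := NformL ctx.hm he h2
  have hup := upN_spec ctx he h2
  rw [upE_L h1 h2]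
  exact ⟨Finset.mem_insert_self m _, Finset.mem_insert_of_mem hup.1.1,
    hup.1.2.2.2, Or.inr (by rw [Finset.inter_comm]; exact hup.1.2.2.1)⟩

lemma up_touch {E : Set (V × V)} {Y : Finset (Finset V)} {m : Finset V} {e : Finset V × Finset V}
    (h : e.1 = m ∨ e.2 = m) :
    (upE E Y m e).1 = m ∨ (upE E Y m e).2 = m := by
  by_cases h1 : e.1 = m <;> by_cases h2 : e.2 = m
  · rw [upE_D h1 h2]; exact Or.inl h1
  · rw [upE_L h1 h2]; exact Or.inl rfl
  · rw [upE_R h1]; exact Or.inr rfl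
  · rcases h with h | h
    · exact absurd h h1
    · exact absurd h h2

/-- dominators of `upE e` (type L) are of the form `(q1, a)` with `m ⊆ q1 ∈ C`. -/
lemma domL (ctx : Ctx C a m) {e} (he : e ∈ Nset E C m) (h2 : e.2 ≠ m) {q}
    (hq : PossEdge E (insert m (insert a C)) q) (hne : q ≠ upE E (insert a C) m e)
    (hs1 : (upE E (insert a C) m e).1 ⊆ q.1) (hs2 : (upE E (insert a C) m e).2 ⊆ q.2) :
    q.1 ∈ C ∧ m ⊆ q.1 ∧ q.2 = a ∧ (upE E (insert a C) m e).2 ⊆ a := by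
  obtain ⟨h1, hn, hnm⟩ := NformL ctx.hm he h2
  have hnne : e.2.Nonempty := cfgNonempty ctx.hC hn
  have hmne := ctx.hmne
  have hup := upN_spec ctx he h2
  have hupE : upE E (insert a C) m e = (m, upL E (insert a C) m e.2) := upE_L h1 h2
  set nup := upL E (insert a C) m e.2 with hnupdef
  rw [hupE] at hs1 hs2 hne
  obtain ⟨q1, q2⟩ := q
  simp only at hs1 hs2 ⊢
  have hnupne : nup.Nonempty := hnne.mono hup.1.2.1
  -- q2 = m is impossible
  have hq2nm : q2 ≠ m := by
    intro hq2m
    have hsub : nup ⊆ m := by rw [← hq2m]; exact hs2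
    obtain ⟨x, hx⟩ := hnupne
    have hxm : x ∈ nup ∩ m := Finset.mem_inter.2 ⟨hx, hsub hx⟩
    rw [hup.1.2.2.1] at hxm
    exact absurd hxm (Finset.notMem_empty x)
  have hq1 : q1 ∈ C := by
    rcases Finset.mem_insert.1 hq.1 with hq1m | hq1'
    · -- q1 = m
      exfalso
      have hq2' : q2 ∈ insert a C := (Finset.mem_insert.1 hq.2.1).resolve_left hq2nm
      have hq2feas : q2 ∈ FeasL E (insert a C) m e.2 := by
        refine ⟨hq2', hup.1.2.1.trans hs2, ?_, ?_⟩
        · rcases hq.2.2.2 with hc | hc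
          · exact absurd (hc.symm.trans hq1m) hq2nm
          · rw [Finset.inter_comm, ← hq1m]; exact hc
        · intro u hu v hv
          exact hq.2.2.1 u (by rw [hq1m]; exact hu) v hv
      exact hne (Prod.ext hq1m (Finset.Subset.antisymm (hup.2 q2 hq2feas) hs2))
    · rcases Finset.mem_insert.1 hq1' with hq1a | hq1C
      · exfalso
        have hma : m ⊆ a := by rw [← hq1a]; exact hs1
        rcases ctx.hrel with hd | hsub
        · obtain ⟨x, hx⟩ := hmne
          have hxa : x ∈ a ∩ m := Finset.mem_inter.2 ⟨hma hx, hx⟩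
          rw [hd] at hxa
          exact absurd hxa (Finset.notMem_empty x)
        · exact ctx.hnea (Finset.Subset.antisymm hsub hma)
      · exact hq1C
  have hq2a : q2 = a := by
    rcases Finset.mem_insert.1 hq.2.1 with hq2m | hq2'
    · exact absurd hq2m hq2nm
    · rcases Finset.mem_insert.1 hq2' with hq2a | hq2C
      · exact hq2a
      · exfalso
        have hposs : PossEdge E (insert m C) (q1, q2) :=
          ⟨Finset.mem_insert_of_mem hq1, Finset.mem_insert_of_mem hq2C, hq.2.2.1, hq.2.2.2⟩
        apply he.1.2
        refine ⟨(q1, q2), hposs, ?_, ?_, ?_⟩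
        · intro hcc
          have hq1e : q1 = e.1 := congrArg Prod.fst hcc
          rw [h1] at hq1e
          exact ctx.hm (hq1e ▸ hq1)
        · rw [h1]; exact hs1
        · exact (hup.1.2.1).trans hs2
  exact ⟨hq1, hs1, hq2a, by rw [hupE]; exact hq2a ▸ hs2⟩

/-- if two distinct elements of `Nset` have the same lift, the lift's free component is `a`. -/
lemma fiberL (ctx : Ctx C a m) {e e'} (he : e ∈ Nset E C m) (he' : e' ∈ Nset E C m)
    (hnee : e' ≠ e) (hu : upE E (insert a C) m e' = upE E (insert a C) m e)
    (h2 : e.2 ≠ m) :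
    (upE E (insert a C) m e).2 = a ∧ e'.2 ≠ m ∧ a ∩ m = ∅ := by
  obtain ⟨h1, hn, hnm⟩ := NformL ctx.hm he h2
  have hup := upN_spec ctx he h2
  have hupE : upE E (insert a C) m e = (m, upL E (insert a C) m e.2) := upE_L h1 h2
  set nup := upL E (insert a C) m e.2 with hnupdef
  -- e' is also of type L
  have h2' : e'.2 ≠ m := by
    intro hc
    by_cases h1' : e'.1 = m
    · -- e' diagonal : upE e' = e' = (m, m), so nup = m, impossible
      rw [upE_D h1' hc, hupE] at hu
      have : e'.2 = nup := congrArg Prod.snd hu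
      rw [hc] at this
      obtain ⟨x, hx⟩ := cfgNonempty ctx.hC hn
      have hxnup : x ∈ nup := hup.1.2.1 hx
      have : x ∈ nup ∩ m := Finset.mem_inter.2 ⟨hxnup, by rw [this]; exact hxnup⟩
      rw [hup.1.2.2.1] at this
      exact absurd this (Finset.notMem_empty x)
    · -- e' type R : upE e' = (_, m), but (upE e).2 = nup with nup ∩ m = ∅
      rw [upE_R h1', hupE] at hu
      have hnm2 : m = nup := congrArg Prod.snd hu
      obtain ⟨x, hx⟩ := cfgNonempty ctx.hC hn
      have hxnup : x ∈ nup := hup.1.2.1 hx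
      have : x ∈ nup ∩ m := Finset.mem_inter.2 ⟨hxnup, by rw [hnm2]; exact hxnup⟩
      rw [hup.1.2.2.1] at this
      exact absurd this (Finset.notMem_empty x)
  obtain ⟨h1', hn', hnm'⟩ := NformL ctx.hm he' h2'
  have hup' := upN_spec ctx he' h2'
  have hupE' : upE E (insert a C) m e' = (m, upL E (insert a C) m e'.2) := upE_L h1' h2'
  set nup' := upL E (insert a C) m e'.2 with hnupdef'
  have hnn : nup' = nup := by
    have := congrArg Prod.snd (hupE' ▸ hupE ▸ hu)
    exact this
  have hna : nup = a := by
    -- suppose nup ∈ C, derive e = e'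
    by_contra hnupa
    have hnupC : nup ∈ C := by
      rcases Finset.mem_insert.1 hup.1.1 with h | h
      · exact absurd h hnupa
      · exact h
    have hposs : PossEdge E (insert m C) (m, nup) :=
      ⟨Finset.mem_insert_self m _, Finset.mem_insert_of_mem hnupC, hup.1.2.2.2,
        Or.inr (by rw [Finset.inter_comm]; exact hup.1.2.2.1)⟩
    have heq : (m, nup) = e := rep_max he.1 hposs (by rw [h1]) hup.1.2.1
    have heq' : (m, nup) = e' := by
      rw [← hnn] at hposs ⊢
      exact rep_max he'.1 hposs (by rw [h1']) hup'.1.2.1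
    exact hnee (heq'.symm.trans heq)
  refine ⟨by rw [hupE]; exact hna, h2', by rw [← hna]; exact hup.1.2.2.1⟩

/-- the lift of the diagonal element is itself, and it stays representative. -/
lemma upD_rep (ctx : Ctx C a m) {e} (he : e ∈ Nset E C m) (h1 : e.1 = m) (h2 : e.2 = m) :
    upE E (insert a C) m e ∈ RepEdges E (insert m (insert a C)) := by
  rw [upE_D h1 h2]
  have hposs : PossEdge E (insert m (insert a C)) e :=
    possEdge_mono ctx.base_subset he.1.1
  refine ⟨hposs, ?_⟩
  rintro ⟨⟨q1, q2⟩, hq, hne, hs1, hs2⟩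
  rw [h1] at hs1
  rw [h2] at hs2
  obtain ⟨x, hx⟩ := ctx.hmne
  have hq12 : q1 = q2 := by
    rcases hq.2.2.2 with hc | hc
    · exact hc
    · exfalso
      have : x ∈ q1 ∩ q2 := Finset.mem_inter.2 ⟨hs1 hx, hs2 hx⟩
      rw [hc] at this
      exact absurd this (Finset.notMem_empty x)
  rcases Finset.mem_insert.1 hq.1 with hq1m | hq1'
  · exact hne (Prod.ext (hq1m.trans h1.symm) ((hq12.symm.trans hq1m).trans h2.symm))
  rcases Finset.mem_insert.1 hq1' with hq1a | hq1C
  · -- q1 = a, m ⊆ a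
    have hma : m ⊆ a := by rw [← hq1a]; exact hs1
    rcases ctx.hrel with hd | hsub
    · have hxa : x ∈ a ∩ m := Finset.mem_inter.2 ⟨hma hx, hx⟩
      rw [hd] at hxa
      exact absurd hxa (Finset.notMem_empty x)
    · exact ctx.hnea (Finset.Subset.antisymm hsub hma)
  · -- q1 ∈ C : dominates e in insert m C
    apply he.1.2
    have hq2C : q2 ∈ C := by rw [← hq12]; exact hq1C
    refine ⟨(q1, q2), ⟨Finset.mem_insert_of_mem hq1C, Finset.mem_insert_of_mem hq2C,
      hq.2.2.1, hq.2.2.2⟩, ?_, by rw [h1]; exact hs1, by rw [h2]; exact hs2⟩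
    intro hcc
    have hq1e : q1 = e.1 := congrArg Prod.fst hcc
    rw [h1] at hq1e
    exact ctx.hm (hq1e ▸ hq1C)

/-- nothing else lifts to the diagonal. -/
lemma fiberD (ctx : Ctx C a m) {e e'} (he' : e' ∈ Nset E C m)
    (h1 : e.1 = m) (h2 : e.2 = m)
    (hu : upE E (insert a C) m e' = upE E (insert a C) m e) : e' = e := by
  rw [upE_D h1 h2] at hu
  by_cases h2' : e'.2 = m
  · by_cases h1' : e'.1 = m
    · rw [upE_D h1' h2'] at hu
      exact hu
    · exfalso
      obtain ⟨hh1, hn', hnm'⟩ := NformL (E := flipE E) ctx.hm (Nset_flip.2 he') (show e'.swap.2 ≠ m from h1')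
      rw [upE_R h1'] at hu
      have hv : upL (flipE E) (insert a C) m e'.1 = e.1 := congrArg Prod.fst hu
      have hup' := upL_spec ctx.hCa
        (show e'.1 ∈ FeasL (flipE E) (insert a C) m e'.1 from
          ⟨Finset.mem_insert_of_mem hn', Finset.Subset.refl _, hnm',
            fun u hu' v hv' => by
              have := he'.1.1.2.2.1 v hv' u (by rw [h2']; exact hu')
              exact this⟩)
        (cfgNonempty ctx.hC hn')
      obtain ⟨x, hx⟩ := cfgNonempty ctx.hC hn'
      have hxup : x ∈ upL (flipE E) (insert a C) m e'.1 := hup'.1.2.1 hx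
      have hxx : x ∈ upL (flipE E) (insert a C) m e'.1 ∩ m :=
        Finset.mem_inter.2 ⟨hxup, by rw [← h1, ← hv]; exact hxup⟩
      rw [hup'.1.2.2.1] at hxx
      exact absurd hxx (Finset.notMem_empty x)
  · exfalso
    obtain ⟨h1', hn', hnm'⟩ := NformL ctx.hm he' h2'
    rw [upE_L h1' h2'] at hu
    have hv : upL E (insert a C) m e'.2 = e.2 := congrArg Prod.snd hu
    have hup' := upN_spec ctx he' h2'
    obtain ⟨x, hx⟩ := cfgNonempty ctx.hC hn'
    have hxup : x ∈ upL E (insert a C) m e'.2 := hup'.1.2.1 hx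
    have hxx : x ∈ upL E (insert a C) m e'.2 ∩ m :=
      Finset.mem_inter.2 ⟨hxup, by rw [← h2, ← hv]; exact hxup⟩
    rw [hup'.1.2.2.1] at hxx
    exact absurd hxx (Finset.notMem_empty x)

end StepCtx
end S10

namespace S10
variable {V : Type*} [Fintype V] [DecidableEq V]
variable {E : Set (V × V)} {C : Finset (Finset V)} {a m : Finset V}

lemma dlt_swap {E : Set (V × V)} {X : Finset (Finset V)} {w : Finset V} {e}
    (h : e.1 = w ∨ e.2 = w) (hnd : ¬(e.1 = w ∧ e.2 = w)) :
    dlt (flipE E) X w e.swap = (dlt E X w e).swap := by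
  by_cases h1 : e.1 = w <;> by_cases h2 : e.2 = w
  · exact absurd ⟨h1, h2⟩ hnd
  · rw [dlt_L h1 h2, dlt_R (show e.swap.1 ≠ w from h2), flipE_flipE, Prod.fst_swap]
  · rw [dlt_R h1, dlt_L (show e.swap.1 = w from h2) (show e.swap.2 ≠ w from h1),
      Prod.swap_swap, Prod.snd_swap]
  · rcases h with h | h
    · exact absurd h h1
    · exact absurd h h2

lemma dlt_shape_L {E : Set (V × V)} {X : Finset (Finset V)} {w : Finset V}
    (hX : IsConfig X) (hins : IsConfig (insert w X)) (hw : w ∉ X)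
    {e} (he : e ∈ Nset E X w) (h2 : e.2 ≠ w) :
    dlt E X w e ∈ Dset E X w ∧ (dlt E X w e).1 ∈ GoodL E X w e.2 ∧
      (dlt E X w e).2 = e.2 := by
  have h := dlt_shape hX hins hw he
  rcases h.2 with ⟨_, _, _, h4, _, _, h7⟩ | ⟨hb1, _⟩ | ⟨hd, _⟩
  · exact ⟨h.1, h7, h4⟩
  · exact absurd hb1 h2
  · exact absurd (congrArg Prod.snd hd) h2

/-! ### KEY1 : δ-routed elements do not survive in `R(insert a C)` -/

lemma KEY1L (ctx : Ctx C a m) {e} (he : e ∈ Nset E C m) (h2 : e.2 ≠ m)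
    (hyp : upE E (insert a C) m e ∉ RepEdges E (insert m (insert a C)) ∨
      ∃ e' ∈ Nset E C m, e' ≠ e ∧ upE E (insert a C) m e' = upE E (insert a C) m e) :
    dlt E C m e ∉ RepEdges E (insert a C) := by
  obtain ⟨h1, hn, hnm⟩ := NformL ctx.hm he h2
  have hup := upN_spec ctx he h2
  have hsL := dlt_shape_L ctx.hC ctx.hCm ctx.hm he h2
  have hα : IsPiece C m (dlt E C m e).1 := hsL.2.1.1
  rcases hyp with hyp1 | ⟨e', he', hnee, hu⟩
  · have hdom : Dominated E (insert m (insert a C)) (upE E (insert a C) m e) := by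
      by_contra hc
      exact hyp1 ⟨up_possL ctx he h2, hc⟩
    obtain ⟨q, hq, hne, hs1, hs2⟩ := hdom
    obtain ⟨hq1C, hmq1, hq2a, hsa⟩ := domL ctx he h2 hq hne hs1 hs2
    apply not_rep_of_dom (q := (q.1, a))
      ⟨Finset.mem_insert_of_mem hq1C, Finset.mem_insert_self a C, ?_, ?_⟩ ?_ ?_ ?_
    · intro u hu' v hv
      exact hq.2.2.1 u hu' v (by rw [hq2a]; exact hv)
    · rcases hq.2.2.2 with hc | hc
      · exfalso
        have hq1a : q.1 = a := hc.trans hq2a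
        exact ctx.ha (hq1a ▸ hq1C)
      · exact Or.inr (by rw [← hq2a]; exact hc)
    · intro hcc
      have hc1 : q.1 = (dlt E C m e).1 := by rw [← hcc]
      have hqm : q.1 = m := Finset.Subset.antisymm (by rw [hc1]; exact hα.2.1) hmq1
      exact ctx.hm (hqm ▸ hq1C)
    · exact hα.2.1.trans hmq1
    · rw [hsL.2.2]
      have hsub : e.2 ⊆ (upE E (insert a C) m e).2 := by
        rw [upE_L h1 h2]
        exact hup.1.2.1
      exact hsub.trans hsa
  · obtain ⟨hfa, h2', hdisj⟩ := fiberL ctx he he' hnee hu h2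
    have hnupa : upL E (insert a C) m e.2 = a := by
      rw [upE_L h1 h2] at hfa
      exact hfa
    have hafeas : a ∈ FeasL E (insert a C) m e.2 := by
      have h9 := hup.1
      rw [hnupa] at h9
      exact h9
    apply not_rep_of_dom (q := ((dlt E C m e).1, a))
      ⟨Finset.mem_insert_of_mem hα.1, Finset.mem_insert_self a C, ?_, ?_⟩ ?_ ?_ ?_
    · intro u hu' v hv
      exact hafeas.2.2.2 u (hα.2.1 hu') v hv
    · refine Or.inr ?_
      rw [← Finset.subset_empty, ← hdisj]
      intro x hx
      rw [Finset.mem_inter] at hx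
      exact Finset.mem_inter.2 ⟨hx.2, hα.2.1 hx.1⟩
    · intro hcc
      have hae : a = (dlt E C m e).2 := by rw [← hcc]
      rw [hsL.2.2] at hae
      exact ctx.ha (hae ▸ hn)
    · exact Finset.Subset.refl _
    · rw [hsL.2.2]
      exact hafeas.2.1

lemma KEY1 (ctx : Ctx C a m) {e} (he : e ∈ Nset E C m)
    (hyp : upE E (insert a C) m e ∉ RepEdges E (insert m (insert a C)) ∨
      ∃ e' ∈ Nset E C m, e' ≠ e ∧ upE E (insert a C) m e' = upE E (insert a C) m e) :
    dlt E C m e ∉ RepEdges E (insert a C) := by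
  by_cases h2 : e.2 = m
  · by_cases h1 : e.1 = m
    · exfalso
      rcases hyp with hyp1 | ⟨e', he', hnee, hu⟩
      · exact hyp1 (upD_rep ctx he h1 h2)
      · exact hnee (fiberD ctx he' h1 h2 hu)
    · -- type R : flip
      have hsw : e.swap ∈ Nset (flipE E) C m := Nset_flip.2 he
      have hyp' : upE (flipE E) (insert a C) m e.swap ∉
            RepEdges (flipE E) (insert m (insert a C)) ∨
          ∃ e'' ∈ Nset (flipE E) C m, e'' ≠ e.swap ∧
            upE (flipE E) (insert a C) m e'' = upE (flipE E) (insert a C) m e.swap := by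
        rcases hyp with hyp1 | ⟨e', he', hnee, hu⟩
        · left
          rw [upE_swap (Or.inr h2)]
          intro hc
          exact hyp1 (rep_flip.1 hc)
        · right
          refine ⟨e'.swap, Nset_flip.2 he', ?_, ?_⟩
          · intro hc
            apply hnee
            have hc2 := congrArg Prod.swap hc
            rwa [Prod.swap_swap, Prod.swap_swap] at hc2
          · rw [upE_swap (Nset_touch ctx.hm he'), upE_swap (Or.inr h2), hu]
      have hres := KEY1L (E := flipE E) ctx hsw (show e.swap.2 ≠ m from h1) hyp'
      intro hc
      apply hres
      rw [dlt_swap (Or.inr h2) (fun hb => h1 hb.1)]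
      exact rep_flip.2 hc
  · exact KEY1L ctx he h2 hyp

/-! ### the collision predicate -/

def CP (E : Set (V × V)) (C : Finset (Finset V)) (a m : Finset V)
    (e : Finset V × Finset V) : Prop :=
  ∃ p ∈ Dset E (insert a C) m, (p.1 = a ∨ p.2 = a) ∧ dlt E C a p = dlt E C m e

lemma DtoNa (ctx : Ctx C a m) {p} (hp : p ∈ Dset E (insert a C) m)
    (ht : p.1 = a ∨ p.2 = a) : p ∈ Nset E C a := by
  refine ⟨hp.1, ?_⟩
  intro hc
  rcases ht with h | h
  · exact ctx.ha (h ▸ hc.1.1)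
  · exact ctx.ha (h ▸ hc.1.2.1)

lemma CP_patternL (ctx : Ctx C a m) (hdisj : a ∩ m = ∅) {e} (he : e ∈ Nset E C m)
    (h2 : e.2 ≠ m) {p} (hp : p ∈ Dset E (insert a C) m) (ht : p.1 = a ∨ p.2 = a)
    (heq : dlt E C a p = dlt E C m e) :
    p = ((dlt E C m e).1, a) ∧ IsPiece C a e.2 := by
  have hpN := DtoNa ctx hp ht
  have hshape := dlt_shape ctx.hC ctx.hCa ctx.ha hpN
  have hsL := dlt_shape_L ctx.hC ctx.hCm ctx.hm he h2
  have hα : IsPiece C m (dlt E C m e).1 := hsL.2.1.1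
  have hαne : (dlt E C m e).1.Nonempty := cfgNonempty ctx.hC hα.1
  have hcontra : (dlt E C a p).1 ⊆ a → False := by
    intro hsub
    obtain ⟨x, hx⟩ := hαne
    have hx2 : x ∈ (dlt E C a p).1 := by rw [heq]; exact hx
    have hxa : x ∈ a ∩ m := Finset.mem_inter.2 ⟨hsub hx2, hα.2.1 hx⟩
    rw [hdisj] at hxa
    exact absurd hxa (Finset.notMem_empty x)
  rcases hshape.2 with ⟨b1, b2, b3, b4, b5, b6, b7⟩ | ⟨b1, b2, b3, b4, b5, b6, b7⟩ |
    ⟨b1, b3, b4⟩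
  · exact absurd b3 (fun h => hcontra h)
  · refine ⟨Prod.ext ?_ b1, ?_⟩
    · rw [← heq, b4]
    · have hsnd : (dlt E C a p).2 = e.2 := by rw [heq, hsL.2.2]
      rw [← hsnd]
      exact b7.1
  · exact absurd b3 (fun h => hcontra h)

lemma CP_core (ctx : Ctx C a m) {α n' : Finset V}
    (hαp : IsPiece C m α) (hpR : (α, a) ∈ RepEdges E (insert a C))
    (hn' : n' ∈ C) (hpiece' : IsPiece C a n')
    (hbad : ∃ b ∈ C, n' ⊆ b ∧ b ≠ n' ∧ PossEdge E C (α, b)) : False := by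
  obtain ⟨b, hb, hn'b, hbn', hposs⟩ := hbad
  have hn'ne : n'.Nonempty := cfgNonempty ctx.hC hn'
  obtain ⟨x, hx⟩ := hn'ne
  have hnest := cfgNest ctx.hCa (Finset.mem_insert_of_mem hb) (Finset.mem_insert_self a C)
    ⟨x, Finset.mem_inter.2 ⟨hn'b hx, hpiece'.2.1 hx⟩⟩
  rcases hnest with hba | hab
  · exact hbn' (hpiece'.2.2 b hb hn'b hba)
  · apply hpR.2
    refine ⟨(α, b), possEdge_mono (Finset.subset_insert a C) hposs, ?_,
      Finset.Subset.refl α, hab⟩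
    intro hcc
    have hba : b = a := congrArg Prod.snd hcc
    exact ctx.ha (hba ▸ hb)

lemma CP_uniqueL (ctx : Ctx C a m) {e' e} (he' : e' ∈ Nset E C m) (he : e ∈ Nset E C m)
    (h2' : e'.2 ≠ m) (h2 : e.2 ≠ m) (hdisj : a ∩ m = ∅)
    (hcp' : CP E C a m e') (hcp : CP E C a m e) : e' = e := by
  obtain ⟨p, hp, ht, heq⟩ := hcp
  obtain ⟨p', hp', ht', heq'⟩ := hcp'
  have hpat := CP_patternL ctx hdisj he h2 hp ht heq
  have hpat' := CP_patternL ctx hdisj he' h2' hp' ht' heq'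
  by_cases hαα : (dlt E C m e').1 = (dlt E C m e).1
  · have hpp : p' = p := by rw [hpat.1, hpat'.1, hαα]
    have hdd : dlt E C m e' = dlt E C m e := by rw [← heq, ← heq', hpp]
    exact dlt_inj ctx.hC ctx.hCm ctx.hm he' he hdd
  · exfalso
    have hsL := dlt_shape_L ctx.hC ctx.hCm ctx.hm he h2
    have hsL' := dlt_shape_L ctx.hC ctx.hCm ctx.hm he' h2'
    obtain ⟨h1, hn, hnm⟩ := NformL ctx.hm he h2
    obtain ⟨h1', hn', hnm'⟩ := NformL ctx.hm he' h2'
    have hem : (m, e.2) ∈ RepEdges E (insert m C) := by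
      rw [show ((m : Finset V), e.2) = e from Prod.ext h1.symm rfl]
      exact he.1
    have hem' : (m, e'.2) ∈ RepEdges E (insert m C) := by
      rw [show ((m : Finset V), e'.2) = e' from Prod.ext h1'.symm rfl]
      exact he'.1
    have hGne : (GoodL E C m e.2).Nonempty := goodL_nonempty ctx.hC ctx.hCm ctx.hm hn hem
    have hGne' : (GoodL E C m e'.2).Nonempty :=
      goodL_nonempty ctx.hC ctx.hCm ctx.hm hn' hem'
    have hαval : (dlt E C m e).1 = wminS (GoodL E C m e.2) := by
      rw [dlt_L h1 h2]
      rfl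
    have hα'val : (dlt E C m e').1 = wminS (GoodL E C m e'.2) := by
      rw [dlt_L h1' h2']
      rfl
    have hpRep : ((dlt E C m e).1, a) ∈ RepEdges E (insert a C) := by
      rw [← hpat.1]
      exact hp.1
    have hpRep' : ((dlt E C m e').1, a) ∈ RepEdges E (insert a C) := by
      rw [← hpat'.1]
      exact hp'.1
    have hwit : ∀ {β n2 : Finset V}, β ∉ GoodL E C m n2 → IsPiece C m β →
        (m, n2) ∈ RepEdges E (insert m C) →
        ∃ b ∈ C, n2 ⊆ b ∧ b ≠ n2 ∧ PossEdge E C (β, b) := by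
      intro β n2 hng hβ _
      by_contra hcc
      push_neg at hcc
      exact hng ⟨hβ, fun b hb hsub hne hposs => hcc b hb hsub hne hposs⟩
    rcases trichotomous_of WellOrderingRel (dlt E C m e).1 (dlt E C m e').1 with
      hlt | heqq | hgt
    · have hnotg : (dlt E C m e).1 ∉ GoodL E C m e'.2 := fun hmem =>
        wminS_not_lt hGne' hmem (hα'val ▸ hlt)
      exact CP_core ctx hsL.2.1.1 hpRep hn' hpat'.2
        (hwit hnotg hsL.2.1.1 hem')
    · exact hαα heqq.symm
    · have hnotg : (dlt E C m e').1 ∉ GoodL E C m e.2 := fun hmem =>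
        wminS_not_lt hGne hmem (hαval ▸ hgt)
      exact CP_core ctx hsL'.2.1.1 hpRep' hn hpat.2
        (hwit hnotg hsL'.2.1.1 hem)

lemma CP_swap (ctx : Ctx C a m) (hdisj : a ∩ m = ∅) {e} (he : e ∈ Nset E C m)
    (hnd : ¬(e.1 = m ∧ e.2 = m)) (hcp : CP E C a m e) :
    CP (flipE E) C a m e.swap := by
  obtain ⟨p, hp, ht, heq⟩ := hcp
  have hpN := DtoNa ctx hp ht
  -- p is not the diagonal (a, a)
  have hpnd : ¬(p.1 = a ∧ p.2 = a) := by
    rintro ⟨hp1, hp2⟩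
    have hsh := dlt_shape ctx.hC ctx.hCa ctx.ha hpN
    have hshm := dlt_shape ctx.hC ctx.hCm ctx.hm he
    -- in the diagonal case both components of dlt_a p are ⊆ a
    have hsub : (dlt E C a p).1 ⊆ a ∧ (dlt E C a p).2 ⊆ a := by
      rcases hsh.2 with ⟨b1, b2, _⟩ | ⟨b1, b2, _⟩ | ⟨b1, b3, b4⟩
      · exact absurd hp2 b2
      · exact absurd hp1 b2
      · exact ⟨b3, b4⟩
    -- but some component of dlt_m e is a nonempty subset of m
    have hone : ((dlt E C m e).1 ⊆ m ∧ (dlt E C m e).1.Nonempty) ∨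
        ((dlt E C m e).2 ⊆ m ∧ (dlt E C m e).2.Nonempty) := by
      have hrep : dlt E C m e ∈ RepEdges E C := hshm.1.1
      rcases hshm.2 with ⟨c1, c2, c3, _⟩ | ⟨c1, c2, c3, _⟩ | ⟨c1, c3, c4⟩
      · exact Or.inl ⟨c3, cfgNonempty ctx.hC hrep.1.1⟩
      · exact Or.inr ⟨c3, cfgNonempty ctx.hC hrep.1.2.1⟩
      · exact Or.inl ⟨c3, cfgNonempty ctx.hC hrep.1.1⟩
    rcases hone with ⟨hsm, ⟨x, hx⟩⟩ | ⟨hsm, ⟨x, hx⟩⟩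
    · have hxa : x ∈ a ∩ m := Finset.mem_inter.2
        ⟨by rw [← heq] at hx; exact hsub.1 hx, hsm hx⟩
      rw [hdisj] at hxa
      exact absurd hxa (Finset.notMem_empty x)
    · have hxa : x ∈ a ∩ m := Finset.mem_inter.2
        ⟨by rw [← heq] at hx; exact hsub.2 hx, hsm hx⟩
      rw [hdisj] at hxa
      exact absurd hxa (Finset.notMem_empty x)
  refine ⟨p.swap, Dset_flip.2 hp, ?_, ?_⟩
  · rcases ht with h | h
    · exact Or.inr h
    · exact Or.inl h
  · rw [dlt_swap ht hpnd, dlt_swap (Nset_touch ctx.hm he) hnd, heq]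

/-! ### KEY2 -/

lemma KEY2aL (ctx : Ctx C a m) {e} (he : e ∈ Nset E C m) (h2 : e.2 ≠ m)
    (hcp : a ∩ m = ∅ → CP E C a m e) :
    upE E (insert a C) m e ∈ RepEdges E (insert m (insert a C)) := by
  refine ⟨up_possL ctx he h2, ?_⟩
  rintro ⟨q, hq, hne, hs1, hs2⟩
  obtain ⟨hq1C, hmq1, hq2a, hsa⟩ := domL ctx he h2 hq hne hs1 hs2
  -- disjointness of a and m
  have hdisj : a ∩ m = ∅ := by
    rcases hq.2.2.2 with hc | hc
    · exfalso
      have hq1a : q.1 = a := hc.trans hq2a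
      exact ctx.ha (hq1a ▸ hq1C)
    · rw [← Finset.subset_empty, ← hc]
      intro x hx
      rw [Finset.mem_inter] at hx ⊢
      exact ⟨hmq1 hx.2, by rw [hq2a]; exact hx.1⟩
  obtain ⟨p, hp, ht, heq⟩ := hcp hdisj
  have hpat := CP_patternL ctx hdisj he h2 hp ht heq
  have hα : IsPiece C m (dlt E C m e).1 :=
    (dlt_shape_L ctx.hC ctx.hCm ctx.hm he h2).2.1.1
  -- (q.1, a) dominates p = (α, a) in insert a C
  apply hp.1.2
  refine ⟨(q.1, a), ⟨Finset.mem_insert_of_mem hq1C, Finset.mem_insert_self a C, ?_, ?_⟩,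
    ?_, ?_, ?_⟩
  · intro u hu v hv
    exact hq.2.2.1 u hu v (by rw [hq2a]; exact hv)
  · rcases hq.2.2.2 with hc | hc
    · exfalso
      have hq1a : q.1 = a := hc.trans hq2a
      exact ctx.ha (hq1a ▸ hq1C)
    · exact Or.inr (by rw [← hq2a]; exact hc)
  · intro hcc
    have hc1 : q.1 = p.1 := by rw [← hcc]
    rw [hpat.1] at hc1
    have hqm : q.1 = m := Finset.Subset.antisymm (by rw [hc1]; exact hα.2.1) hmq1
    exact ctx.hm (hqm ▸ hq1C)
  · rw [hpat.1]
    exact hα.2.1.trans hmq1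
  · rw [hpat.1]

lemma KEY2a (ctx : Ctx C a m) {e} (he : e ∈ Nset E C m) (hcp : CP E C a m e) :
    upE E (insert a C) m e ∈ RepEdges E (insert m (insert a C)) := by
  by_cases h2 : e.2 = m
  · by_cases h1 : e.1 = m
    · exact upD_rep ctx he h1 h2
    · -- type R via flip
      have hsw : e.swap ∈ Nset (flipE E) C m := Nset_flip.2 he
      have hres := KEY2aL (E := flipE E) ctx hsw (show e.swap.2 ≠ m from h1)
        (fun hdisj => CP_swap ctx hdisj he (fun hb => h1 hb.1) hcp)
      rw [upE_swap (Or.inr h2)] at hres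
      exact rep_flip.1 hres
  · exact KEY2aL ctx he h2 (fun _ => hcp)

/-! ### canonical fiber representative -/

open Classical in
noncomputable def ch (E : Set (V × V)) (C : Finset (Finset V)) (a m : Finset V)
    (g : Finset V × Finset V) : Finset V × Finset V :=
  if h : ∃ e ∈ Nset E C m, upE E (insert a C) m e = g ∧ CP E C a m e then h.choose
  else if h2 : ∃ e ∈ Nset E C m, upE E (insert a C) m e = g then h2.choose else g

lemma ch_spec {g} (hg : ∃ e ∈ Nset E C m, upE E (insert a C) m e = g) :
    ch E C a m g ∈ Nset E C m ∧ upE E (insert a C) m (ch E C a m g) = g := by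
  rw [ch]
  by_cases hh1 : ∃ e ∈ Nset E C m, upE E (insert a C) m e = g ∧ CP E C a m e
  · rw [dif_pos hh1]
    exact ⟨hh1.choose_spec.1, hh1.choose_spec.2.1⟩
  · rw [dif_neg hh1, dif_pos hg]
    exact ⟨hg.choose_spec.1, hg.choose_spec.2⟩

lemma CP_unique (ctx : Ctx C a m) {e' e} (he' : e' ∈ Nset E C m) (he : e ∈ Nset E C m)
    (hu : upE E (insert a C) m e' = upE E (insert a C) m e)
    (hcp' : CP E C a m e') (hcp : CP E C a m e) : e' = e := by
  by_cases hee : e' = e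
  · exact hee
  by_cases h2 : e.2 = m
  · by_cases h1 : e.1 = m
    · exact fiberD ctx he' h1 h2 hu
    · -- type R : flip
      have hsw : e.swap ∈ Nset (flipE E) C m := Nset_flip.2 he
      have hsw' : e'.swap ∈ Nset (flipE E) C m := Nset_flip.2 he'
      have hu' : upE (flipE E) (insert a C) m e'.swap =
          upE (flipE E) (insert a C) m e.swap := by
        rw [upE_swap (Nset_touch ctx.hm he'), upE_swap (Or.inr h2), hu]
      have hnee : e'.swap ≠ e.swap := by
        intro hc
        apply hee
        have hc2 := congrArg Prod.swap hc
        rwa [Prod.swap_swap, Prod.swap_swap] at hc2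
      obtain ⟨hfa, h2'f, hdisj⟩ :=
        fiberL (E := flipE E) ctx hsw hsw' hnee hu' (show e.swap.2 ≠ m from h1)
      have hres := CP_uniqueL (E := flipE E) ctx hsw' hsw h2'f
        (show e.swap.2 ≠ m from h1) hdisj
        (CP_swap ctx hdisj he' (fun hb => h2'f hb.1) hcp')
        (CP_swap ctx hdisj he (fun hb => h1 hb.1) hcp)
      have hc2 := congrArg Prod.swap hres
      rwa [Prod.swap_swap, Prod.swap_swap] at hc2
  · -- type L
    obtain ⟨hfa, h2', hdisj⟩ := fiberL ctx he he' hee hu h2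
    exact CP_uniqueL ctx he' he h2' h2 hdisj hcp' hcp

lemma ch_eq (ctx : Ctx C a m) {e} (he : e ∈ Nset E C m) (hcp : CP E C a m e) :
    ch E C a m (upE E (insert a C) m e) = e := by
  rw [ch]
  have hex : ∃ e' ∈ Nset E C m, upE E (insert a C) m e' = upE E (insert a C) m e ∧
      CP E C a m e' := ⟨e, he, rfl, hcp⟩
  rw [dif_pos hex]
  exact CP_unique ctx hex.choose_spec.1 he hex.choose_spec.2.1 hex.choose_spec.2.2 hcp

end S10

namespace S10
variable {V : Type*} [Fintype V] [DecidableEq V]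
variable {E : Set (V × V)} {C : Finset (Finset V)} {a m : Finset V}

lemma dlt_le {E : Set (V × V)} {X : Finset (Finset V)} {w : Finset V}
    (hX : IsConfig X) (hins : IsConfig (insert w X)) (hw : w ∉ X)
    {e} (he : e ∈ Nset E X w) :
    (dlt E X w e).1 ⊆ e.1 ∧ (dlt E X w e).2 ⊆ e.2 := by
  have h := dlt_shape hX hins hw he
  rcases h.2 with ⟨b1, b2, b3, b4, -⟩ | ⟨b1, b2, b3, b4, -⟩ | ⟨b1, b3, b4⟩
  · exact ⟨by rw [b1]; exact b3, by rw [b4]⟩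
  · exact ⟨by rw [b4], by rw [b1]; exact b3⟩
  · rw [b1] at b3 b4 ⊢
    exact ⟨b3, b4⟩

/-- transfer a killer of `p` over `insert m (insert a C)` to a killer over `insert m C`
for any smaller edge with components in `C`. -/
lemma kill_transfer (ctx : Ctx C a m) {p} (hp : p ∈ Dset E (insert a C) m) {r}
    (hr1 : r.1 ⊆ p.1) (hr2 : r.2 ⊆ p.2) (hrc1 : r.1 ∈ C) (hrc2 : r.2 ∈ C) :
    Dominated E (insert m C) r := by
  obtain ⟨g, hgposs, hgne, hgs1, hgs2, hgt⟩ := Dset_killer hp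
  have hr1m : r.1 ≠ m := fun h => ctx.hm (h ▸ hrc1)
  have hr2m : r.2 ≠ m := fun h => ctx.hm (h ▸ hrc2)
  rcases hgt with hg1 | hg2
  · by_cases hg2m : g.2 = m
    · refine ⟨(m, m), ⟨Finset.mem_insert_self m C, Finset.mem_insert_self m C,
        fun u hu v hv => hgposs.2.2.1 u (by rw [hg1]; exact hu) v (by rw [hg2m]; exact hv),
        Or.inl rfl⟩, ?_, hr1.trans (hgs1.trans (by rw [hg1])), hr2.trans (hgs2.trans (by rw [hg2m]))⟩
      intro hcc
      exact hr1m (by rw [← hcc])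
    · refine ⟨(m, r.2), ⟨Finset.mem_insert_self m C, Finset.mem_insert_of_mem hrc2,
        fun u hu v hv => hgposs.2.2.1 u (by rw [hg1]; exact hu) v (hgs2 (hr2 hv)),
        Or.inr ?_⟩, ?_, hr1.trans (hgs1.trans (by rw [hg1])), Finset.Subset.refl _⟩
      · rcases hgposs.2.2.2 with hc | hc
        · exact absurd (hc.symm.trans hg1) hg2m
        · rw [← Finset.subset_empty, ← hc, ← hg1]
          exact Finset.inter_subset_inter (Finset.Subset.refl _) (hr2.trans hgs2)
      · intro hcc
        exact hr1m (by rw [← hcc])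
  · by_cases hg1m : g.1 = m
    · refine ⟨(m, m), ⟨Finset.mem_insert_self m C, Finset.mem_insert_self m C,
        fun u hu v hv => hgposs.2.2.1 u (by rw [hg1m]; exact hu) v (by rw [hg2]; exact hv),
        Or.inl rfl⟩, ?_, hr1.trans (hgs1.trans (by rw [hg1m])), hr2.trans (hgs2.trans (by rw [hg2]))⟩
      intro hcc
      exact hr1m (by rw [← hcc])
    · refine ⟨(r.1, m), ⟨Finset.mem_insert_of_mem hrc1, Finset.mem_insert_self m C,
        fun u hu v hv => hgposs.2.2.1 u (hgs1 (hr1 hu)) v (by rw [hg2]; exact hv),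
        Or.inr ?_⟩, ?_, Finset.Subset.refl _, hr2.trans (hgs2.trans (by rw [hg2]))⟩
      · rcases hgposs.2.2.2 with hc | hc
        · exact absurd (hc.trans hg2) hg1m
        · rw [← Finset.subset_empty, ← hc]
          refine Finset.inter_subset_inter (hr1.trans hgs1) (by rw [hg2])
      · intro hcc
        exact hr2m (by rw [← hcc])

open Classical in
noncomputable def pi1 (E : Set (V × V)) (C : Finset (Finset V)) (a : Finset V)
    (p : Finset V × Finset V) : Finset V × Finset V :=
  if p.1 = a ∨ p.2 = a then dlt E C a p else p

lemma pi1_mem (ctx : Ctx C a m) {p} (hp : p ∈ Dset E (insert a C) m) :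
    pi1 E C a p ∈ Dset E C m := by
  rw [pi1]
  split_ifs with ht
  · have hpN := DtoNa ctx hp ht
    have hsh := dlt_shape ctx.hC ctx.hCa ctx.ha hpN
    have hle := dlt_le ctx.hC ctx.hCa ctx.ha hpN
    have hrep : dlt E C a p ∈ RepEdges E C := hsh.1.1
    refine ⟨hrep, ?_⟩
    intro hc
    exact hc.2 (kill_transfer ctx hp hle.1 hle.2 hrep.1.1 hrep.1.2.1)
  · push_neg at ht
    have hc1 : p.1 ∈ C := by
      rcases Finset.mem_insert.1 hp.1.1.1 with h | h
      · exact absurd h ht.1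
      · exact h
    have hc2 : p.2 ∈ C := by
      rcases Finset.mem_insert.1 hp.1.1.2.1 with h | h
      · exact absurd h ht.2
      · exact h
    have hrep : p ∈ RepEdges E C := rep_of_rep_insert hp.1 ⟨hc1, hc2, hp.1.1.2.2⟩
    refine ⟨hrep, ?_⟩
    intro hc
    exact hc.2 (kill_transfer ctx hp (Finset.Subset.refl _) (Finset.Subset.refl _) hc1 hc2)

lemma dlt_not_repY (ctx : Ctx C a m) {p} (hpN : p ∈ Nset E C a) :
    dlt E C a p ∉ RepEdges E (insert a C) := by
  have hle := dlt_le ctx.hC ctx.hCa ctx.ha hpN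
  have hrep : dlt E C a p ∈ RepEdges E C := (dlt_shape ctx.hC ctx.hCa ctx.ha hpN).1.1
  apply not_rep_of_dom hpN.1.1 ?_ hle.1 hle.2
  intro hcc
  have h5 : p.1 = (dlt E C a p).1 := by rw [← hcc]
  have h6 : p.2 = (dlt E C a p).2 := by rw [← hcc]
  rcases Nset_touch ctx.ha hpN with h | h
  · apply ctx.ha
    rw [← h, h5]
    exact hrep.1.1
  · apply ctx.ha
    rw [← h, h6]
    exact hrep.1.2.1

lemma pi1_inj (ctx : Ctx C a m) {p p'} (hp : p ∈ Dset E (insert a C) m)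
    (hp' : p' ∈ Dset E (insert a C) m) (heq : pi1 E C a p = pi1 E C a p') : p = p' := by
  by_cases ht : p.1 = a ∨ p.2 = a <;> by_cases ht' : p'.1 = a ∨ p'.2 = a
  · rw [pi1, pi1, if_pos ht, if_pos ht'] at heq
    exact dlt_inj ctx.hC ctx.hCa ctx.ha (DtoNa ctx hp ht) (DtoNa ctx hp' ht') heq
  · rw [pi1, pi1, if_pos ht, if_neg ht'] at heq
    exfalso
    apply dlt_not_repY ctx (DtoNa ctx hp ht)
    rw [heq]
    exact hp'.1
  · rw [pi1, pi1, if_neg ht, if_pos ht'] at heq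
    exfalso
    apply dlt_not_repY ctx (DtoNa ctx hp' ht')
    rw [← heq]
    exact hp.1
  · rw [pi1, pi1, if_neg ht, if_neg ht'] at heq
    exact heq

/-! ### the routing map on new edges -/

open Classical in
noncomputable def rt (E : Set (V × V)) (C : Finset (Finset V)) (a m : Finset V)
    (e : Finset V × Finset V) : (Finset V × Finset V) ⊕ (Finset V × Finset V) :=
  if upE E (insert a C) m e ∈ RepEdges E (insert m (insert a C)) ∧
      e = ch E C a m (upE E (insert a C) m e)
  then Sum.inr (upE E (insert a C) m e) else Sum.inl (dlt E C m e)

/-- a δ-routed element satisfies the hypothesis of `KEY1`. -/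
lemma route_hyp (ctx : Ctx C a m) {e} (he : e ∈ Nset E C m)
    (hnot : ¬(upE E (insert a C) m e ∈ RepEdges E (insert m (insert a C)) ∧
      e = ch E C a m (upE E (insert a C) m e))) :
    upE E (insert a C) m e ∉ RepEdges E (insert m (insert a C)) ∨
      ∃ e' ∈ Nset E C m, e' ≠ e ∧ upE E (insert a C) m e' = upE E (insert a C) m e := by
  by_cases hrep : upE E (insert a C) m e ∈ RepEdges E (insert m (insert a C))
  · right
    have hch := ch_spec (E := E) (C := C) (a := a) (m := m) ⟨e, he, rfl⟩
    refine ⟨ch E C a m (upE E (insert a C) m e), hch.1, ?_, hch.2⟩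
    intro hc
    exact hnot ⟨hrep, hc.symm⟩
  · exact Or.inl hrep

lemma rt_mem (ctx : Ctx C a m) {e} (he : e ∈ Nset E C m) :
    (∃ g ∈ Nset E (insert a C) m, rt E C a m e = Sum.inr g) ∨
      (∃ d ∈ Dset E C m, rt E C a m e = Sum.inl d) := by
  rw [rt]
  split_ifs with hcond
  · left
    refine ⟨upE E (insert a C) m e, ⟨hcond.1, ?_⟩, rfl⟩
    intro hc
    rcases up_touch (Nset_touch ctx.hm he) (E := E) (Y := insert a C) with h | h
    · exact ctx.hmY (h ▸ hc.1.1)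
    · exact ctx.hmY (h ▸ hc.1.2.1)
  · right
    exact ⟨dlt E C m e, (dlt_shape ctx.hC ctx.hCm ctx.hm he).1, rfl⟩

/-! ### the master injection -/

open Classical in
noncomputable def Phi (E : Set (V × V)) (C : Finset (Finset V)) (a m : Finset V) :
    (Finset V × Finset V) ⊕ (Finset V × Finset V) →
      (Finset V × Finset V) ⊕ (Finset V × Finset V)
  | Sum.inl p => Sum.inl (pi1 E C a p)
  | Sum.inr e => rt E C a m e

lemma step_ncard (ctx : Ctx C a m) :
    (Dset E (insert a C) m).ncard + (Nset E C m).ncard ≤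
      (Dset E C m).ncard + (Nset E (insert a C) m).ncard := by
  classical
  set SA : Set ((Finset V × Finset V) ⊕ (Finset V × Finset V)) :=
    Sum.inl '' Dset E (insert a C) m ∪ Sum.inr '' Nset E C m with hSA
  set SB : Set ((Finset V × Finset V) ⊕ (Finset V × Finset V)) :=
    Sum.inl '' Dset E C m ∪ Sum.inr '' Nset E (insert a C) m with hSB
  have hmaps : ∀ x ∈ SA, Phi E C a m x ∈ SB := by
    rintro x (⟨p, hp, rfl⟩ | ⟨e, he, rfl⟩)
    · exact Or.inl ⟨pi1 E C a p, pi1_mem ctx hp, rfl⟩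
    · show rt E C a m e ∈ SB
      rcases rt_mem ctx he with ⟨g, hg, hr⟩ | ⟨d, hd, hr⟩
      · rw [hr]
        exact Or.inr ⟨g, hg, rfl⟩
      · rw [hr]
        exact Or.inl ⟨d, hd, rfl⟩
  have hinj : Set.InjOn (Phi E C a m) SA := by
    rintro x (⟨p, hp, rfl⟩ | ⟨e, he, rfl⟩) y (⟨p', hp', rfl⟩ | ⟨e', he', rfl⟩) heq
    · -- inl inl
      have h2 : pi1 E C a p = pi1 E C a p' := Sum.inl.inj heq
      rw [pi1_inj ctx hp hp' h2]
    · -- inl p, inr e'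
      exfalso
      show False
      have heq2 : Sum.inl (pi1 E C a p) = rt E C a m e' := heq
      by_cases hcond : upE E (insert a C) m e' ∈ RepEdges E (insert m (insert a C)) ∧
          e' = ch E C a m (upE E (insert a C) m e')
      · rw [rt, if_pos hcond] at heq2
        simp at heq2
      · rw [rt, if_neg hcond] at heq2
        have hpp : pi1 E C a p = dlt E C m e' := Sum.inl.inj heq2
        by_cases ht : p.1 = a ∨ p.2 = a
        · -- CP e' holds , so e' should have been routed to inr
          rw [pi1, if_pos ht] at hpp
          have hcp : CP E C a m e' := ⟨p, hp, ht, hpp⟩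
          exact hcond ⟨KEY2a ctx he' hcp, (ch_eq ctx he' hcp).symm⟩
        · rw [pi1, if_neg ht] at hpp
          apply KEY1 ctx he' (route_hyp ctx he' hcond)
          rw [← hpp]
          exact hp.1
    · -- inr e, inl p'
      exfalso
      have heq2 : rt E C a m e = Sum.inl (pi1 E C a p') := heq
      by_cases hcond : upE E (insert a C) m e ∈ RepEdges E (insert m (insert a C)) ∧
          e = ch E C a m (upE E (insert a C) m e)
      · rw [rt, if_pos hcond] at heq2
        simp at heq2
      · rw [rt, if_neg hcond] at heq2
        have hpp : pi1 E C a p' = dlt E C m e := (Sum.inl.inj heq2).symm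
        by_cases ht : p'.1 = a ∨ p'.2 = a
        · rw [pi1, if_pos ht] at hpp
          have hcp : CP E C a m e := ⟨p', hp', ht, hpp⟩
          exact hcond ⟨KEY2a ctx he hcp, (ch_eq ctx he hcp).symm⟩
        · rw [pi1, if_neg ht] at hpp
          apply KEY1 ctx he (route_hyp ctx he hcond)
          rw [← hpp]
          exact hp'.1
    · -- inr inr
      have heq2 : rt E C a m e = rt E C a m e' := heq
      by_cases hcond : upE E (insert a C) m e ∈ RepEdges E (insert m (insert a C)) ∧
          e = ch E C a m (upE E (insert a C) m e) <;>
        by_cases hcond' : upE E (insert a C) m e' ∈ RepEdges E (insert m (insert a C)) ∧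
          e' = ch E C a m (upE E (insert a C) m e')
      · rw [rt, rt, if_pos hcond, if_pos hcond'] at heq2
        have hueq : upE E (insert a C) m e = upE E (insert a C) m e' :=
          Sum.inr.inj heq2
        rw [hcond.2, hcond'.2, hueq]
      · rw [rt, rt, if_pos hcond, if_neg hcond'] at heq2
        simp at heq2
      · rw [rt, rt, if_neg hcond, if_pos hcond'] at heq2
        simp at heq2
      · rw [rt, rt, if_neg hcond, if_neg hcond'] at heq2
        have hdd : dlt E C m e = dlt E C m e' := Sum.inl.inj heq2
        rw [dlt_inj ctx.hC ctx.hCm ctx.hm he he' hdd]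
  have hcard : SA.ncard ≤ SB.ncard :=
    Set.ncard_le_ncard_of_injOn _ hmaps hinj (Set.toFinite _)
  have hdisj : ∀ (A B : Set (Finset V × Finset V)),
      ((Sum.inl '' A ∪ Sum.inr '' B : Set ((Finset V × Finset V) ⊕ (Finset V × Finset V)))).ncard
        = A.ncard + B.ncard := by
    intro A B
    rw [Set.ncard_union_eq ?_ (Set.toFinite _) (Set.toFinite _),
      Set.ncard_image_of_injective _ Sum.inl_injective,
      Set.ncard_image_of_injective _ Sum.inr_injective]
    rw [Set.disjoint_left]
    rintro x ⟨u, hu, rfl⟩ ⟨v, hv, hvv⟩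
    cases hvv
  rw [hSA, hSB, hdisj, hdisj] at hcard
  exact hcard

lemma step (ctx : Ctx C a m) :
    ((RepEdges E C).ncard : ℤ) - (RepEdges E (insert m C)).ncard ≥
      ((RepEdges E (insert a C)).ncard : ℤ) -
        (RepEdges E (insert m (insert a C))).ncard := by
  have h1 := ncard_sub_eq (RepEdges E C) (RepEdges E (insert m C))
  have h2 := ncard_sub_eq (RepEdges E (insert a C))
    (RepEdges E (insert m (insert a C)))
  have h3 := step_ncard (E := E) ctx
  unfold Nset Dset at h3
  omega

end S10

namespace S10
variable {V : Type*} [Fintype V] [DecidableEq V]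

lemma main_ind (E : Set (V × V)) :
    ∀ (k : ℕ) (C C' : Finset (Finset V)), (C' \ C).card = k →
      IsConfig C → IsConfig C' → C ⊆ C' → ∀ m : Finset V, m ∉ C' →
      IsConfig (insert m C') →
      ((RepEdges E C).ncard : ℤ) - (RepEdges E (insert m C)).ncard ≥
        ((RepEdges E C').ncard : ℤ) - (RepEdges E (insert m C')).ncard := by
  intro k
  induction k with
  | zero =>
    intro C C' hcard hC hC' hsub m hm hins
    have hsub2 : C' ⊆ C := by
      intro x hx
      by_contra hx2
      have hmem : x ∈ C' \ C := Finset.mem_sdiff.2 ⟨hx, hx2⟩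
      rw [Finset.card_eq_zero] at hcard
      rw [hcard] at hmem
      exact absurd hmem (Finset.notMem_empty x)
    rw [Finset.Subset.antisymm hsub hsub2]
  | succ n ih =>
    intro C C' hcard hC hC' hsub m hm hins
    have hne : (C' \ C).Nonempty := by
      rw [← Finset.card_pos, hcard]
      omega
    obtain ⟨b, hb0⟩ := hne
    have hb := Finset.mem_sdiff.1 hb0
    have hsub1 : insert b C ⊆ C' := Finset.insert_subset hb.1 hsub
    have hC1c : IsConfig (insert b C) :=
      config_subset hC' hsub1 (fun v => Finset.mem_insert_of_mem (hC.2.1 v))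
    have hcard1 : (C' \ insert b C).card = n := by
      rw [Finset.sdiff_insert, Finset.card_erase_of_mem hb0, hcard]
      omega
    have hmC : m ∉ C := fun h => hm (hsub h)
    have hbm : b ≠ m := fun h => hm (h ▸ hb.1)
    have hCam : IsConfig (insert m (insert b C)) :=
      config_subset hins (Finset.insert_subset_insert m hsub1)
        (fun v => Finset.mem_insert_of_mem (Finset.mem_insert_of_mem (hC.2.1 v)))
    have hrel0 := hins.2.2 b (Finset.mem_insert_of_mem (hsub1 (Finset.mem_insert_self b C)))
      m (Finset.mem_insert_self m C')
    have hstep : ((RepEdges E C).ncard : ℤ) - (RepEdges E (insert m C)).ncard ≥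
        ((RepEdges E (insert b C)).ncard : ℤ) -
          (RepEdges E (insert m (insert b C))).ncard := by
      rcases hrel0 with hbsm | hmsb | hdisj
      · exact step ⟨hC, hCam, hb.2, hmC, hbm, Or.inr hbsm⟩
      · -- m ⊆ b : apply the step with the roles of b and m swapped
        have hCam' : IsConfig (insert b (insert m C)) := by
          rw [Finset.insert_comm]
          exact hCam
        have hs := step (E := E) ⟨hC, hCam', hmC, hb.2, hbm.symm, Or.inr hmsb⟩
        rw [Finset.insert_comm] at hs
        omega
      · exact step ⟨hC, hCam, hb.2, hmC, hbm, Or.inl hdisj⟩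
    have hih := ih (insert b C) C' hcard1 hC1c hC' hsub1 m hm hins
    omega

theorem main_thm {V : Type*} [Fintype V] [DecidableEq V] (E : Set (V × V))
    (C C' : Finset (Finset V)) (hC : IsConfig C) (hC' : IsConfig C') (hCC' : C ⊆ C')
    (m : Finset V) (hm : m.Nonempty)
    (h1 : IsConfig (insert m C)) (h2 : IsConfig (insert m C')) :
    ((RepEdges E C).ncard : ℤ) - (RepEdges E (insert m C)).ncard ≥
      ((RepEdges E C').ncard : ℤ) - (RepEdges E (insert m C')).ncard := by
  by_cases hmC : m ∈ C
  · rw [Finset.insert_eq_self.2 hmC, Finset.insert_eq_self.2 (hCC' hmC)]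
    omega
  · by_cases hmC' : m ∈ C'
    · have he2 : insert m C' = C' := Finset.insert_eq_self.2 hmC'
      rw [he2]
      have hm2 : ∀ v : V, m ≠ {v} := fun v hv => hmC (hv ▸ hC.2.1 v)
      have hDc : IsConfig (C'.erase m) := by
        refine ⟨fun x hx => hC'.1 x (Finset.erase_subset _ _ hx), fun v => ?_,
          fun x hx y hy => hC'.2.2 x (Finset.erase_subset _ _ hx) y
            (Finset.erase_subset _ _ hy)⟩
        rw [Finset.mem_erase]
        exact ⟨fun h => hm2 v h.symm, hC'.2.1 v⟩
      have hCD : C ⊆ C'.erase m := fun x hx =>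
        Finset.mem_erase.2 ⟨fun h => hmC (h ▸ hx), hCC' hx⟩
      have hmD : m ∉ C'.erase m := Finset.notMem_erase m C'
      have hDm : insert m (C'.erase m) = C' := Finset.insert_erase hmC'
      have hins2 : IsConfig (insert m (C'.erase m)) := by
        rw [hDm]
        exact hC'
      have hmain := main_ind E ((C'.erase m) \ C).card C (C'.erase m) rfl hC hDc hCD m
        hmD (by rw [hDm]; exact hC')
      have hmono := mono_ncard (E := E) hDc hins2 hmD
      rw [hDm] at hmain hmono
      omega
    · exact main_ind E ((C' \ C)).card C C' rfl hC hC' hCC' m hmC' h2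

end S10


/-- Diminishing returns for module addition: let `C ⊆ C′` be
configurations over `(V, E)` and let `m ⊆ V` be a nonempty set such that both
`C ∪ {m}` and `C′ ∪ {m}` are configurations.  Then
`|R(C)| − |R(C ∪ {m})| ≥ |R(C′)| − |R(C′ ∪ {m})|`: if adding `m` to `C` removes
`e` representative edges, adding `m` to the larger configuration `C′` removes
at most `e` representative edges. -/
theorem statement10 {V : Type*} [Fintype V] [DecidableEq V] (E : Set (V × V))
    (C C' : Finset (Finset V)) (hC : IsConfig C) (hC' : IsConfig C') (hCC' : C ⊆ C')
    (m : Finset V) (hm : m.Nonempty)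
    (h1 : IsConfig (insert m C)) (h2 : IsConfig (insert m C')) :
    ((RepEdges E C).ncard : ℤ) - (RepEdges E (insert m C)).ncard ≥
      ((RepEdges E C').ncard : ℤ) - (RepEdges E (insert m C')).ncard := by
  exact S10.main_thm E C C' hC hC' hCC' m hm h1 h2
end

section
/- The module consisting of all vertices is never improving: suppose E contains no self-loops, i.e. (v, v) ∉ E for every v ∈ V, and |V| ≥ 2. Then for every configuration M over (V, E) with V ∉ M, one has R(M ∪ {V}) = R(M); in particular adding the module V does not reduce the number of representative edges. -/
/-- The module consisting of all vertices is never improving: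
suppose `E` contains no self-loops and `|V| ≥ 2`.  Then for every configuration
`M` over `(V, E)` with `V ∉ M`, one has `R(M ∪ {V}) = R(M)`; in particular
adding the module `V` does not reduce the number of representative edges. -/
theorem statement13 {V : Type*} [Fintype V] [DecidableEq V] (E : Set (V × V))
    (hloop : ∀ v : V, (v, v) ∉ E) (hV : 2 ≤ Fintype.card V)
    (M : Finset (Finset V)) (hM : IsConfig M)
    (huniv : (Finset.univ : Finset V) ∉ M) :
    RepEdges E (insert Finset.univ M) = RepEdges E M := by
  have hne : (Finset.univ : Finset V).Nonempty := by
    rw [Finset.univ_nonempty_iff]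
    exact Fintype.card_pos_iff.mp (by omega)
  have key : ∀ p, PossEdge E (insert Finset.univ M) p ↔ PossEdge E M p := by
    intro p
    constructor
    · rintro ⟨h1, h2, hE, hd⟩
      -- neither component can be univ
      have not1 : p.1 ≠ Finset.univ := by
        intro hu
        rcases hd with heq | hdisj
        · obtain ⟨v, _⟩ := hne
          exact hloop v (hE v (hu ▸ Finset.mem_univ v) v ((heq ▸ hu) ▸ Finset.mem_univ v))
        · have h2ne : p.2.Nonempty := by
            rcases Finset.mem_insert.mp h2 with h | h
            · exact h ▸ hne
            · exact hM.1 _ h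
          obtain ⟨v, hv⟩ := h2ne
          have : v ∈ p.1 ∩ p.2 := Finset.mem_inter.mpr ⟨hu ▸ Finset.mem_univ v, hv⟩
          rw [hdisj] at this
          exact absurd this (Finset.notMem_empty v)
      have not2 : p.2 ≠ Finset.univ := by
        intro hu
        rcases hd with heq | hdisj
        · obtain ⟨v, _⟩ := hne
          exact hloop v (hE v ((heq.symm ▸ hu) ▸ Finset.mem_univ v) v (hu ▸ Finset.mem_univ v))
        · have h1ne : p.1.Nonempty := by
            rcases Finset.mem_insert.mp h1 with h | h
            · exact h ▸ hne
            · exact hM.1 _ h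
          obtain ⟨v, hv⟩ := h1ne
          have : v ∈ p.1 ∩ p.2 := Finset.mem_inter.mpr ⟨hv, hu ▸ Finset.mem_univ v⟩
          rw [hdisj] at this
          exact absurd this (Finset.notMem_empty v)
      refine ⟨?_, ?_, hE, hd⟩
      · rcases Finset.mem_insert.mp h1 with h | h
        · exact absurd h not1
        · exact h
      · rcases Finset.mem_insert.mp h2 with h | h
        · exact absurd h not2
        · exact h
    · rintro ⟨h1, h2, hE, hd⟩
      exact ⟨Finset.mem_insert_of_mem h1, Finset.mem_insert_of_mem h2, hE, hd⟩
  have keyD : ∀ p, Dominated E (insert Finset.univ M) p ↔ Dominated E M p := by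
    intro p
    constructor
    · rintro ⟨q, hq, hne', hs1, hs2⟩
      exact ⟨q, (key q).mp hq, hne', hs1, hs2⟩
    · rintro ⟨q, hq, hne', hs1, hs2⟩
      exact ⟨q, (key q).mpr hq, hne', hs1, hs2⟩
  ext p
  simp only [RepEdges, Set.mem_setOf_eq, key p, keyD p]
end

section
/- An optimal configuration has at most n − 2 nontrivial modules: suppose |V| = n ≥ 2 and E contains no self-loops, i.e. (v, v) ∉ E for every v ∈ V. Then every optimal configuration over (V, E) contains at most n − 2 nontrivial modules. -/
lemma laminar_bound {V : Type*} [DecidableEq V] :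
    ∀ (k : ℕ) (L : Finset (Finset V)) (S : Finset V), L.card ≤ k →
      (∀ m ∈ L, m ⊆ S) → (∀ m ∈ L, 2 ≤ m.card) →
      (∀ m ∈ L, ∀ n ∈ L, m ⊆ n ∨ n ⊆ m ∨ m ∩ n = ∅) → S ∉ L →
      L.card ≤ S.card - 2 := by
  intro k
  induction k with
  | zero => intro L S h _ _ _ _; exact le_trans h (Nat.zero_le _)
  | succ k ih =>
    intro L S hk hsub hcard hlam hS
    rcases L.eq_empty_or_nonempty with rfl | hne
    · simp
    obtain ⟨m, hm, hmmin⟩ := L.exists_min_image Finset.card hne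
    have hm2 : 2 ≤ m.card := hcard m hm
    obtain ⟨x, hx⟩ : m.Nonempty := Finset.card_pos.1 (by omega)
    set f : Finset V → Finset V := fun p => if m ⊆ p then (p \ m) ∪ {x} else p with hfdef
    set L' := (L.erase m).image f with hL'
    set S' := (S \ m) ∪ {x} with hS'
    have dich : ∀ p ∈ L.erase m, (m ⊆ p ∧ m ≠ p) ∨ p ∩ m = ∅ := by
      intro p hp
      obtain ⟨hne', hpL⟩ := Finset.mem_erase.1 hp
      rcases hlam m hm p hpL with h | h | h
      · left; exact ⟨h, fun he => hne' he.symm⟩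
      · have h2 := hmmin p hpL
        exact absurd (Finset.eq_of_subset_of_card_le h h2) hne'
      · right; rw [Finset.inter_comm]; exact h
    have hxn : ∀ p : Finset V, p ∩ m = ∅ → x ∉ p := by
      intro p h hxp
      have : x ∈ p ∩ m := Finset.mem_inter.2 ⟨hxp, hx⟩
      simp [h] at this
    have hnsub : ∀ p : Finset V, p ∩ m = ∅ → ¬ m ⊆ p := by
      intro p h hmp; exact hxn p h (hmp hx)
    have key : ∀ p, m ⊆ p → (((p \ m) ∪ {x}) \ {x}) ∪ m = p := by
      intro p hmp
      ext y
      simp only [Finset.mem_union, Finset.mem_sdiff, Finset.mem_singleton]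
      constructor
      · rintro (⟨(⟨hyn, _⟩ | hyx), hney⟩ | hym)
        · exact hyn
        · exact absurd hyx hney
        · exact hmp hym
      · intro hyn
        by_cases hym : y ∈ m
        · exact Or.inr hym
        · refine Or.inl ⟨Or.inl ⟨hyn, hym⟩, ?_⟩
          rintro rfl; exact hym hx
    have hfsub : ∀ p, m ⊆ p → f p = (p \ m) ∪ {x} := by
      intro p hp; simp only [hfdef, if_pos hp]
    have hfdisj : ∀ p : Finset V, p ∩ m = ∅ → f p = p := by
      intro p hp; simp only [hfdef, if_neg (hnsub p hp)]
    have hinj : Set.InjOn f (L.erase m : Finset (Finset V)) := by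
      intro p1 h1 p2 h2 hfe
      rcases dich p1 h1 with ⟨hs1, _⟩ | hd1 <;> rcases dich p2 h2 with ⟨hs2, _⟩ | hd2
      · rw [hfsub p1 hs1, hfsub p2 hs2] at hfe
        rw [← key p1 hs1, ← key p2 hs2, hfe]
      · exfalso
        rw [hfsub p1 hs1, hfdisj p2 hd2] at hfe
        exact hxn p2 hd2 (hfe ▸ Finset.mem_union_right _ (Finset.mem_singleton_self x))
      · exfalso
        rw [hfsub p2 hs2, hfdisj p1 hd1] at hfe
        exact hxn p1 hd1 (hfe ▸ Finset.mem_union_right _ (Finset.mem_singleton_self x))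
      · rwa [hfdisj p1 hd1, hfdisj p2 hd2] at hfe
    have hcardL' : L'.card = L.card - 1 := by
      rw [hL', Finset.card_image_of_injOn hinj, Finset.card_erase_of_mem hm]
    have hmS : m ⊆ S := hsub m hm
    have hmneS : m ≠ S := by rintro rfl; exact hS hm
    have hmltS : m.card < S.card := Finset.card_lt_card ⟨hmS, fun h => hmneS (Finset.Subset.antisymm hmS h)⟩
    have hxS : x ∉ S \ m := by simp [hx]
    have hScard : S'.card = S.card - m.card + 1 := by
      rw [hS', Finset.union_comm, ← Finset.insert_eq, Finset.card_insert_of_notMem hxS,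
        Finset.card_sdiff_of_subset hmS]
    -- apply IH
    have hL'le : L'.card ≤ k := by
      have := Finset.card_pos.2 hne; omega
    have hsub' : ∀ p ∈ L', p ⊆ S' := by
      intro p hp
      obtain ⟨q, hq, rfl⟩ := Finset.mem_image.1 hp
      have hqL := (Finset.mem_erase.1 hq).2
      rcases dich q hq with ⟨hs, _⟩ | hd
      · rw [hfsub q hs]
        exact Finset.union_subset_union (Finset.sdiff_subset_sdiff (hsub q hqL) (le_refl m)) (le_refl _)
      · rw [hfdisj q hd]
        refine le_trans ?_ Finset.subset_union_left
        intro y hy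
        exact Finset.mem_sdiff.2 ⟨hsub q hqL hy, fun hym => (hxn q hd) (by
          exact absurd (Finset.mem_inter.2 ⟨hy, hym⟩) (by simp [hd]))⟩
    have hcard' : ∀ p ∈ L', 2 ≤ p.card := by
      intro p hp
      obtain ⟨q, hq, rfl⟩ := Finset.mem_image.1 hp
      have hqL := (Finset.mem_erase.1 hq).2
      rcases dich q hq with ⟨hs, hne'⟩ | hd
      · rw [hfsub q hs]
        have hxq : x ∉ q \ m := by simp [hx]
        have hlt : m.card < q.card := Finset.card_lt_card ⟨hs, fun h => hne' (Finset.Subset.antisymm hs h)⟩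
        rw [Finset.union_comm, ← Finset.insert_eq, Finset.card_insert_of_notMem hxq,
          Finset.card_sdiff_of_subset hs]
        omega
      · rw [hfdisj q hd]; exact hcard q hqL
    have hlam' : ∀ p ∈ L', ∀ q ∈ L', p ⊆ q ∨ q ⊆ p ∨ p ∩ q = ∅ := by
      intro p hp q hq
      obtain ⟨p0, hp0, rfl⟩ := Finset.mem_image.1 hp
      obtain ⟨q0, hq0, rfl⟩ := Finset.mem_image.1 hq
      have hp0L := (Finset.mem_erase.1 hp0).2
      have hq0L := (Finset.mem_erase.1 hq0).2
      have horig := hlam p0 hp0L q0 hq0L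
      rcases dich p0 hp0 with ⟨hs1, _⟩ | hd1 <;> rcases dich q0 hq0 with ⟨hs2, _⟩ | hd2
      · rw [hfsub p0 hs1, hfsub q0 hs2]
        rcases horig with h | h | h
        · exact Or.inl (Finset.union_subset_union (Finset.sdiff_subset_sdiff h (le_refl m)) (le_refl _))
        · exact Or.inr (Or.inl (Finset.union_subset_union (Finset.sdiff_subset_sdiff h (le_refl m)) (le_refl _)))
        · exfalso; exact absurd (Finset.mem_inter.2 ⟨hs1 hx, hs2 hx⟩) (by simp [h])
      · rw [hfsub p0 hs1, hfdisj q0 hd2]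
        rcases horig with h | h | h
        · exfalso; exact hxn q0 hd2 (h (hs1 hx))
        · refine Or.inr (Or.inl ?_)
          refine le_trans ?_ Finset.subset_union_left
          intro y hy
          exact Finset.mem_sdiff.2 ⟨h hy, fun hym =>
            absurd (Finset.mem_inter.2 ⟨hy, hym⟩) (by simp [hd2])⟩
        · refine Or.inr (Or.inr ?_)
          ext y
          simp only [Finset.mem_inter, Finset.mem_union, Finset.mem_sdiff,
            Finset.mem_singleton, Finset.notMem_empty, iff_false, not_and]
          rintro (⟨hyp, _⟩ | rfl) hyq
          · exact absurd (Finset.mem_inter.2 ⟨hyp, hyq⟩) (by simp [h])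
          · exact hxn q0 hd2 hyq
      · rw [hfdisj p0 hd1, hfsub q0 hs2]
        rcases horig with h | h | h
        · refine Or.inl ?_
          refine le_trans ?_ Finset.subset_union_left
          intro y hy
          exact Finset.mem_sdiff.2 ⟨h hy, fun hym =>
            absurd (Finset.mem_inter.2 ⟨hy, hym⟩) (by simp [hd1])⟩
        · exfalso; exact hxn p0 hd1 (h (hs2 hx))
        · refine Or.inr (Or.inr ?_)
          ext y
          simp only [Finset.mem_inter, Finset.mem_union, Finset.mem_sdiff,
            Finset.mem_singleton, Finset.notMem_empty, iff_false, not_and]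
          intro hyp
          rintro (⟨hyq, _⟩ | rfl)
          · exact absurd (Finset.mem_inter.2 ⟨hyp, hyq⟩) (by simp [h])
          · exact hxn p0 hd1 hyp
      · rw [hfdisj p0 hd1, hfdisj q0 hd2]; exact horig
    have hS'notin : S' ∉ L' := by
      intro hmem
      obtain ⟨q, hq, hfq⟩ := Finset.mem_image.1 hmem
      have hqL := (Finset.mem_erase.1 hq).2
      rcases dich q hq with ⟨hs, _⟩ | hd
      · rw [hfsub q hs] at hfq
        have : q = S := by
          rw [← key q hs, hfq, hS', key S hmS]
        exact hS (this ▸ hqL)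
      · rw [hfdisj q hd] at hfq
        exact hxn q hd (by rw [hfq, hS']; exact Finset.mem_union_right _ (Finset.mem_singleton_self x))
    have hIH := ih L' S' hL'le hsub' hcard' hlam' hS'notin
    have hL1 : 1 ≤ L.card := Finset.card_pos.2 hne
    omega


/-- An optimal configuration has at most `n − 2` nontrivial
modules: suppose `|V| = n ≥ 2` and `E` contains no self-loops.  Then every
optimal configuration over `(V, E)` contains at most `n − 2` nontrivial
modules (members of size at least 2). -/
theorem statement14 {V : Type*} [Fintype V] [DecidableEq V] (E : Set (V × V))
    (n : ℕ) (hn : 2 ≤ n) (hV : Fintype.card V = n)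
    (hloop : ∀ v : V, (v, v) ∉ E)
    (C : Finset (Finset V)) (hC : IsOptimal E C) :
    (C.filter fun m => 2 ≤ m.card).card ≤ n - 2 := by
  obtain ⟨hcfg, _, hprop⟩ := hC
  have huniv : (Finset.univ : Finset V) ∉ C := by
    intro hu
    set D := C.erase Finset.univ with hD
    have hDsub : D ⊆ C := Finset.erase_subset _ _
    have hDne : D ≠ C := by
      intro h
      have h2 : (Finset.univ : Finset V) ∉ D := Finset.notMem_erase _ _
      rw [h] at h2; exact h2 hu
    have hsingle : ∀ v : V, ({v} : Finset V) ∈ D := by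
      intro v
      refine Finset.mem_erase.2 ⟨?_, hcfg.2.1 v⟩
      intro h
      have h1 : ({v} : Finset V).card = 1 := Finset.card_singleton v
      rw [h, Finset.card_univ, hV] at h1; omega
    have hDcfg : IsConfig D := ⟨fun m hm => hcfg.1 m (hDsub hm), hsingle,
      fun m hm p hp => hcfg.2.2 m (hDsub hm) p (hDsub hp)⟩
    have hposs : ∀ p, PossEdge E D p ↔ PossEdge E C p := by
      intro p
      constructor
      · rintro ⟨h1, h2, h3, h4⟩; exact ⟨hDsub h1, hDsub h2, h3, h4⟩
      · rintro ⟨h1, h2, h3, h4⟩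
        have hne1 : (p.1).Nonempty := hcfg.1 _ h1
        have hne2 : (p.2).Nonempty := hcfg.1 _ h2
        have hdisj : p.1 ∩ p.2 = ∅ := by
          rcases h4 with h | h
          · exfalso; obtain ⟨u, hu⟩ := hne1
            exact hloop u (h3 u hu u (h ▸ hu))
          · exact h
        refine ⟨Finset.mem_erase.2 ⟨?_, h1⟩, Finset.mem_erase.2 ⟨?_, h2⟩, h3, Or.inr hdisj⟩
        · intro he; obtain ⟨u, hu⟩ := hne2
          have : u ∈ p.1 ∩ p.2 := Finset.mem_inter.2 ⟨he ▸ Finset.mem_univ u, hu⟩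
          rw [hdisj] at this; exact absurd this (Finset.notMem_empty u)
        · intro he; obtain ⟨u, hu⟩ := hne1
          have : u ∈ p.1 ∩ p.2 := Finset.mem_inter.2 ⟨hu, he ▸ Finset.mem_univ u⟩
          rw [hdisj] at this; exact absurd this (Finset.notMem_empty u)
    have hdom : ∀ p, Dominated E D p ↔ Dominated E C p := by
      intro p
      constructor
      · rintro ⟨q, hq, hq2, hq3⟩; exact ⟨q, (hposs q).1 hq, hq2, hq3⟩
      · rintro ⟨q, hq, hq2, hq3⟩; exact ⟨q, (hposs q).2 hq, hq2, hq3⟩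
    have hrep : RepEdges E D = RepEdges E C := by
      ext p
      simp only [RepEdges, Set.mem_setOf_eq, hposs, hdom]
    exact hprop D hDsub hDne hDcfg (by rw [hrep])
  have hbound := laminar_bound (C.filter fun m => 2 ≤ m.card).card
      (C.filter fun m => 2 ≤ m.card) Finset.univ le_rfl
      (fun m _ => Finset.subset_univ m)
      (fun m hm => (Finset.mem_filter.1 hm).2)
      (fun m hm p hp => hcfg.2.2 m (Finset.mem_filter.1 hm).1 p (Finset.mem_filter.1 hp).1)
      (fun h => huniv (Finset.mem_filter.1 h).1)
  rwa [Finset.card_univ, hV] at hbound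
end

section
/- An improving module has a common predecessor or a common successor: let M be a configuration over (V, E) and m ⊆ V a set with |m| ≥ 2 such that M ∪ {m} is a configuration and |R(M ∪ {m})| < |R(M)|. Then there exists a vertex v ∈ V with (v, u) ∈ E for every u ∈ m, or there exists a vertex v ∈ V with (u, v) ∈ E for every u ∈ m. -/
/-- An improving module has a common predecessor or a common
successor: let `M` be a configuration over `(V, E)` and `m ⊆ V` a set with
`|m| ≥ 2` such that `M ∪ {m}` is a configuration and `|R(M ∪ {m})| < |R(M)|`.
Then there exists a vertex `v ∈ V` with `(v, u) ∈ E` for every `u ∈ m`, or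
there exists a vertex `v ∈ V` with `(u, v) ∈ E` for every `u ∈ m`. -/
theorem statement16 {V : Type*} [Fintype V] [DecidableEq V] (E : Set (V × V))
    (M : Finset (Finset V)) (hM : IsConfig M)
    (m : Finset V) (hm : 2 ≤ m.card) (hM' : IsConfig (insert m M))
    (himp : (RepEdges E (insert m M)).ncard < (RepEdges E M).ncard) :
    (∃ v : V, ∀ u ∈ m, (v, u) ∈ E) ∨ (∃ v : V, ∀ u ∈ m, (u, v) ∈ E) := by
  by_contra hcon
  push_neg at hcon
  obtain ⟨h1, h2⟩ := hcon
  have hposs : ∀ p, PossEdge E (insert m M) p ↔ PossEdge E M p := by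
    intro p
    constructor
    · rintro ⟨hp1, hp2, hE, hd⟩
      have hm1 : p.1 ≠ m := by
        rintro rfl
        obtain ⟨v, hv⟩ := hM'.1 _ hp2
        obtain ⟨u, hu, hnu⟩ := h2 v
        exact hnu (hE u hu v hv)
      have hm2 : p.2 ≠ m := by
        rintro rfl
        obtain ⟨v, hv⟩ := hM'.1 _ hp1
        obtain ⟨u, hu, hnu⟩ := h1 v
        exact hnu (hE v hv u hu)
      exact ⟨(Finset.mem_insert.mp hp1).resolve_left hm1,
        (Finset.mem_insert.mp hp2).resolve_left hm2, hE, hd⟩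
    · rintro ⟨hp1, hp2, hE, hd⟩
      exact ⟨Finset.mem_insert_of_mem hp1, Finset.mem_insert_of_mem hp2, hE, hd⟩
  have hdom : ∀ p, Dominated E (insert m M) p ↔ Dominated E M p := by
    intro p
    unfold Dominated
    constructor
    · rintro ⟨q, hq, hqp⟩; exact ⟨q, (hposs q).mp hq, hqp⟩
    · rintro ⟨q, hq, hqp⟩; exact ⟨q, (hposs q).mpr hq, hqp⟩
  have hrep : RepEdges E (insert m M) = RepEdges E M := by
    ext p
    simp only [RepEdges, Set.mem_setOf_eq, hposs, hdom]
  rw [hrep] at himp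
  exact lt_irrefl _ himp
end

section
/- Every module of an optimal configuration has at least one potential edge to or from it: if C is an optimal configuration over (V, E), then for every nontrivial module m ∈ C there exists a vertex v ∈ V with (v, u) ∈ E for every u ∈ m, or there exists a vertex v ∈ V with (u, v) ∈ E for every u ∈ m. -/
/-- Every module of an optimal configuration has at least one
potential edge to or from it: if `C` is an optimal configuration over `(V, E)`,
then for every nontrivial module `m ∈ C` there exists a vertex `v ∈ V` with
`(v, u) ∈ E` for every `u ∈ m`, or there exists a vertex `v ∈ V` with
`(u, v) ∈ E` for every `u ∈ m`. -/
theorem statement17 {V : Type*} [Fintype V] [DecidableEq V] (E : Set (V × V))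
    (C : Finset (Finset V)) (hC : IsOptimal E C) :
    ∀ m ∈ C, 2 ≤ m.card →
      (∃ v : V, ∀ u ∈ m, (v, u) ∈ E) ∨ (∃ v : V, ∀ u ∈ m, (u, v) ∈ E) := by
  intro m hm hcard
  by_contra hno
  push_neg at hno
  obtain ⟨h1, h2⟩ := hno
  obtain ⟨⟨hne, hsing, hlam⟩, _, hmin⟩ := hC
  set D := C.erase m with hD
  -- no possible edge of C involves m
  have hnotm : ∀ p : Finset V × Finset V, PossEdge E C p → p.1 ≠ m ∧ p.2 ≠ m := by
    intro p hp
    obtain ⟨hp1, hp2, hE, _⟩ := hp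
    constructor
    · intro h
      obtain ⟨v, hv⟩ := hne p.2 hp2
      obtain ⟨u, hu, huv⟩ := h2 v
      exact huv (hE u (h ▸ hu) v hv)
    · intro h
      obtain ⟨v, hv⟩ := hne p.1 hp1
      obtain ⟨u, hu, huv⟩ := h1 v
      exact huv (hE v hv u (h ▸ hu))
  have hposs : ∀ p, PossEdge E D p ↔ PossEdge E C p := by
    intro p
    constructor
    · rintro ⟨hp1, hp2, hE, hd⟩
      exact ⟨Finset.mem_of_mem_erase hp1, Finset.mem_of_mem_erase hp2, hE, hd⟩
    · intro hp
      obtain ⟨hn1, hn2⟩ := hnotm p hp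
      obtain ⟨hp1, hp2, hE, hd⟩ := hp
      exact ⟨Finset.mem_erase.2 ⟨hn1, hp1⟩, Finset.mem_erase.2 ⟨hn2, hp2⟩, hE, hd⟩
  have hdom : ∀ p, Dominated E D p ↔ Dominated E C p := by
    intro p
    constructor <;> rintro ⟨q, hq, hqp, h1', h2'⟩
    · exact ⟨q, (hposs q).1 hq, hqp, h1', h2'⟩
    · exact ⟨q, (hposs q).2 hq, hqp, h1', h2'⟩
  have hrep : RepEdges E D = RepEdges E C := by
    ext p
    simp only [RepEdges, Set.mem_setOf_eq, hposs, hdom]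
  have hDconf : IsConfig D := by
    refine ⟨fun n hn => hne n (Finset.mem_of_mem_erase hn), fun v => ?_, ?_⟩
    · refine Finset.mem_erase.2 ⟨?_, hsing v⟩
      intro h
      rw [← h, Finset.card_singleton] at hcard
      omega
    · intro a ha b hb
      exact hlam a (Finset.mem_of_mem_erase ha) b (Finset.mem_of_mem_erase hb)
  have hDne : D ≠ C := by
    intro h
    have := Finset.notMem_erase m C
    rw [hD] at h
    rw [h] at this
    exact this hm
  exact hmin D (Finset.erase_subset m C) hDne hDconf (by rw [hrep])
end
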